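/- arXiv:math/0505146 — 9 statements merged into one kernel-verified Lean document; each statement's English description precedes it below -/
import Mathlib

section
/- Let s ≥ 0 be an integer, d > 0 a real number, and M_1, …, M_{s+1} positive real numbers; set M_0 = 0. Then (s+1)·d·∏_{i=1}^{s} M_i ≤ ∏_{i=1}^{s+1} max(M_i, M_{i-1} + d). -/
/-- The numerical inequality underlying Theorem 1 (upper bound):
for `s ≥ 0`, `d > 0` and positive reals `M 1, …, M (s+1)` with `M 0 = 0`,
`(s+1) · d · ∏_{i=1}^{s} M i ≤ ∏_{i=1}^{s+1} max (M i) (M (i-1) + d)`. -/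
theorem multiplicity_upper_bound_regular_element (s : ℕ) (d : ℝ) (hd : 0 < d)
    (M : ℕ → ℝ) (hM0 : M 0 = 0) (hMpos : ∀ i, 1 ≤ i → i ≤ s + 1 → 0 < M i) :
    (s + 1 : ℝ) * d * ∏ i ∈ Finset.Icc 1 s, M i ≤
      ∏ i ∈ Finset.Icc 1 (s + 1), max (M i) (M (i - 1) + d) := by
  revert hMpos
  induction s with
  | zero =>
    intro _
    simp [hM0]
  | succ n ih =>
    intro hpos
    have hA : 0 < ∏ i ∈ Finset.Icc 1 n, M i :=
      Finset.prod_pos fun i hi => hpos i (Finset.mem_Icc.mp hi).1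
        ((Finset.mem_Icc.mp hi).2.trans (by omega))
    have hIH := ih (fun i h1 h2 => hpos i h1 (by omega))
    set A := ∏ i ∈ Finset.Icc 1 n, M i with hAdef
    set B := ∏ i ∈ Finset.Icc 1 (n + 1), max (M i) (M (i - 1) + d) with hBdef
    have hm : 0 < M (n + 1) := hpos (n + 1) (by omega) (by omega)
    have hBM : A * M (n + 1) ≤ B := by
      rw [hAdef, hBdef, ← Finset.prod_Icc_succ_top (by omega : 1 ≤ n + 1)]
      exact Finset.prod_le_prod
        (fun i hi => (hpos i (Finset.mem_Icc.mp hi).1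
          ((Finset.mem_Icc.mp hi).2.trans (by omega))).le)
        (fun i hi => le_max_left _ _)
    have hBpos : 0 < B := lt_of_lt_of_le (by positivity) hIH
    rw [Finset.prod_Icc_succ_top (by omega : 1 ≤ n + 1),
        Finset.prod_Icc_succ_top (by omega : 1 ≤ n + 2)]
    push_cast
    rw [← hAdef]
    have hmax : M (n + 1) + d ≤ max (M (n + 2)) (M (n + 2 - 1) + d) := by
      have : n + 2 - 1 = n + 1 := by omega
      rw [this]
      exact le_max_right _ _
    have key : ((n : ℝ) + 1 + 1) * d * (A * M (n + 1)) ≤ B * (M (n + 1) + d) := by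
      nlinarith [hIH, hBM, hm, hA, hd, hBpos]
    calc ((n : ℝ) + 1 + 1) * d * (A * M (n + 1)) ≤ B * (M (n + 1) + d) := key
      _ ≤ B * max (M (n + 2)) (M (n + 2 - 1) + d) :=
          mul_le_mul_of_nonneg_left hmax hBpos.le
end

section
/- Let s ≥ 0 be an integer, d > 0 a real number, and m_1, …, m_{s+1} positive real numbers; set m_0 = 0. Then (s+1)·d·∏_{i=1}^{s} m_i ≥ ∏_{i=1}^{s+1} min(m_i, m_{i-1} + d). -/
/-- The numerical inequality underlying Theorem 1 (lower bound):
for `s ≥ 0`, `d > 0` and positive reals `m 1, …, m (s+1)` with `m 0 = 0`,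
`(s+1) · d · ∏_{i=1}^{s} m i ≥ ∏_{i=1}^{s+1} min (m i) (m (i-1) + d)`. -/
theorem multiplicity_lower_bound_regular_element (s : ℕ) (d : ℝ) (hd : 0 < d)
    (m : ℕ → ℝ) (hm0 : m 0 = 0) (hmpos : ∀ i, 1 ≤ i → i ≤ s + 1 → 0 < m i) :
    (s + 1 : ℝ) * d * ∏ i ∈ Finset.Icc 1 s, m i ≥
      ∏ i ∈ Finset.Icc 1 (s + 1), min (m i) (m (i - 1) + d) := by
  induction s with
  | zero =>
    simp only [Finset.Icc_self, Finset.prod_singleton, Nat.cast_zero, zero_add, one_mul]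
    have : (∏ i ∈ Finset.Icc 1 0, m i) = 1 := by simp
    rw [this, mul_one]
    calc min (m 1) (m 0 + d) ≤ m 0 + d := min_le_right _ _
      _ = d := by rw [hm0, zero_add]
  | succ s ih =>
    have hmpos' : ∀ i, 1 ≤ i → i ≤ s + 1 → 0 < m i := fun i h1 h2 => hmpos i h1 (by omega)
    have hP := ih hmpos'
    have ha_nonneg : ∀ i ∈ Finset.Icc 1 (s + 1), 0 ≤ min (m i) (m (i - 1) + d) := by
      intro i hi
      simp only [Finset.mem_Icc] at hi
      have h1 : 0 < m i := hmpos i hi.1 (by omega)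
      have h2 : 0 ≤ m (i - 1) := by
        rcases Nat.eq_or_lt_of_le hi.1 with h | h
        · rw [← h]; simp [hm0]
        · exact (hmpos (i - 1) (by omega) (by omega)).le
      exact le_min h1.le (by linarith)
    have h2 : (∏ i ∈ Finset.Icc 1 (s + 1), min (m i) (m (i - 1) + d)) ≤
        ∏ i ∈ Finset.Icc 1 (s + 1), m i :=
      Finset.prod_le_prod ha_nonneg (fun i _ => min_le_left _ _)
    have hPnn : 0 ≤ ∏ i ∈ Finset.Icc 1 (s + 1), min (m i) (m (i - 1) + d) :=
      Finset.prod_nonneg ha_nonneg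
    have hsplit : (∏ i ∈ Finset.Icc 1 (s + 1 + 1), min (m i) (m (i - 1) + d)) =
        (∏ i ∈ Finset.Icc 1 (s + 1), min (m i) (m (i - 1) + d)) *
          min (m (s + 2)) (m (s + 1) + d) := by
      rw [Finset.prod_Icc_succ_top (by omega : 1 ≤ s + 1 + 1)]
      norm_num
    have hmsplit : (∏ i ∈ Finset.Icc 1 (s + 1), m i) =
        (∏ i ∈ Finset.Icc 1 s, m i) * m (s + 1) := by
      rw [Finset.prod_Icc_succ_top (by omega : 1 ≤ s + 1)]
    have hms1 : 0 < m (s + 1) := hmpos (s + 1) (by omega) (by omega)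
    have hlast : min (m (s + 2)) (m (s + 1) + d) ≤ m (s + 1) + d := min_le_right _ _
    rw [ge_iff_le, hsplit]
    have step1 : (∏ i ∈ Finset.Icc 1 (s + 1), min (m i) (m (i - 1) + d)) *
        min (m (s + 2)) (m (s + 1) + d) ≤
        (∏ i ∈ Finset.Icc 1 (s + 1), min (m i) (m (i - 1) + d)) * (m (s + 1) + d) :=
      mul_le_mul_of_nonneg_left hlast hPnn
    refine step1.trans ?_
    have t1 : (∏ i ∈ Finset.Icc 1 (s + 1), min (m i) (m (i - 1) + d)) * m (s + 1) ≤
        ((s : ℝ) + 1) * d * (∏ i ∈ Finset.Icc 1 s, m i) * m (s + 1) :=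
      mul_le_mul_of_nonneg_right hP hms1.le
    have t2 : (∏ i ∈ Finset.Icc 1 (s + 1), min (m i) (m (i - 1) + d)) * d ≤
        (∏ i ∈ Finset.Icc 1 (s + 1), m i) * d :=
      mul_le_mul_of_nonneg_right h2 hd.le
    have : (∏ i ∈ Finset.Icc 1 (s + 1), min (m i) (m (i - 1) + d)) * (m (s + 1) + d) ≤
        ((s : ℝ) + 1) * d * (∏ i ∈ Finset.Icc 1 s, m i) * m (s + 1) +
          (∏ i ∈ Finset.Icc 1 (s + 1), m i) * d := by
      rw [mul_add]; exact add_le_add t1 t2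
    refine this.trans ?_
    rw [hmsplit]
    push_cast
    ring_nf
    nlinarith [Finset.prod_nonneg (fun i (hi : i ∈ Finset.Icc 1 s) => (hmpos' i (Finset.mem_Icc.mp hi).1 (le_trans (Finset.mem_Icc.mp hi).2 (Nat.le_succ s))).le)]
end

section
/- Let 0 ≤ j ≤ s be integers, let z_j ≥ 0 be a real number, and let z_{j+1}, …, z_s be real numbers with −i < z_i < 0 for each i = j+1, …, s. Then s + 1 ≤ ((j+1) + z_j) · ∏_{i=j+1}^{s} (1 + 1/(i + z_i)). -/
lemma tele_prod (j : ℕ) : ∀ s : ℕ, j ≤ s →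
    ∏ i ∈ Finset.Icc (j + 1) s, (1 + 1 / (i : ℝ)) = (s + 1) / (j + 1) := by
  intro s
  induction s with
  | zero => intro h; interval_cases j; simp
  | succ n ih =>
    intro h
    rcases Nat.lt_or_ge j (n+1) with h' | h'
    · have hjn : j ≤ n := Nat.lt_succ_iff.mp h'
      rw [Finset.prod_Icc_succ_top (by omega : j + 1 ≤ n + 1), ih hjn]
      have hn : (0:ℝ) < (n:ℝ) + 1 := by positivity
      push_cast
      field_simp
    · have : j = n + 1 := le_antisymm h h'
      subst this
      rw [Finset.Icc_eq_empty (by omega)]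
      rw [Finset.prod_empty]
      rw [eq_comm, div_eq_one_iff_eq (by positivity)]

/-- The key estimate in Case 2 of the proof of Theorem 1:
for integers `0 ≤ j ≤ s`, a real `z j ≥ 0` and reals `z i` with `-i < z i < 0`
for `i = j+1, …, s`, one has
`s + 1 ≤ ((j+1) + z j) · ∏_{i=j+1}^{s} (1 + 1/(i + z i))`. -/
theorem case_two_key_estimate (s j : ℕ) (hjs : j ≤ s) (z : ℕ → ℝ) (hzj : 0 ≤ z j)
    (hz : ∀ i, j + 1 ≤ i → i ≤ s → -(i : ℝ) < z i ∧ z i < 0) :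
    (s + 1 : ℝ) ≤ ((j + 1 : ℝ) + z j) *
      ∏ i ∈ Finset.Icc (j + 1) s, (1 + 1 / ((i : ℝ) + z i)) := by
  have hprod : ∏ i ∈ Finset.Icc (j + 1) s, (1 + 1 / ((i : ℝ))) ≤
      ∏ i ∈ Finset.Icc (j + 1) s, (1 + 1 / ((i : ℝ) + z i)) := by
    apply Finset.prod_le_prod
    · intro i hi
      simp only [Finset.mem_Icc] at hi
      have hi1 : (1:ℝ) ≤ i := by exact_mod_cast Nat.one_le_iff_ne_zero.mpr (by omega)
      positivity
    · intro i hi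
      simp only [Finset.mem_Icc] at hi
      obtain ⟨h1, h2⟩ := hz i hi.1 hi.2
      have hpos : (0:ℝ) < (i:ℝ) + z i := by linarith
      have hipos : (0:ℝ) < (i:ℝ) := by
        have : (1:ℕ) ≤ i := by omega
        exact_mod_cast Nat.lt_of_lt_of_le Nat.zero_lt_one this
      have : 1 / (i:ℝ) ≤ 1 / ((i:ℝ) + z i) :=
        one_div_le_one_div_of_le hpos (by linarith)
      linarith
  rw [tele_prod j s hjs] at hprod
  have hj1 : (0:ℝ) < (j:ℝ) + 1 := by positivity
  have hfac : (j + 1 : ℝ) ≤ (j + 1 : ℝ) + z j := by linarith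
  have hprodpos : 0 ≤ ∏ i ∈ Finset.Icc (j + 1) s, (1 + 1 / ((i : ℝ) + z i)) := by
    apply Finset.prod_nonneg
    intro i hi
    simp only [Finset.mem_Icc] at hi
    obtain ⟨h1, h2⟩ := hz i hi.1 hi.2
    have hpos : (0:ℝ) < (i:ℝ) + z i := by linarith
    positivity
  calc (s + 1 : ℝ) = (j + 1) * ((s + 1) / (j + 1)) := by field_simp
    _ ≤ (j + 1) * ∏ i ∈ Finset.Icc (j + 1) s, (1 + 1 / ((i : ℝ) + z i)) := by
        apply mul_le_mul_of_nonneg_left hprod (by linarith)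
    _ ≤ ((j + 1 : ℝ) + z j) * ∏ i ∈ Finset.Icc (j + 1) s, (1 + 1 / ((i : ℝ) + z i)) :=
        mul_le_mul_of_nonneg_right hfac hprodpos
end

section
/- Let 0 ≤ j ≤ s be integers, let z_j ≤ 0 be a real number, and let z_{j+1}, …, z_s be real numbers with z_i ≥ 0 for each i = j+1, …, s. Then ((j+1) + z_j) · ∏_{i=j+1}^{s} (1 + 1/(i + z_i)) ≤ s + 1. -/
lemma prod_key_estimate (j : ℕ) (z : ℕ → ℝ) :
    ∀ s, j ≤ s → (∀ i, j + 1 ≤ i → i ≤ s → 0 ≤ z i) →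
      ∏ i ∈ Finset.Icc (j + 1) s, (1 + 1 / ((i : ℝ) + z i)) ≤ (s + 1 : ℝ) / (j + 1) := by
  intro s
  induction s with
  | zero =>
    intro hjs _
    interval_cases j
    simp
  | succ n ih =>
    intro hjs hz
    rcases Nat.lt_or_ge j (n + 1) with h | h
    · have hjn : j ≤ n := Nat.lt_succ_iff.mp h
      rw [← Finset.insert_Icc_right_eq_Icc_add_one (by omega : j + 1 ≤ n + 1),
        Finset.prod_insert (by simp)]
      have hz' : ∀ i, j + 1 ≤ i → i ≤ n → 0 ≤ z i := fun i h1 h2 => hz i h1 (by omega)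
      have hih := ih hjn hz'
      have h0 := hz (n + 1) (by omega) le_rfl
      have hn0 : (0:ℝ) ≤ (n:ℝ) := n.cast_nonneg
      have hpos : (0:ℝ) < ((n + 1 : ℕ) : ℝ) + z (n + 1) := by push_cast; linarith
      have h1 : (1 : ℝ) + 1 / (((n + 1 : ℕ) : ℝ) + z (n + 1)) ≤ 1 + 1 / (n + 1 : ℝ) := by
        have := one_div_le_one_div_of_le (by linarith : (0:ℝ) < (n:ℝ) + 1)
          (by push_cast; linarith : (n:ℝ) + 1 ≤ ((n + 1 : ℕ) : ℝ) + z (n + 1))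
        linarith
      have hprodpos : (0:ℝ) ≤ ∏ i ∈ Finset.Icc (j + 1) n, (1 + 1 / ((i : ℝ) + z i)) := by
        apply Finset.prod_nonneg
        intro i hi
        simp only [Finset.mem_Icc] at hi
        have := hz' i hi.1 hi.2
        have : (0:ℝ) < (i : ℝ) + z i := by
          have hi1 : (1:ℝ) ≤ (i:ℝ) := by exact_mod_cast Nat.one_le_iff_ne_zero.mpr (by omega)
          linarith
        positivity
      have hfacpos : (0:ℝ) ≤ 1 + 1 / (((n + 1 : ℕ) : ℝ) + z (n + 1)) := by
        have := div_nonneg zero_le_one hpos.le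
        linarith
      calc (1 + 1 / (((n + 1 : ℕ) : ℝ) + z (n + 1))) *
              ∏ i ∈ Finset.Icc (j + 1) n, (1 + 1 / ((i : ℝ) + z i))
          ≤ (1 + 1 / (n + 1 : ℝ)) * ((n + 1 : ℝ) / (j + 1)) := by
            apply mul_le_mul h1 hih hprodpos (by positivity)
        _ = ((n : ℝ) + 1 + 1) / (j + 1) := by field_simp
        _ = ((n + 1 : ℕ) + 1 : ℝ) / (j + 1) := by push_cast; ring
    · have : j = n + 1 := le_antisymm hjs h
      subst this
      simp
      rw [div_self (by positivity)]

/-- The dual key estimate used in the lower-bound half of the proof of Theorem 1: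
for integers `0 ≤ j ≤ s`, a real `z j ≤ 0` and reals `z i ≥ 0` for
`i = j+1, …, s`, one has
`((j+1) + z j) · ∏_{i=j+1}^{s} (1 + 1/(i + z i)) ≤ s + 1`. -/
theorem case_two_dual_key_estimate (s j : ℕ) (hjs : j ≤ s) (z : ℕ → ℝ) (hzj : z j ≤ 0)
    (hz : ∀ i, j + 1 ≤ i → i ≤ s → 0 ≤ z i) :
    ((j + 1 : ℝ) + z j) * ∏ i ∈ Finset.Icc (j + 1) s, (1 + 1 / ((i : ℝ) + z i)) ≤
      (s + 1 : ℝ) := by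
  have hprod := prod_key_estimate j z s hjs hz
  have hprodpos : (0:ℝ) ≤ ∏ i ∈ Finset.Icc (j + 1) s, (1 + 1 / ((i : ℝ) + z i)) := by
    apply Finset.prod_nonneg
    intro i hi
    simp only [Finset.mem_Icc] at hi
    have := hz i hi.1 hi.2
    have hi1 : (1:ℝ) ≤ (i:ℝ) := by exact_mod_cast Nat.one_le_iff_ne_zero.mpr (by omega)
    have : (0:ℝ) < (i : ℝ) + z i := by linarith
    positivity
  calc ((j + 1 : ℝ) + z j) * ∏ i ∈ Finset.Icc (j + 1) s, (1 + 1 / ((i : ℝ) + z i))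
      ≤ (j + 1 : ℝ) * ∏ i ∈ Finset.Icc (j + 1) s, (1 + 1 / ((i : ℝ) + z i)) := by
        apply mul_le_mul_of_nonneg_right (by linarith) hprodpos
    _ ≤ (j + 1 : ℝ) * ((s + 1 : ℝ) / (j + 1)) := by
        apply mul_le_mul_of_nonneg_left hprod (by positivity)
    _ = (s + 1 : ℝ) := by field_simp
end

section
/- Let s ≥ 1 be an integer, d > 0 a real number, and M_1, …, M_{s+1} positive real numbers; set M_0 = 0. Then equality (s+1)·d·∏_{i=1}^{s} M_i = ∏_{i=1}^{s+1} max(M_i, M_{i-1} + d) holds if and only if M_i = i·d for all i = 1, …, s and M_{s+1} ≤ (s+1)·d. -/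
open Finset

private lemma key_lemma (d : ℝ) (hd : 0 < d) (M : ℕ → ℝ) (hM0 : M 0 = 0) :
    ∀ n, 1 ≤ n → (∀ i, 1 ≤ i → i ≤ n → 0 < M i) →
      (max ((n : ℝ) * d) (M n) * ∏ i ∈ Icc 1 (n - 1), M i ≤
          ∏ i ∈ Icc 1 n, max (M i) (M (i - 1) + d)) ∧
        ((∏ i ∈ Icc 1 n, max (M i) (M (i - 1) + d) =
            max ((n : ℝ) * d) (M n) * ∏ i ∈ Icc 1 (n - 1), M i) →
          M n ≤ (n : ℝ) * d → ∀ i, 1 ≤ i → i ≤ n - 1 → M i = (i : ℝ) * d) := by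
  intro n hn
  induction n, hn using Nat.le_induction with
  | base =>
    intro _
    constructor
    · simp [hM0, max_comm]
    · intro _ _ i hi1 hi2
      omega
  | succ n hn ih =>
    intro hpos
    obtain ⟨m, rfl⟩ : ∃ m, n = m + 1 := ⟨n - 1, by omega⟩
    have hpos' : ∀ i, 1 ≤ i → i ≤ m + 1 → 0 < M i := fun i h1 h2 => hpos i h1 (by omega)
    obtain ⟨hle, heq⟩ := ih hpos'
    simp only [Nat.add_sub_cancel] at hle heq ⊢
    -- abbreviations
    set Q : ℝ := ∏ i ∈ Icc 1 (m + 1), max (M i) (M (i - 1) + d) with hQ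
    set P : ℝ := ∏ i ∈ Icc 1 m, M i with hP
    have hPpos : 0 < P := Finset.prod_pos fun i hi =>
      hpos' i (mem_Icc.1 hi).1 (by have := (mem_Icc.1 hi).2; omega)
    have hx : 0 < M (m + 1) := hpos' (m + 1) (by omega) le_rfl
    have hy : 0 < M (m + 2) := hpos (m + 2) (by omega) le_rfl
    set x := M (m + 1) with hxdef
    set y := M (m + 2) with hydef
    set c : ℝ := ((m : ℝ) + 1) * d with hc
    have hccast : ((m + 1 : ℕ) : ℝ) * d = c := by push_cast [hc]; ring
    rw [hccast] at hle heq
    have hcpos : 0 < c := by positivity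
    set A : ℝ := max y (x + d) with hA
    have hApos : 0 < A := lt_of_lt_of_le (by linarith) (le_max_right _ _)
    have hprod2 : ∏ i ∈ Icc 1 (m + 2), max (M i) (M (i - 1) + d) = Q * A := by
      rw [show m + 2 = (m + 1) + 1 from rfl, Finset.prod_Icc_succ_top (by omega)]
      simp [hA, hQ]
      exact Or.inl rfl
    have hprod1 : ∏ i ∈ Icc 1 (m + 1), M i = P * x := by
      rw [Finset.prod_Icc_succ_top (by omega)]
    have hccast2 : ((m + 1 + 1 : ℕ) : ℝ) * d = c + d := by push_cast [hc]; ring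
    rw [hprod2, hprod1, hccast2]
    have hBQ : max c x * P ≤ Q := hle
    -- scalar inequalities
    have k1 : (c + d) * x ≤ max c x * (x + d) := by
      rcases le_total x c with h | h
      · rw [max_eq_left h]; nlinarith
      · rw [max_eq_right h]; nlinarith
    have k2 : max c x * (x + d) ≤ max c x * A := by
      apply mul_le_mul_of_nonneg_left (le_max_right _ _)
      exact le_trans hcpos.le (le_max_left _ _)
    have hmaxpos : 0 < max c x := lt_max_of_lt_left hcpos
    have k3 : x * y ≤ max c x * A :=
      mul_le_mul (le_max_right _ _) (le_max_left _ _) hy.le hmaxpos.le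
    have k4 : max (c + d) y * x ≤ max c x * A := by
      rcases max_cases (c + d) y with ⟨h1, h2⟩ | ⟨h1, h2⟩
      · rw [h1]; linarith
      · rw [h1]; nlinarith
    constructor
    · calc max (c + d) y * (P * x) = (max (c + d) y * x) * P := by ring
        _ ≤ (max c x * A) * P := mul_le_mul_of_nonneg_right k4 hPpos.le
        _ = (max c x * P) * A := by ring
        _ ≤ Q * A := mul_le_mul_of_nonneg_right hBQ hApos.le
    · intro hEq hyle
      have hmax2 : max (c + d) y = c + d := max_eq_left hyle
      rw [hmax2] at hEq
      -- chain of inequalities, all equalities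
      have c1 : (c + d) * x * P ≤ (max c x * (x + d)) * P :=
        mul_le_mul_of_nonneg_right k1 hPpos.le
      have c2 : (max c x * (x + d)) * P ≤ (max c x * A) * P :=
        mul_le_mul_of_nonneg_right k2 hPpos.le
      have c3 : (max c x * P) * A ≤ Q * A := mul_le_mul_of_nonneg_right hBQ hApos.le
      have hend : Q * A = (c + d) * x * P := by rw [hEq]; ring
      have r1 : (max c x * A) * P = (max c x * P) * A := by ring
      have e1 : (c + d) * x * P = (max c x * (x + d)) * P :=
        le_antisymm c1 (by linarith)
      have e1' : (c + d) * x = max c x * (x + d) :=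
        mul_right_cancel₀ hPpos.ne' e1
      have hxc : x = c := by
        rcases le_total x c with h | h
        · rw [max_eq_left h] at e1'
          have h0 : d * (x - c) = 0 := by linear_combination e1'
          rcases mul_eq_zero.1 h0 with h' | h'
          · exact absurd h' hd.ne'
          · linarith
        · rw [max_eq_right h] at e1'
          have h0 : x * (c - x) = 0 := by linear_combination e1'
          rcases mul_eq_zero.1 h0 with h' | h'
          · exact absurd h' hx.ne'
          · linarith
      have eQB : Q = max c x * P := by
        have : (max c x * P) * A = Q * A :=
          le_antisymm c3 (by linarith)
        exact (mul_right_cancel₀ hApos.ne' this).symm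
      have hrec := heq eQB (by rw [hxc])
      intro i hi1 hi2
      rcases Nat.lt_or_ge i (m + 1) with h | h
      · exact hrec i hi1 (by omega)
      · have : i = m + 1 := by omega
        subst this
        rw [← hxdef, hxc, hc]
        push_cast
        ring


/-- Equality case (Remark (b)): for `s ≥ 1`, `d > 0` and positive reals
`M 1, …, M (s+1)` with `M 0 = 0`, equality
`(s+1) · d · ∏_{i=1}^{s} M i = ∏_{i=1}^{s+1} max (M i) (M (i-1) + d)`
holds if and only if `M i = i·d` for all `i = 1, …, s` and `M (s+1) ≤ (s+1)·d`. -/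
theorem multiplicity_upper_bound_equality_case (s : ℕ) (hs : 1 ≤ s) (d : ℝ) (hd : 0 < d)
    (M : ℕ → ℝ) (hM0 : M 0 = 0) (hMpos : ∀ i, 1 ≤ i → i ≤ s + 1 → 0 < M i) :
    (s + 1 : ℝ) * d * ∏ i ∈ Finset.Icc 1 s, M i =
        ∏ i ∈ Finset.Icc 1 (s + 1), max (M i) (M (i - 1) + d) ↔
      (∀ i, 1 ≤ i → i ≤ s → M i = i * d) ∧ M (s + 1) ≤ (s + 1) * d := by
  obtain ⟨hle, heq⟩ := key_lemma d hd M hM0 (s + 1) (by omega) hMpos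
  simp only [Nat.add_sub_cancel] at hle heq
  have hcast : ((s + 1 : ℕ) : ℝ) * d = ((s : ℝ) + 1) * d := by push_cast; ring
  rw [hcast] at hle heq
  have hP : 0 < ∏ i ∈ Icc 1 s, M i := Finset.prod_pos fun i hi =>
    hMpos i (mem_Icc.1 hi).1 (by have := (mem_Icc.1 hi).2; omega)
  constructor
  · intro hEq
    have hle' : max (((s : ℝ) + 1) * d) (M (s + 1)) * ∏ i ∈ Icc 1 s, M i ≤
        ((s : ℝ) + 1) * d * ∏ i ∈ Icc 1 s, M i := by rw [hEq]; exact hle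
    have hmax : max (((s : ℝ) + 1) * d) (M (s + 1)) ≤ ((s : ℝ) + 1) * d :=
      le_of_mul_le_mul_right hle' hP
    have h2 : M (s + 1) ≤ ((s : ℝ) + 1) * d := (le_max_right _ _).trans hmax
    have hmaxeq : max (((s : ℝ) + 1) * d) (M (s + 1)) = ((s : ℝ) + 1) * d :=
      max_eq_left h2
    have hQB : ∏ i ∈ Icc 1 (s + 1), max (M i) (M (i - 1) + d) =
        max (((s : ℝ) + 1) * d) (M (s + 1)) * ∏ i ∈ Icc 1 s, M i := by
      rw [hmaxeq, ← hEq]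
    exact ⟨heq hQB h2, h2⟩
  · rintro ⟨h1, h2⟩
    have hrest : ∏ i ∈ Icc 1 s, max (M i) (M (i - 1) + d) = ∏ i ∈ Icc 1 s, M i := by
      refine Finset.prod_congr rfl fun i hi => ?_
      obtain ⟨hi1, hi2⟩ := mem_Icc.1 hi
      have hMi : M i = (i : ℝ) * d := h1 i hi1 hi2
      have hMi1 : M (i - 1) + d = (i : ℝ) * d := by
        rcases Nat.eq_or_lt_of_le hi1 with h | h
        · rw [← h]; simp [hM0]
        · have hv : M (i - 1) = ((i - 1 : ℕ) : ℝ) * d := h1 (i - 1) (by omega) (by omega)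
          have hc : ((i - 1 : ℕ) : ℝ) = (i : ℝ) - 1 := by
            have := Nat.cast_sub (R := ℝ) hi1
            simpa using this
          rw [hv, hc]; ring
      rw [hMi, hMi1, max_self]
    have hlast : max (M (s + 1)) (M (s + 1 - 1) + d) = ((s : ℝ) + 1) * d := by
      simp only [Nat.add_sub_cancel]
      rw [h1 s hs le_rfl, max_eq_right (by linarith)]
      ring
    rw [Finset.prod_Icc_succ_top (show 1 ≤ s + 1 by omega), hrest, hlast]
    ring
end

section
/- Fix integers r ≥ 0 and m ≥ 1 and positive real numbers u_{i,j} for 1 ≤ i ≤ r+1 and 1 ≤ j ≤ m such that u_{1,j} ≥ u_{2,j} ≥ ⋯ ≥ u_{r+1,j} for every j, and u_{i,j} ≥ u_{i+1,j-1} for all 1 ≤ i ≤ r and 2 ≤ j ≤ m. Then (r+1)! · Σ_{1 ≤ j_1 ≤ j_2 ≤ ⋯ ≤ j_{r+1} ≤ m} ∏_{i=1}^{r+1} u_{i,j_i} ≤ ∏_{k=0}^{r} ( Σ_{j=1}^{m-1} u_{1,j} + Σ_{i=1}^{k+1} u_{i,m} ). -/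
open Finset

private lemma sum_Icc_one (f : ℕ → ℝ) (n : ℕ) :
    ∑ i ∈ Icc 1 n, f i = ∑ i ∈ range n, f (i + 1) := by
  induction n with
  | zero => simp
  | succ n ih => rw [Finset.sum_Icc_succ_top (by omega), ih, sum_range_succ]

private lemma colmono (u : ℕ → ℕ → ℝ) (R M : ℕ)
    (hcol : ∀ i j, 1 ≤ i → i ≤ R → 1 ≤ j → j ≤ M → u (i + 1) j ≤ u i j) :
    ∀ j i i', 1 ≤ i → i ≤ i' → i' ≤ R + 1 → 1 ≤ j → j ≤ M → u i' j ≤ u i j := by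
  intro j i i' h1 h2
  induction i', h2 using Nat.le_induction with
  | base => intro _ _ _; exact le_rfl
  | succ n hn ih =>
    intro h3 h4 h5
    exact le_trans (hcol n j (by omega) (by omega) h4 h5) (ih (by omega) h4 h5)

private lemma monotone_snoc_last {n m : ℕ} (g : Fin n → Fin (m + 1)) (hg : Monotone g) :
    Monotone (Fin.snoc g (Fin.last m)) := by
  intro a b hab
  induction b using Fin.lastCases with
  | last =>
    rw [Fin.snoc_last]
    induction a using Fin.lastCases with
    | last => rw [Fin.snoc_last]
    | cast i => rw [Fin.snoc_castSucc]; exact Fin.le_last _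
  | cast bi =>
    induction a using Fin.lastCases with
    | last => exact absurd hab (by simpa using (Fin.castSucc_lt_last bi).not_le)
    | cast ai =>
      rw [Fin.snoc_castSucc, Fin.snoc_castSucc]
      exact hg (by rwa [Fin.castSucc_le_castSucc_iff] at hab)

open Classical in
noncomputable def mmT (u : ℕ → ℕ → ℝ) (r m : ℕ) : ℝ :=
  ∑ f ∈ Finset.univ.filter (fun f : Fin (r + 1) → Fin m => Monotone f),
    ∏ i : Fin (r + 1), u ((i : ℕ) + 1) ((f i : ℕ) + 1)

private lemma mmT_r_zero (u : ℕ → ℕ → ℝ) (m : ℕ) :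
    mmT u 0 m = ∑ j ∈ range m, u 1 (j + 1) := by
  classical
  unfold mmT
  have h : (Finset.univ.filter (fun f : Fin 1 → Fin m => Monotone f)) = Finset.univ :=
    Finset.filter_true_of_mem
      (fun f _ => fun a b _ => le_of_eq (congrArg f (Subsingleton.elim a b)))
  rw [h, ← Fin.sum_univ_eq_sum_range (fun j => u 1 (j + 1)) m]
  exact Fintype.sum_equiv (Equiv.funUnique (Fin 1) (Fin m)) _ _ (by
    intro f
    simp [Equiv.funUnique])

private lemma mmT_m_one (u : ℕ → ℕ → ℝ) (r : ℕ) :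
    mmT u r 1 = ∏ i ∈ range (r + 1), u (i + 1) 1 := by
  classical
  unfold mmT
  rw [Finset.univ_unique, Finset.filter_singleton,
    if_pos (show Monotone (default : Fin (r + 1) → Fin 1) from
      fun a b _ => le_of_eq (Subsingleton.elim _ _))]
  rw [Finset.sum_singleton, ← Fin.prod_univ_eq_prod_range (fun i => u (i + 1) 1) (r + 1)]
  exact Finset.prod_congr rfl (by
    intro i _
    norm_num [Subsingleton.elim ((default : Fin (r + 1) → Fin 1) i) 0])

private lemma mmT_succ (u : ℕ → ℕ → ℝ) (r m : ℕ) :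
    mmT u (r + 1) (m + 1) = mmT u (r + 1) m + u (r + 2) (m + 1) * mmT u r (m + 1) := by
  classical
  have key := Finset.sum_filter_add_sum_filter_not
    (Finset.univ.filter (fun f : Fin (r + 2) → Fin (m + 1) => Monotone f))
    (fun f => f (Fin.last (r + 1)) = Fin.last m)
    (fun f => ∏ i : Fin (r + 2), u ((i : ℕ) + 1) ((f i : ℕ) + 1))
  have h1 : ∑ f ∈ (Finset.univ.filter (fun f : Fin (r + 2) → Fin (m + 1) => Monotone f)).filter
      (fun f => f (Fin.last (r + 1)) = Fin.last m),
      ∏ i : Fin (r + 2), u ((i : ℕ) + 1) ((f i : ℕ) + 1)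
      = u (r + 2) (m + 1) * mmT u r (m + 1) := by
    unfold mmT
    rw [Finset.mul_sum]
    refine Finset.sum_bij' (fun f _ => fun k : Fin (r + 1) => f k.castSucc)
      (fun g _ => Fin.snoc g (Fin.last m)) ?_ ?_ ?_ ?_ ?_
    · intro f hf
      simp only [Finset.mem_filter, Finset.mem_univ, true_and] at hf ⊢
      exact fun a b hab => hf.1 (Fin.castSucc_le_castSucc_iff.mpr hab)
    · intro g hg
      simp only [Finset.mem_filter, Finset.mem_univ, true_and] at hg ⊢
      exact ⟨monotone_snoc_last g hg, Fin.snoc_last _ _⟩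
    · intro f hf
      simp only [Finset.mem_filter, Finset.mem_univ, true_and] at hf
      have h2 := Fin.snoc_init_self f
      rw [hf.2] at h2
      exact h2
    · intro g hg
      exact funext fun k => Fin.snoc_castSucc _ _ k
    · intro f hf
      simp only [Finset.mem_filter, Finset.mem_univ, true_and] at hf
      rw [Fin.prod_univ_castSucc
        (fun i : Fin (r + 2) => u ((i : ℕ) + 1) ((f i : ℕ) + 1)), hf.2, mul_comm]
      simp
  have h2 : ∑ f ∈ (Finset.univ.filter (fun f : Fin (r + 2) → Fin (m + 1) => Monotone f)).filter
      (fun f => ¬ f (Fin.last (r + 1)) = Fin.last m),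
      ∏ i : Fin (r + 2), u ((i : ℕ) + 1) ((f i : ℕ) + 1)
      = mmT u (r + 1) m := by
    unfold mmT
    refine Finset.sum_bij' (fun f hf => fun k : Fin (r + 2) => (⟨(f k : ℕ), by
        simp only [Finset.mem_filter, Finset.mem_univ, true_and] at hf
        have ha : (f k : ℕ) ≤ (f (Fin.last (r + 1)) : ℕ) := Fin.le_def.mp (hf.1 (Fin.le_last k))
        have hb : (f (Fin.last (r + 1)) : ℕ) < m + 1 := (f _).isLt
        have hc : (f (Fin.last (r + 1)) : ℕ) ≠ m := by
          intro h
          exact hf.2 (by apply Fin.ext; simp [h])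
        omega⟩ : Fin m))
      (fun g _ => fun k => (g k).castSucc) ?_ ?_ ?_ ?_ ?_
    · intro f hf
      simp only [Finset.mem_filter, Finset.mem_univ, true_and] at hf ⊢
      intro a b hab
      exact Fin.mk_le_mk.mpr (Fin.le_def.mp (hf.1 hab))
    · intro g hg
      simp only [Finset.mem_filter, Finset.mem_univ, true_and] at hg ⊢
      refine ⟨fun a b hab => Fin.castSucc_le_castSucc_iff.mpr (hg hab), ?_⟩
      intro h
      have hv := congrArg Fin.val h
      simp only [Fin.coe_castSucc, Fin.val_last] at hv
      have hlt := (g (Fin.last (r + 1))).isLt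
      omega
    · intro f hf
      exact funext fun k => by apply Fin.ext; simp
    · intro g hg
      exact funext fun k => by apply Fin.ext; simp
    · intro f hf
      rfl
  rw [← h1, ← h2]
  exact key.symm.trans (add_comm _ _)

private lemma mmKey (u : ℕ → ℕ → ℝ) :
    ∀ r m : ℕ, 1 ≤ m →
    (∀ i j, 1 ≤ i → i ≤ r + 1 → 1 ≤ j → j ≤ m → 0 < u i j) →
    (∀ i j, 1 ≤ i → i ≤ r → 1 ≤ j → j ≤ m → u (i + 1) j ≤ u i j) →
    (∀ i j, 1 ≤ i → i ≤ r → 2 ≤ j → j ≤ m → u (i + 1) (j - 1) ≤ u i j) →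
    ((r + 1).factorial : ℝ) * mmT u r m ≤
      ∏ k ∈ Finset.range (r + 1),
        ((∑ j ∈ Finset.Icc 1 (m - 1), u 1 j) + ∑ i ∈ Finset.Icc 1 (k + 1), u i m) := by
  intro r
  induction r with
  | zero =>
    intro m hm _ _ _
    have hm'' : m - 1 + 1 = m := by omega
    rw [prod_range_one, mmT_r_zero]
    simp only [sum_Icc_one]
    have e1 : ∑ j ∈ range m, u 1 (j + 1)
        = (∑ j ∈ range (m - 1), u 1 (j + 1)) + u 1 m := by
      conv_lhs => rw [← hm'']
      rw [sum_range_succ, hm'']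
    rw [Nat.factorial_one]
    rw [e1]
    simp
  | succ r ih =>
    intro m
    induction m with
    | zero => intro hm; exact absurd hm (by omega)
    | succ m ihm =>
      intro _ hpos hcol hdiag
      rcases Nat.eq_zero_or_pos m with h0 | hm1
      · -- base case m + 1 = 1
        subst h0
        simp only [zero_add, sum_Icc_one, Nat.sub_self, range_zero, sum_empty]
        rw [mmT_m_one]
        have hfac : ((r + 1 + 1).factorial : ℝ) = ∏ k ∈ range (r + 1 + 1), ((k : ℝ) + 1) := by
          rw [← Finset.prod_range_add_one_eq_factorial]
          push_cast
          rfl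
        rw [hfac, ← Finset.prod_mul_distrib]
        refine Finset.prod_le_prod ?_ ?_
        · intro k hk
          simp only [mem_range] at hk
          have := hpos (k + 1) 1 (by omega) (by omega) le_rfl le_rfl
          positivity
        · intro k hk
          simp only [mem_range] at hk
          have hconst : ((k : ℝ) + 1) * u (k + 1) 1 = ∑ _i ∈ range (k + 1), u (k + 1) 1 := by
            rw [sum_const, card_range, nsmul_eq_mul]
            push_cast
            ring
          rw [hconst]
          refine Finset.sum_le_sum ?_
          intro i hi
          simp only [mem_range] at hi
          exact colmono u (r + 1) 1 hcol 1 (i + 1) (k + 1) (by omega) (by omega) (by omega)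
            le_rfl le_rfl
      · -- inductive step : m ≥ 1
        have hrec := mmT_succ u r m
        have IH1 := ihm hm1 (fun i j a b c d => hpos i j a b c (by omega))
          (fun i j a b c d => hcol i j a b c (by omega))
          (fun i j a b c d => hdiag i j a b c (by omega))
        have IH2 := ih (m + 1) (by omega)
          (fun i j a b c d => hpos i j a (by omega) c d)
          (fun i j a b c d => hcol i j a (by omega) c d)
          (fun i j a b c d => hdiag i j a (by omega) c d)
        simp only [Nat.add_sub_cancel, sum_Icc_one] at IH1 IH2 ⊢
        set w := u (r + 2) (m + 1) with hw
        set A : ℝ := ∑ j ∈ range m, u 1 (j + 1) with hA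
        set A' : ℝ := ∑ j ∈ range (m - 1), u 1 (j + 1) with hA'
        set M : ℕ → ℝ := fun k => A + ∑ i ∈ range (k + 1), u (i + 1) (m + 1) with hM
        set M' : ℕ → ℝ := fun k => A' + ∑ i ∈ range (k + 1), u (i + 1) m with hM'
        -- basic facts
        have hm'' : m - 1 + 1 = m := by omega
        have e1 : A = A' + u 1 m := by
          rw [hA, hA']
          conv_lhs => rw [← hm'']
          rw [sum_range_succ, hm'']
        have hwpos : 0 < w := hpos (r + 2) (m + 1) (by omega) (by omega) (by omega) (by omega)
        have hM'nonneg : ∀ k, k ≤ r + 1 → 0 ≤ M' k := by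
          intro k hk
          have h1 : 0 ≤ A' := Finset.sum_nonneg (fun j hj => by
            simp only [mem_range] at hj
            exact le_of_lt (hpos 1 (j + 1) le_rfl (by omega) (by omega) (by omega)))
          have h2 : 0 ≤ ∑ i ∈ range (k + 1), u (i + 1) m := Finset.sum_nonneg (fun i hi => by
            simp only [mem_range] at hi
            exact le_of_lt (hpos (i + 1) m (by omega) (by omega) (by omega) (by omega)))
          simp only [hM']
          linarith
        have hMnonneg : ∀ k, k ≤ r + 1 → 0 ≤ M k := by
          intro k hk
          have h1 : 0 ≤ A := Finset.sum_nonneg (fun j hj => by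
            simp only [mem_range] at hj
            exact le_of_lt (hpos 1 (j + 1) le_rfl (by omega) (by omega) (by omega)))
          have h2 : 0 ≤ ∑ i ∈ range (k + 1), u (i + 1) (m + 1) :=
            Finset.sum_nonneg (fun i hi => by
              simp only [mem_range] at hi
              exact le_of_lt (hpos (i + 1) (m + 1) (by omega) (by omega) (by omega) (by omega)))
          simp only [hM]
          linarith
        have hP : 0 ≤ ∏ k ∈ range (r + 1), M k :=
          Finset.prod_nonneg (fun k hk => hMnonneg k (by simp only [mem_range] at hk; omega))
        -- fact (b)
        have hb : ∀ k, k ≤ r → M' (k + 1) ≤ M k := by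
          intro k hk
          have e2 : ∑ i ∈ range (k + 2), u (i + 1) m
              = (∑ i ∈ range (k + 1), u (i + 1 + 1) m) + u 1 m := by
            have := Finset.sum_range_succ' (fun i => u (i + 1) m) (k + 1)
            simpa using this
          have e3 : ∑ i ∈ range (k + 1), u (i + 1 + 1) m
              ≤ ∑ i ∈ range (k + 1), u (i + 1) (m + 1) := by
            refine Finset.sum_le_sum ?_
            intro i hi
            simp only [mem_range] at hi
            have := hdiag (i + 1) (m + 1) (by omega) (by omega) (by omega) le_rfl
            simpa using this
          simp only [hM', hM]
          rw [e2, e1]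
          linarith
        -- fact (c)
        have hc : M' 0 + w ≤ M 0 := by
          have hw1 : w ≤ u 1 (m + 1) :=
            colmono u (r + 1) (m + 1) hcol (m + 1) 1 (r + 2) le_rfl (by omega) le_rfl
              (by omega) le_rfl
          simp only [hM', hM]
          rw [sum_range_one, sum_range_one, e1]
          linarith
        -- fact (d)
        have hd : M 0 + ((r : ℝ) + 1) * w ≤ M (r + 1) := by
          have e4 : ∑ i ∈ range (r + 2), u (i + 1) (m + 1)
              = (∑ i ∈ range (r + 1), u (i + 1 + 1) (m + 1)) + u 1 (m + 1) := by
            have := Finset.sum_range_succ' (fun i => u (i + 1) (m + 1)) (r + 1)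
            simpa using this
          have e5 : ((r : ℝ) + 1) * w ≤ ∑ i ∈ range (r + 1), u (i + 1 + 1) (m + 1) := by
            have : ∑ _i ∈ range (r + 1), w ≤ ∑ i ∈ range (r + 1), u (i + 1 + 1) (m + 1) := by
              refine Finset.sum_le_sum ?_
              intro i hi
              simp only [mem_range] at hi
              exact colmono u (r + 1) (m + 1) hcol (m + 1) (i + 2) (r + 2) (by omega) (by omega)
                le_rfl (by omega) le_rfl
            rw [sum_const, card_range, nsmul_eq_mul] at this
            push_cast at this
            linarith
          simp only [hM]
          rw [e4, sum_range_one]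
          linarith
        -- put things together
        have hfact : ((r + 1 + 1).factorial : ℝ) = ((r : ℝ) + 2) * ((r + 1).factorial : ℝ) := by
          rw [Nat.factorial_succ]
          push_cast
          ring
        have step1 : ((r + 1 + 1).factorial : ℝ) * mmT u (r + 1) (m + 1)
            = ((r + 1 + 1).factorial : ℝ) * mmT u (r + 1) m
              + (((r : ℝ) + 2) * w) * (((r + 1).factorial : ℝ) * mmT u r (m + 1)) := by
          rw [hrec, hfact]
          ring
        have step2 : (((r : ℝ) + 2) * w) * (((r + 1).factorial : ℝ) * mmT u r (m + 1))
            ≤ (((r : ℝ) + 2) * w) * ∏ k ∈ range (r + 1), M k := by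
          refine mul_le_mul_of_nonneg_left IH2 ?_
          have : (0 : ℝ) < (r : ℝ) + 2 := by positivity
          nlinarith
        have step3 : ∏ k ∈ range (r + 1 + 1), M' k
            ≤ (M 0 - w) * ∏ k ∈ range (r + 1), M k := by
          rw [Finset.prod_range_succ']
          have h1 : ∏ k ∈ range (r + 1), M' (k + 1) ≤ ∏ k ∈ range (r + 1), M k := by
            refine Finset.prod_le_prod ?_ ?_
            · intro k hk
              simp only [mem_range] at hk
              exact hM'nonneg (k + 1) (by omega)
            · intro k hk
              simp only [mem_range] at hk
              exact hb k (by omega)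
          have h2 : M' 0 ≤ M 0 - w := by linarith [hc]
          have h3 : 0 ≤ M' 0 := hM'nonneg 0 (by omega)
          calc (∏ k ∈ range (r + 1), M' (k + 1)) * M' 0
              ≤ (∏ k ∈ range (r + 1), M k) * (M 0 - w) :=
                mul_le_mul h1 h2 h3 hP
            _ = (M 0 - w) * ∏ k ∈ range (r + 1), M k := by ring
        calc ((r + 1 + 1).factorial : ℝ) * mmT u (r + 1) (m + 1)
            = ((r + 1 + 1).factorial : ℝ) * mmT u (r + 1) m
              + (((r : ℝ) + 2) * w) * (((r + 1).factorial : ℝ) * mmT u r (m + 1)) := step1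
          _ ≤ (∏ k ∈ range (r + 1 + 1), M' k)
              + (((r : ℝ) + 2) * w) * ∏ k ∈ range (r + 1), M k := add_le_add IH1 step2
          _ ≤ ((M 0 - w) * ∏ k ∈ range (r + 1), M k)
              + (((r : ℝ) + 2) * w) * ∏ k ∈ range (r + 1), M k :=
                add_le_add_left step3 _
          _ = (M 0 + ((r : ℝ) + 1) * w) * ∏ k ∈ range (r + 1), M k := by ring
          _ ≤ M (r + 1) * ∏ k ∈ range (r + 1), M k :=
                mul_le_mul_of_nonneg_right hd hP
          _ = ∏ k ∈ range (r + 1 + 1), M k := by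
                rw [Finset.prod_range_succ M (r + 1)]
                exact mul_comm _ _

open Classical in
/-- The upper multiplicity bound for ideals of maximal minors: for positive reals
`u i j` (`1 ≤ i ≤ r+1`, `1 ≤ j ≤ m`) decreasing down each column and with
`u i j ≥ u (i+1) (j-1)`, the Herzog–Trung multiplicity sum over weakly increasing
tuples `1 ≤ j₁ ≤ ⋯ ≤ j_{r+1} ≤ m` (encoded by monotone maps `Fin (r+1) → Fin m`)
satisfies
`(r+1)! · Σ ∏ᵢ u i jᵢ ≤ ∏_{k=0}^{r} (Σ_{j=1}^{m-1} u 1 j + Σ_{i=1}^{k+1} u i m)`. -/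
theorem maximal_minors_upper_bound (r m : ℕ) (hm : 1 ≤ m) (u : ℕ → ℕ → ℝ)
    (hpos : ∀ i j, 1 ≤ i → i ≤ r + 1 → 1 ≤ j → j ≤ m → 0 < u i j)
    (hcol : ∀ i j, 1 ≤ i → i ≤ r → 1 ≤ j → j ≤ m → u (i + 1) j ≤ u i j)
    (hdiag : ∀ i j, 1 ≤ i → i ≤ r → 2 ≤ j → j ≤ m → u (i + 1) (j - 1) ≤ u i j) :
    ((r + 1).factorial : ℝ) *
        ∑ f ∈ Finset.univ.filter (fun f : Fin (r + 1) → Fin m => Monotone f),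
          ∏ i : Fin (r + 1), u ((i : ℕ) + 1) ((f i : ℕ) + 1) ≤
      ∏ k ∈ Finset.range (r + 1),
        ((∑ j ∈ Finset.Icc 1 (m - 1), u 1 j) + ∑ i ∈ Finset.Icc 1 (k + 1), u i m) := by
  exact mmKey u r m hm hpos hcol hdiag
end

section
/- Fix integers r ≥ 0 and m ≥ 1 and positive real numbers u_{i,j} for 1 ≤ i ≤ r+1 and 1 ≤ j ≤ m such that u_{1,j} ≥ u_{2,j} ≥ ⋯ ≥ u_{r+1,j} for every j, and u_{i,j} ≥ u_{i+1,j-1} for all 1 ≤ i ≤ r and 2 ≤ j ≤ m. Then (r+1)! · Σ_{1 ≤ j_1 ≤ j_2 ≤ ⋯ ≤ j_{r+1} ≤ m} ∏_{i=1}^{r+1} u_{i,j_i} ≥ ∏_{k=0}^{r} ( Σ_{i=r+1-k}^{r+1} u_{i,1} + Σ_{j=2}^{m} u_{r+1,j} ). -/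
open Finset

namespace MMLB


/-- value of the hook cell with 0-based linear coordinate `x`, for an `N`-row problem -/
noncomputable def hv (N : ℕ) (u : ℕ → ℕ → ℝ) (x : ℕ) : ℝ :=
  if x + 1 ≤ N then u (x + 1) 1 else u N (x + 2 - N)

lemma hv_nonneg (N m : ℕ) (u : ℕ → ℕ → ℝ)
    (hnn : ∀ i j, 1 ≤ i → i ≤ N → 1 ≤ j → j ≤ m → 0 ≤ u i j)
    (hm : 1 ≤ m) (hN : 1 ≤ N) (x : ℕ) (hx : x < N + m - 1) : 0 ≤ hv N u x := by
  unfold hv; split_ifs with h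
  · exact hnn _ _ (by omega) (by omega) le_rfl hm
  · exact hnn _ _ hN le_rfl (by omega) (by omega)

lemma hv_le (N m : ℕ) (u : ℕ → ℕ → ℝ)
    (hdiag : ∀ i j, 1 ≤ i → i + 1 ≤ N → 2 ≤ j → j ≤ m → u (i+1) (j-1) ≤ u i j) :
    ∀ C R, 1 ≤ R → R ≤ N → 1 ≤ C → C ≤ m → hv N u (R + C - 2) ≤ u R C := by
  intro C
  induction C with
  | zero => intro R _ _ h _; exact absurd h (by omega)
  | succ C ih =>
    intro R hR1 hRN _ hCm
    by_cases hC : C = 0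
    · subst hC
      unfold hv
      rw [if_pos (by omega)]
      have h1 : R + 1 - 2 + 1 = R := by omega
      rw [h1]
    · by_cases hRN' : R = N
      · unfold hv
        rw [if_neg (by omega)]
        have h1 : R + (C+1) - 2 + 2 - N = C + 1 := by omega
        rw [h1, hRN']
      · have h1 := ih (R+1) (by omega) (by omega) (by omega) (by omega)
        have h2 := hdiag R (C+1) hR1 (by omega) (by omega) hCm
        have h3 : R + 1 + C - 2 = R + (C+1) - 2 := by omega
        rw [h3] at h1
        refine h1.trans ?_
        simpa using h2


variable {N m : ℕ}


variable {N m : ℕ}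

/-- insertion position: the number of entries `j` of `c` with `c j + j < x`. -/
def pos (x : ℕ) (c : Fin N → Fin m) : ℕ :=
  (univ.filter (fun j : Fin N => (c j : ℕ) + (j : ℕ) < x)).card

lemma pos_le (x : ℕ) (c : Fin N → Fin m) : pos x c ≤ N := by
  classical
  refine (card_filter_le _ _).trans ?_
  simp

lemma pos_iff {x : ℕ} {c : Fin N → Fin m} (hc : Monotone c) (j : Fin N) :
    (c j : ℕ) + (j : ℕ) < x ↔ (j : ℕ) < pos x c := by
  classical
  constructor
  · intro h
    have hsub : Finset.Iic j ⊆ univ.filter (fun j' : Fin N => (c j' : ℕ) + (j' : ℕ) < x) := by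
      intro a ha
      rw [mem_Iic] at ha
      rw [mem_filter]
      refine ⟨mem_univ _, lt_of_le_of_lt ?_ h⟩
      exact add_le_add (hc ha) ha
    have := card_le_card hsub
    rw [Fin.card_Iic] at this
    unfold pos; omega
  · intro h
    by_contra hcj
    have hsub : (univ.filter (fun j' : Fin N => (c j' : ℕ) + (j' : ℕ) < x)) ⊆ Finset.Iio j := by
      intro a ha
      rw [mem_filter] at ha
      rw [mem_Iio]
      by_contra hja
      push_neg at hja
      have : (c j : ℕ) + (j : ℕ) ≤ (c a : ℕ) + (a : ℕ) := add_le_add (hc hja) hja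
      omega
    have := card_le_card hsub
    rw [Fin.card_Iio] at this
    unfold pos at h; omega

lemma pos_le_x (x : ℕ) (c : Fin N → Fin m) : pos x c ≤ x := by
  classical
  rcases le_or_gt N x with h | h
  · exact (pos_le x c).trans h
  · have hsub : (univ.filter (fun j' : Fin N => (c j' : ℕ) + (j' : ℕ) < x)) ⊆
        Finset.Iio (⟨x, h⟩ : Fin N) := by
      intro a ha
      rw [mem_filter] at ha
      rw [mem_Iio, Fin.lt_def]
      simp only []
      omega
    have := card_le_card hsub
    rw [Fin.card_Iio] at this
    exact this

lemma x_lt_pos_add_m {x : ℕ} {c : Fin N → Fin m} (hc : Monotone c) (hx : x < N + m) :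
    x < pos x c + m := by
  rcases lt_or_ge x m with h | h
  · omega
  · have hj : x - m < N := by omega
    have hmem : (c ⟨x - m, hj⟩ : ℕ) + ((⟨x - m, hj⟩ : Fin N) : ℕ) < x := by
      have := (c ⟨x - m, hj⟩).isLt
      simp only []
      omega
    have := (pos_iff hc _).1 hmem
    simp only [] at this
    omega

/-- insert the hook cell `x` into the monotone tuple `c`. -/
def ins (hm : 1 ≤ m) (x : ℕ) (c : Fin N → Fin m) : Fin (N+1) → Fin m := fun i =>
  if h : (i : ℕ) < pos x c then c ⟨i, lt_of_lt_of_le h (pos_le x c)⟩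
  else if h2 : (i : ℕ) = pos x c then ⟨min (x - pos x c) (m - 1), by omega⟩
  else c ⟨(i : ℕ) - 1, by have := i.isLt; omega⟩

lemma ins_lt {hm : 1 ≤ m} {x : ℕ} {c : Fin N → Fin m} {i : Fin (N+1)} (h : (i : ℕ) < pos x c) :
    ins hm x c i = c ⟨i, lt_of_lt_of_le h (pos_le x c)⟩ := by
  unfold ins; rw [dif_pos h]

lemma ins_eq {hm : 1 ≤ m} {x : ℕ} {c : Fin N → Fin m} {i : Fin (N+1)} (h : (i : ℕ) = pos x c) :
    ins hm x c i = ⟨min (x - pos x c) (m - 1), by omega⟩ := by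
  unfold ins; rw [dif_neg (by omega), dif_pos h]

lemma ins_gt {hm : 1 ≤ m} {x : ℕ} {c : Fin N → Fin m} {i : Fin (N+1)} (h : pos x c < (i : ℕ)) :
    ins hm x c i = c ⟨(i : ℕ) - 1, by have := i.isLt; omega⟩ := by
  unfold ins; rw [dif_neg (by omega), dif_neg (by omega)]

lemma ins_val_eq {hm : 1 ≤ m} {x : ℕ} {c : Fin N → Fin m} (hc : Monotone c) (hx : x < N + m)
    {i : Fin (N+1)} (h : (i : ℕ) = pos x c) : (ins hm x c i : ℕ) = x - pos x c := by
  rw [ins_eq h]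
  have := x_lt_pos_add_m hc hx
  simp only []
  omega

lemma ins_monotone (hm : 1 ≤ m) {x : ℕ} {c : Fin N → Fin m} (hc : Monotone c) (hx : x < N + m) :
    Monotone (ins hm x c) := by
  intro a b hab
  rw [Fin.le_def] at hab ⊢
  rcases lt_trichotomy (a : ℕ) (pos x c) with ha | ha | ha
  · rcases lt_trichotomy (b : ℕ) (pos x c) with hb | hb | hb
    · rw [ins_lt ha, ins_lt hb]
      exact hc (by rw [Fin.le_def]; exact hab)
    · -- a < pos = b : c ⟨a⟩ ≤ x - pos
      rw [ins_lt ha]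
      have hv := ins_val_eq (hm := hm) hc hx hb
      have hp1 : pos x c - 1 < N := by have := pos_le x c; omega
      have hmem : (c ⟨pos x c - 1, hp1⟩ : ℕ) + (pos x c - 1) < x := by
        have := (pos_iff (x := x) hc ⟨pos x c - 1, hp1⟩).2 (by simp only []; omega)
        simpa using this
      have hmono : (c ⟨(a : ℕ), lt_of_lt_of_le ha (pos_le x c)⟩ : ℕ) ≤ c ⟨pos x c - 1, hp1⟩ := by
        apply hc
        rw [Fin.le_def]
        simp only []
        omega
      omega
    · rw [ins_lt ha, ins_gt hb]
      apply hc
      rw [Fin.le_def]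
      simp only []
      omega
  · rcases lt_or_ge (pos x c) (b : ℕ) with hb | hb
    · -- a = pos < b : x - pos ≤ c ⟨b - 1⟩
      have hv := ins_val_eq (hm := hm) hc hx ha
      rw [ins_gt hb, hv]
      have hpN : pos x c < N := by have := b.isLt; omega
      have hnot : ¬ ((c ⟨pos x c, hpN⟩ : ℕ) + (pos x c) < x) := by
        intro hcon
        have := (pos_iff hc _).1 hcon
        simp only [] at this
        omega
      have hmono : (c ⟨pos x c, hpN⟩ : ℕ) ≤ (c ⟨(b : ℕ) - 1, by have := b.isLt; omega⟩ : ℕ) := by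
        apply hc
        rw [Fin.le_def]
        simp only []
        omega
      omega
    · have hba : (b : ℕ) = pos x c := by omega
      rw [ins_val_eq (hm := hm) hc hx ha, ins_val_eq (hm := hm) hc hx hba]
  · have hb : pos x c < (b : ℕ) := by omega
    rw [ins_gt ha, ins_gt hb]
    apply hc
    rw [Fin.le_def]
    simp only []
    omega

-- coercion facts
lemma coe_succAbove_lt (t : Fin (N+1)) (j : Fin N) (h : (j : ℕ) < (t : ℕ)) :
    ((t.succAbove j : ℕ)) = (j : ℕ) := by
  rw [Fin.succAbove_of_castSucc_lt]
  · exact Fin.coe_castSucc j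
  · rw [Fin.lt_def, Fin.coe_castSucc]; exact h

lemma coe_succAbove_ge (t : Fin (N+1)) (j : Fin N) (h : (t : ℕ) ≤ (j : ℕ)) :
    ((t.succAbove j : ℕ)) = (j : ℕ) + 1 := by
  rw [Fin.succAbove_of_le_castSucc]
  · exact Fin.val_succ j
  · rw [Fin.le_def, Fin.coe_castSucc]; exact h

lemma pos_forward {g : Fin (N+1) → Fin m} (hg : Monotone g) (t : Fin (N+1)) :
    pos ((g t : ℕ) + (t : ℕ)) (g ∘ t.succAbove) = (t : ℕ) := by
  set x := (g t : ℕ) + (t : ℕ) with hx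
  have hc : Monotone (g ∘ t.succAbove) := hg.comp (Fin.strictMono_succAbove t).monotone
  have hchar : ∀ j : Fin N, ((g (t.succAbove j) : ℕ) + (j : ℕ) < x ↔ (j : ℕ) < (t : ℕ)) := by
    intro j
    constructor
    · intro h
      by_contra hjt
      push_neg at hjt
      have h1 : ((t.succAbove j : ℕ)) = (j : ℕ) + 1 := coe_succAbove_ge t j hjt
      have h2 : (g t : ℕ) ≤ (g (t.succAbove j) : ℕ) := hg (by rw [Fin.le_def, h1]; omega)
      omega
    · intro h
      have h1 : ((t.succAbove j : ℕ)) = (j : ℕ) := coe_succAbove_lt t j h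
      have h2 : (g (t.succAbove j) : ℕ) ≤ (g t : ℕ) := hg (by rw [Fin.le_def, h1]; omega)
      omega
  have hposle := pos_le x (g ∘ t.succAbove)
  rcases lt_trichotomy (pos x (g ∘ t.succAbove)) (t : ℕ) with h | h | h
  · exfalso
    have hjN : pos x (g ∘ t.succAbove) < N := by have := t.isLt; omega
    have hmem := (hchar ⟨pos x (g ∘ t.succAbove), hjN⟩).2 (by simp only []; omega)
    have := (pos_iff (x := x) hc ⟨pos x (g ∘ t.succAbove), hjN⟩).1 hmem
    simp only [] at this
    omega
  · exact h
  · exfalso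
    have hjN : (t : ℕ) < N := by omega
    have hmem := (pos_iff (x := x) hc ⟨(t : ℕ), hjN⟩).2 (by simp only []; omega)
    have := (hchar ⟨(t : ℕ), hjN⟩).1 hmem
    simp only [] at this
    omega


open Classical in
lemma bij (N m : ℕ) (hm : 1 ≤ m) (F : ℕ → (Fin N → Fin m) → ℝ) :
    ∑ p ∈ (univ.filter (fun g : Fin (N+1) → Fin m => Monotone g)) ×ˢ
        (univ : Finset (Fin (N+1))),
      F ((p.1 p.2 : ℕ) + (p.2 : ℕ)) (p.1 ∘ p.2.succAbove)
    = ∑ p ∈ (range (N+m)) ×ˢ (univ.filter (fun c : Fin N → Fin m => Monotone c)),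
        F p.1 p.2 := by
  refine Finset.sum_nbij'
    (i := fun p => (((p.1 p.2 : ℕ) + (p.2 : ℕ), p.1 ∘ p.2.succAbove)))
    (j := fun q => (ins hm q.1 q.2, ⟨pos q.1 q.2, by have := pos_le q.1 q.2; omega⟩))
    ?_ ?_ ?_ ?_ ?_
  · -- hi
    rintro ⟨g, t⟩ hp
    rw [mem_product, mem_filter] at hp ⊢
    obtain ⟨⟨-, hg⟩, -⟩ := hp
    constructor
    · rw [mem_range]
      show (g t : ℕ) + (t : ℕ) < N + m
      have h1 := (g t).isLt
      have h2 := t.isLt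
      omega
    · exact ⟨mem_univ _, hg.comp (Fin.strictMono_succAbove t).monotone⟩
  · -- hj
    rintro ⟨x, c⟩ hq
    rw [mem_product, mem_range, mem_filter] at hq
    obtain ⟨hx, -, hc⟩ := hq
    rw [mem_product, mem_filter]
    exact ⟨⟨mem_univ _, ins_monotone hm hc hx⟩, mem_univ _⟩
  · -- left_inv
    rintro ⟨g, t⟩ hp
    rw [mem_product, mem_filter] at hp
    obtain ⟨⟨-, hg⟩, -⟩ := hp
    have hpos := pos_forward hg t
    have hcm : Monotone (g ∘ t.succAbove) := hg.comp (Fin.strictMono_succAbove t).monotone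
    have hxlt : (g t : ℕ) + (t : ℕ) < N + m := by
      have := (g t).isLt; have := t.isLt; omega
    ext i
    · -- first component : ins ... i = g i (as Fin values)
      show ((ins hm _ _ i : ℕ)) = (g i : ℕ)
      rcases lt_trichotomy (i : ℕ) ((t : ℕ)) with h | h | h
      · have hiN : (i : ℕ) < N := by have := t.isLt; omega
        rw [ins_lt (by rw [hpos]; exact h)]
        show ((g (t.succAbove ⟨(i : ℕ), hiN⟩) : ℕ)) = (g i : ℕ)
        rw [show t.succAbove ⟨(i : ℕ), hiN⟩ = i from
          Fin.ext (coe_succAbove_lt t ⟨(i : ℕ), hiN⟩ h)]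
      · have hval := ins_val_eq (hm := hm) hcm hxlt (i := i) (by rw [hpos]; exact h)
        rw [hval, hpos]
        have hit : i = t := Fin.ext h
        rw [hit]
        omega
      · have hiN : (i : ℕ) - 1 < N := by have := i.isLt; omega
        rw [ins_gt (by rw [hpos]; exact h)]
        show ((g (t.succAbove ⟨(i : ℕ) - 1, hiN⟩) : ℕ)) = (g i : ℕ)
        rw [show t.succAbove ⟨(i : ℕ) - 1, hiN⟩ = i from
          Fin.ext (by rw [coe_succAbove_ge t ⟨(i : ℕ) - 1, hiN⟩ (by show (t:ℕ) ≤ (i:ℕ) - 1; omega)]; show (i:ℕ) - 1 + 1 = (i:ℕ); omega)]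
    · -- second component
      show (⟨pos _ _, _⟩ : Fin (N+1)).val = (t : ℕ)
      simpa using hpos
  · -- right_inv
    rintro ⟨x, c⟩ hq
    rw [mem_product, mem_range, mem_filter] at hq
    obtain ⟨hx, -, hc⟩ := hq
    have hposx := pos_le_x x c
    set t : Fin (N+1) := ⟨pos x c, by have := pos_le x c; omega⟩ with ht
    ext i
    · -- first component: ins hm x c t + t = x
      show ((ins hm x c t : ℕ)) + (t : ℕ) = x
      rw [ins_val_eq (hm := hm) hc hx (by rfl)]
      show x - pos x c + pos x c = x
      omega
    · -- second component: (ins hm x c) ∘ t.succAbove = c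
      show ((ins hm x c) (t.succAbove i) : ℕ) = (c i : ℕ)
      rcases lt_or_ge (i : ℕ) (pos x c) with h | h
      · have hh : ((t.succAbove i : ℕ)) = (i : ℕ) := coe_succAbove_lt t i h
        have hN : ((t.succAbove i : ℕ)) < N := by rw [hh]; exact i.isLt
        rw [ins_lt (by rw [hh]; exact h)]
        show (c ⟨((t.succAbove i : ℕ)), hN⟩ : ℕ) = (c i : ℕ)
        rw [show (⟨((t.succAbove i : ℕ)), hN⟩ : Fin N) = i from Fin.ext hh]
      · have hh : ((t.succAbove i : ℕ)) = (i : ℕ) + 1 := coe_succAbove_ge t i h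
        have hN : ((t.succAbove i : ℕ)) - 1 < N := by rw [hh]; simpa using i.isLt
        rw [ins_gt (by rw [hh]; omega)]
        show (c ⟨((t.succAbove i : ℕ)) - 1, hN⟩ : ℕ) = (c i : ℕ)
        rw [show (⟨((t.succAbove i : ℕ)) - 1, hN⟩ : Fin N) = i from
          Fin.ext (by show ((t.succAbove i : ℕ)) - 1 = (i : ℕ); rw [hh]; omega)]
  · rintro ⟨g, t⟩ _
    rfl


lemma pointwise (N m : ℕ) (hm : 1 ≤ m) (u : ℕ → ℕ → ℝ)
    (hnn : ∀ i j, 1 ≤ i → i ≤ N+1 → 1 ≤ j → j ≤ m → 0 ≤ u i j)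
    (hcol : ∀ i j, 1 ≤ i → i + 1 ≤ N+1 → 1 ≤ j → j ≤ m → u (i+1) j ≤ u i j)
    (hdiag : ∀ i j, 1 ≤ i → i + 1 ≤ N+1 → 2 ≤ j → j ≤ m → u (i+1) (j-1) ≤ u i j)
    (g : Fin (N+1) → Fin m) (t : Fin (N+1)) :
    hv (N+1) u ((g t : ℕ) + (t : ℕ)) *
        ∏ j : Fin N, u ((j : ℕ) + 2) ((g (t.succAbove j) : ℕ) + 1)
      ≤ ∏ i : Fin (N+1), u ((i : ℕ) + 1) ((g i : ℕ) + 1) := by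
  rw [Fin.prod_univ_succAbove (fun i : Fin (N+1) => u ((i : ℕ) + 1) ((g i : ℕ) + 1)) t]
  have hgt := (g t).isLt
  have ht := t.isLt
  apply mul_le_mul
  · have h1 := hv_le (N+1) m u hdiag ((g t : ℕ) + 1) ((t : ℕ) + 1)
      (by omega) (by omega) (by omega) (by omega)
    have harg : (t : ℕ) + 1 + ((g t : ℕ) + 1) - 2 = (g t : ℕ) + (t : ℕ) := by omega
    rwa [harg] at h1
  · apply Finset.prod_le_prod
    · intro j _
      have := (g (t.succAbove j)).isLt
      have := j.isLt
      exact hnn _ _ (by omega) (by omega) (by omega) (by omega)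
    · intro j _
      rcases lt_or_ge ((j : ℕ)) ((t : ℕ)) with h | h
      · rw [coe_succAbove_lt t j h]
        have := (g (t.succAbove j)).isLt
        have := j.isLt
        exact hcol ((j : ℕ) + 1) _ (by omega) (by omega) (by omega) (by omega)
      · rw [coe_succAbove_ge t j h]
  · apply Finset.prod_nonneg
    intro j _
    have := (g (t.succAbove j)).isLt
    have := j.isLt
    exact hnn _ _ (by omega) (by omega) (by omega) (by omega)
  · exact hnn _ _ (by omega) (by omega) (by omega) (by omega)

open Classical in
lemma step (N m : ℕ) (hm : 1 ≤ m) (u : ℕ → ℕ → ℝ)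
    (hnn : ∀ i j, 1 ≤ i → i ≤ N+1 → 1 ≤ j → j ≤ m → 0 ≤ u i j)
    (hcol : ∀ i j, 1 ≤ i → i + 1 ≤ N+1 → 1 ≤ j → j ≤ m → u (i+1) j ≤ u i j)
    (hdiag : ∀ i j, 1 ≤ i → i + 1 ≤ N+1 → 2 ≤ j → j ≤ m → u (i+1) (j-1) ≤ u i j) :
    (∑ x ∈ range (N+m), hv (N+1) u x) *
      (∑ c ∈ univ.filter (fun c : Fin N → Fin m => Monotone c),
        ∏ j : Fin N, u ((j : ℕ) + 2) ((c j : ℕ) + 1))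
    ≤ ((N+1 : ℕ) : ℝ) * ∑ g ∈ univ.filter (fun g : Fin (N+1) → Fin m => Monotone g),
        ∏ i : Fin (N+1), u ((i : ℕ) + 1) ((g i : ℕ) + 1) := by
  calc (∑ x ∈ range (N+m), hv (N+1) u x) *
      (∑ c ∈ univ.filter (fun c : Fin N → Fin m => Monotone c),
        ∏ j : Fin N, u ((j : ℕ) + 2) ((c j : ℕ) + 1))
      = ∑ p ∈ (range (N+m)) ×ˢ (univ.filter (fun c : Fin N → Fin m => Monotone c)),
          hv (N+1) u p.1 * ∏ j : Fin N, u ((j : ℕ) + 2) ((p.2 j : ℕ) + 1) := by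
        rw [Finset.sum_mul_sum, ← Finset.sum_product']
    _ = ∑ p ∈ (univ.filter (fun g : Fin (N+1) → Fin m => Monotone g)) ×ˢ
          (univ : Finset (Fin (N+1))),
          hv (N+1) u ((p.1 p.2 : ℕ) + (p.2 : ℕ)) *
            ∏ j : Fin N, u ((j : ℕ) + 2) (((p.1 ∘ p.2.succAbove) j : ℕ) + 1) := by
        rw [bij N m hm (fun x c => hv (N+1) u x * ∏ j : Fin N, u ((j : ℕ) + 2) ((c j : ℕ) + 1))]
    _ ≤ ∑ p ∈ (univ.filter (fun g : Fin (N+1) → Fin m => Monotone g)) ×ˢ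
          (univ : Finset (Fin (N+1))),
          ∏ i : Fin (N+1), u ((i : ℕ) + 1) ((p.1 i : ℕ) + 1) := by
        apply Finset.sum_le_sum
        rintro ⟨g, t⟩ hp
        exact pointwise N m hm u hnn hcol hdiag g t
    _ = ((N+1 : ℕ) : ℝ) * ∑ g ∈ univ.filter (fun g : Fin (N+1) → Fin m => Monotone g),
          ∏ i : Fin (N+1), u ((i : ℕ) + 1) ((g i : ℕ) + 1) := by
        rw [Finset.sum_product]
        simp only [Finset.sum_const, Finset.card_univ, Fintype.card_fin, nsmul_eq_mul]
        rw [Finset.mul_sum]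


open Classical in
lemma key (m : ℕ) (hm : 1 ≤ m) :
    ∀ N (u : ℕ → ℕ → ℝ),
      (∀ i j, 1 ≤ i → i ≤ N → 1 ≤ j → j ≤ m → 0 ≤ u i j) →
      (∀ i j, 1 ≤ i → i + 1 ≤ N → 1 ≤ j → j ≤ m → u (i+1) j ≤ u i j) →
      (∀ i j, 1 ≤ i → i + 1 ≤ N → 2 ≤ j → j ≤ m → u (i+1) (j-1) ≤ u i j) →
      ∏ t ∈ range N, (∑ x ∈ Ico t (N + m - 1), hv N u x)
        ≤ (N.factorial : ℝ) * ∑ g ∈ univ.filter (fun g : Fin N → Fin m => Monotone g),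
            ∏ i : Fin N, u ((i : ℕ) + 1) ((g i : ℕ) + 1) := by
  intro N
  induction N with
  | zero =>
    intro u _ _ _
    rw [range_zero, prod_empty, Nat.factorial_zero, Nat.cast_one, one_mul]
    have hne : (univ.filter (fun g : Fin 0 → Fin m => Monotone g)).Nonempty := by
      refine ⟨fun i => i.elim0, ?_⟩
      simp only [mem_filter, mem_univ, true_and]
      intro a
      exact a.elim0
    have h1 : ∑ g ∈ univ.filter (fun g : Fin 0 → Fin m => Monotone g),
        ∏ i : Fin 0, u ((i : ℕ) + 1) ((g i : ℕ) + 1)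
        = ((univ.filter (fun g : Fin 0 → Fin m => Monotone g)).card : ℝ) := by
      simp
    rw [h1]
    exact_mod_cast Nat.one_le_iff_ne_zero.2 (by
      have := hne.card_pos
      omega)
  | succ N ih =>
    intro u hnn hcol hdiag
    have hnn' : ∀ i j, 1 ≤ i → i ≤ N → 1 ≤ j → j ≤ m → 0 ≤ (fun i j => u (i+1) j) i j := by
      intro i j h1 h2 h3 h4
      exact hnn (i+1) j (by omega) (by omega) h3 h4
    have hcol' : ∀ i j, 1 ≤ i → i + 1 ≤ N → 1 ≤ j → j ≤ m →
        (fun i j => u (i+1) j) (i+1) j ≤ (fun i j => u (i+1) j) i j := by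
      intro i j h1 h2 h3 h4
      exact hcol (i+1) j (by omega) (by omega) h3 h4
    have hdiag' : ∀ i j, 1 ≤ i → i + 1 ≤ N → 2 ≤ j → j ≤ m →
        (fun i j => u (i+1) j) (i+1) (j-1) ≤ (fun i j => u (i+1) j) i j := by
      intro i j h1 h2 h3 h4
      exact hdiag (i+1) j (by omega) (by omega) h3 h4
    have IH := ih (fun i j => u (i+1) j) hnn' hcol' hdiag'
    have hstep := step N m hm u hnn hcol hdiag
    -- shift identity for sums of hook values
    have hveq : ∀ x, hv N (fun i j => u (i+1) j) x = hv (N+1) u (x+1) := by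
      intro x
      unfold hv
      by_cases h : x + 1 ≤ N
      · rw [if_pos h, if_pos (by omega)]
      · rw [if_neg h, if_neg (by omega)]
        congr 1
        omega
    have hshift : ∀ t, ∑ x ∈ Ico (t+1) (N+1+m-1), hv (N+1) u x
        = ∑ x ∈ Ico t (N+m-1), hv N (fun i j => u (i+1) j) x := by
      intro t
      rw [Finset.sum_Ico_eq_sum_range, Finset.sum_Ico_eq_sum_range]
      have hcnt : N+1+m-1 - (t+1) = N+m-1 - t := by omega
      rw [hcnt]
      apply Finset.sum_congr rfl
      intro i _
      rw [hveq]
      congr 1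
      omega
    have hF0nn : 0 ≤ ∑ x ∈ Ico 0 (N+1+m-1), hv (N+1) u x := by
      apply Finset.sum_nonneg
      intro x hx
      rw [mem_Ico] at hx
      exact hv_nonneg (N+1) m u hnn hm (by omega) x (by omega)
    calc ∏ t ∈ range (N+1), (∑ x ∈ Ico t (N+1+m-1), hv (N+1) u x)
        = (∏ t ∈ range N, (∑ x ∈ Ico (t+1) (N+1+m-1), hv (N+1) u x)) *
            (∑ x ∈ Ico 0 (N+1+m-1), hv (N+1) u x) := Finset.prod_range_succ' _ _
      _ = (∏ t ∈ range N, (∑ x ∈ Ico t (N+m-1), hv N (fun i j => u (i+1) j) x)) *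
            (∑ x ∈ Ico 0 (N+1+m-1), hv (N+1) u x) := by
          congr 1
          exact Finset.prod_congr rfl (fun t _ => hshift t)
      _ ≤ ((N.factorial : ℝ) * ∑ c ∈ univ.filter (fun c : Fin N → Fin m => Monotone c),
            ∏ j : Fin N, u ((j : ℕ) + 2) ((c j : ℕ) + 1)) *
            (∑ x ∈ Ico 0 (N+1+m-1), hv (N+1) u x) := by
          apply mul_le_mul_of_nonneg_right _ hF0nn
          exact IH
      _ = (N.factorial : ℝ) * ((∑ x ∈ range (N+m), hv (N+1) u x) *
            (∑ c ∈ univ.filter (fun c : Fin N → Fin m => Monotone c),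
              ∏ j : Fin N, u ((j : ℕ) + 2) ((c j : ℕ) + 1))) := by
          have : Ico 0 (N+1+m-1) = range (N+m) := by
            rw [← Nat.Ico_zero_eq_range]
            congr 1
            omega
          rw [this]
          ring
      _ ≤ (N.factorial : ℝ) * (((N+1 : ℕ) : ℝ) *
            ∑ g ∈ univ.filter (fun g : Fin (N+1) → Fin m => Monotone g),
              ∏ i : Fin (N+1), u ((i : ℕ) + 1) ((g i : ℕ) + 1)) := by
          apply mul_le_mul_of_nonneg_left hstep
          positivity
      _ = ((N+1).factorial : ℝ) * ∑ g ∈ univ.filter (fun g : Fin (N+1) → Fin m => Monotone g),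
            ∏ i : Fin (N+1), u ((i : ℕ) + 1) ((g i : ℕ) + 1) := by
          rw [Nat.factorial_succ]
          push_cast
          ring


end MMLB

open MMLB


open Classical in
/-- The lower multiplicity bound for ideals of maximal minors: for positive reals
`u i j` (`1 ≤ i ≤ r+1`, `1 ≤ j ≤ m`) decreasing down each column and with
`u i j ≥ u (i+1) (j-1)`, the Herzog–Trung multiplicity sum over weakly increasing
tuples `1 ≤ j₁ ≤ ⋯ ≤ j_{r+1} ≤ m` (encoded by monotone maps `Fin (r+1) → Fin m`)
satisfies
`(r+1)! · Σ ∏ᵢ u i jᵢ ≥ ∏_{k=0}^{r} (Σ_{i=r+1-k}^{r+1} u i 1 + Σ_{j=2}^{m} u (r+1) j)`. -/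
theorem maximal_minors_lower_bound (r m : ℕ) (hm : 1 ≤ m) (u : ℕ → ℕ → ℝ)
    (hpos : ∀ i j, 1 ≤ i → i ≤ r + 1 → 1 ≤ j → j ≤ m → 0 < u i j)
    (hcol : ∀ i j, 1 ≤ i → i ≤ r → 1 ≤ j → j ≤ m → u (i + 1) j ≤ u i j)
    (hdiag : ∀ i j, 1 ≤ i → i ≤ r → 2 ≤ j → j ≤ m → u (i + 1) (j - 1) ≤ u i j) :
    ((r + 1).factorial : ℝ) *
        ∑ f ∈ Finset.univ.filter (fun f : Fin (r + 1) → Fin m => Monotone f),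
          ∏ i : Fin (r + 1), u ((i : ℕ) + 1) ((f i : ℕ) + 1) ≥
      ∏ k ∈ Finset.range (r + 1),
        ((∑ i ∈ Finset.Icc (r + 1 - k) (r + 1), u i 1) +
          ∑ j ∈ Finset.Icc 2 m, u (r + 1) j) := by
  have hk := key m hm (r+1) u
    (fun i j h1 h2 h3 h4 => (hpos i j h1 h2 h3 h4).le)
    (fun i j h1 h2 h3 h4 => hcol i j h1 (by omega) h3 h4)
    (fun i j h1 h2 h3 h4 => hdiag i j h1 (by omega) h3 h4)
  rw [ge_iff_le]
  refine le_trans (le_of_eq ?_) hk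
  -- identify the stated product with the hook-sum product
  rw [← Finset.prod_range_reflect (fun t => ∑ x ∈ Ico t (r + 1 + m - 1), hv (r+1) u x) (r+1)]
  apply Finset.prod_congr rfl
  intro k hk'
  rw [mem_range] at hk'
  have hk2 : r + 1 - 1 - k = r - k := by omega
  rw [hk2]
  have hsplit : ∑ x ∈ Ico (r - k) (r + 1 + m - 1), hv (r+1) u x
      = (∑ x ∈ Ico (r - k) (r + 1), hv (r+1) u x)
        + ∑ x ∈ Ico (r + 1) (r + 1 + m - 1), hv (r+1) u x := by
    rw [Finset.sum_Ico_consecutive]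
    · omega
    · omega
  rw [hsplit]
  congr 1
  · -- column part
    rw [show Finset.Icc (r + 1 - k) (r + 1) = Finset.Ico (r + 1 - k) (r + 2) by
      rw [← Finset.Ico_add_one_right_eq_Icc]; rfl]
    rw [Finset.sum_Ico_eq_sum_range, Finset.sum_Ico_eq_sum_range]
    have hc1 : r + 2 - (r + 1 - k) = k + 1 := by omega
    have hc2 : r + 1 - (r - k) = k + 1 := by omega
    rw [hc1, hc2]
    apply Finset.sum_congr rfl
    intro i hi
    rw [mem_range] at hi
    unfold hv
    rw [if_pos (by omega)]
    congr 1
    omega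
  · -- bottom row part
    rw [show Finset.Icc 2 m = Finset.Ico 2 (m+1) by rw [Finset.Ico_add_one_right_eq_Icc]]
    rw [Finset.sum_Ico_eq_sum_range, Finset.sum_Ico_eq_sum_range]
    have hc1 : m + 1 - 2 = m - 1 := by omega
    have hc2 : r + 1 + m - 1 - (r + 1) = m - 1 := by omega
    rw [hc1, hc2]
    apply Finset.sum_congr rfl
    intro i hi
    rw [mem_range] at hi
    unfold hv
    rw [if_neg (by omega)]
    congr 1
    omega
end

section
/- Fix integers r ≥ 1 and m ≥ 1 and positive real numbers u_{i,j} for 1 ≤ i ≤ r+1 and 1 ≤ j ≤ m such that u_{1,j} ≥ u_{2,j} ≥ ⋯ ≥ u_{r+1,j} for every j, and u_{i,j} ≥ u_{i+1,j-1} for all 1 ≤ i ≤ r and 2 ≤ j ≤ m. Then equality (r+1)! · Σ_{1 ≤ j_1 ≤ ⋯ ≤ j_{r+1} ≤ m} ∏_{i=1}^{r+1} u_{i,j_i} = ∏_{k=0}^{r} ( Σ_{j=1}^{m-1} u_{1,j} + Σ_{i=1}^{k+1} u_{i,m} ) holds if and only if all the u_{i,j} are equal to one another. -/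
open Finset

namespace MaxMinorsAux

lemma sum_Icc_one (f : ℕ → ℝ) : ∀ s : ℕ, ∑ i ∈ Icc 1 s, f i = ∑ i ∈ range s, f (i + 1)
  | 0 => by simp
  | (s + 1) => by
    rw [Finset.sum_Icc_succ_top (Nat.succ_le_succ (Nat.zero_le s)), Finset.sum_range_succ,
      sum_Icc_one f s]

noncomputable def Mc (u : ℕ → ℕ → ℝ) (k t : ℕ) : ℝ :=
  (∑ j ∈ Finset.Icc 1 (t - 1), u 1 j) + ∑ i ∈ Finset.Icc 1 (k + 1), u i t

noncomputable def Fp (u : ℕ → ℕ → ℝ) (n t : ℕ) : ℝ := ∏ k ∈ range n, Mc u k t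

noncomputable def Ts (u : ℕ → ℕ → ℝ) : ℕ → ℕ → ℝ
  | 0, _ => 1
  | (n + 1), t => ∑ s ∈ range t, u (n + 1) (s + 1) * Ts u n (s + 1)

section

variable {r m : ℕ} {u : ℕ → ℕ → ℝ}

/-- column-decreasing, iterated. -/
lemma ucol_le (hcol : ∀ i j, 1 ≤ i → i ≤ r → 1 ≤ j → j ≤ m → u (i + 1) j ≤ u i j)
    {i i' j : ℕ} (hi : 1 ≤ i) (hii : i ≤ i') (hi' : i' ≤ r + 1) (hj : 1 ≤ j) (hjm : j ≤ m) :
    u i' j ≤ u i j := by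
  obtain ⟨d, rfl⟩ : ∃ d, i' = i + d := ⟨i' - i, by omega⟩
  clear hii
  induction d with
  | zero => simp
  | succ d ih =>
    have h1 : u (i + d + 1) j ≤ u (i + d) j := hcol (i + d) j (by omega) (by omega) hj hjm
    have h2 : u (i + d) j ≤ u i j := ih (by omega)
    calc u (i + (d + 1)) j = u (i + d + 1) j := by ring_nf
    _ ≤ u (i + d) j := h1
    _ ≤ u i j := h2

lemma Mc_pos (hpos : ∀ i j, 1 ≤ i → i ≤ r + 1 → 1 ≤ j → j ≤ m → 0 < u i j)
    {k t : ℕ} (hk : k ≤ r) (ht : 1 ≤ t) (htm : t ≤ m) : 0 < Mc u k t := by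
  have h1 : 0 ≤ ∑ j ∈ Finset.Icc 1 (t - 1), u 1 j := by
    refine Finset.sum_nonneg fun j hj => ?_
    rw [Finset.mem_Icc] at hj
    exact (hpos 1 j le_rfl (by omega) hj.1 (by omega)).le
  have h2 : 0 < ∑ i ∈ Finset.Icc 1 (k + 1), u i t := by
    refine Finset.sum_pos (fun i hi => ?_) ⟨1, by simp⟩
    rw [Finset.mem_Icc] at hi
    exact hpos i t hi.1 (by omega) ht htm
  unfold Mc; linarith

lemma Fp_pos (hpos : ∀ i j, 1 ≤ i → i ≤ r + 1 → 1 ≤ j → j ≤ m → 0 < u i j)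
    {n t : ℕ} (hn : n ≤ r + 1) (ht : 1 ≤ t) (htm : t ≤ m) : 0 < Fp u n t := by
  refine Finset.prod_pos fun k hk => Mc_pos hpos ?_ ht htm
  rw [Finset.mem_range] at hk; omega

lemma Mc_zero (s : ℕ) : Mc u 0 (s + 1) = ∑ j ∈ Finset.Icc 1 (s + 1), u 1 j := by
  rw [Mc, Finset.sum_Icc_succ_top (Nat.succ_le_succ (Nat.zero_le s))]
  simp

/-- diagonal comparison of the `M`'s. -/
lemma Mc_succ_le (hdiag : ∀ i j, 1 ≤ i → i ≤ r → 2 ≤ j → j ≤ m → u (i + 1) (j - 1) ≤ u i j)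
    {k t : ℕ} (hk : k + 2 ≤ r + 1) (ht : 1 ≤ t) (htm : t + 1 ≤ m) :
    Mc u (k + 1) t ≤ Mc u k (t + 1) := by
  obtain ⟨s, rfl⟩ : ∃ s, t = s + 1 := ⟨t - 1, by omega⟩
  have e1 : Mc u (k + 1) (s + 1)
      = (∑ j ∈ range s, u 1 (j + 1)) + (∑ i ∈ range (k + 1), u (i + 2) (s + 1) + u 1 (s + 1)) := by
    rw [Mc, show s + 1 - 1 = s from rfl, sum_Icc_one (fun j => u 1 j),
      sum_Icc_one (fun i => u i (s + 1)), Finset.sum_range_succ' (fun i => u (i + 1) (s + 1))]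
  have e2 : Mc u k (s + 2)
      = (∑ j ∈ range s, u 1 (j + 1)) + (u 1 (s + 1) + ∑ i ∈ range (k + 1), u (i + 1) (s + 2)) := by
    rw [Mc, show s + 2 - 1 = s + 1 from rfl,
      Finset.sum_Icc_succ_top (Nat.succ_le_succ (Nat.zero_le s)) (fun j => u 1 j),
      sum_Icc_one (fun j => u 1 j), sum_Icc_one (fun i => u i (s + 2))]
    ring
  rw [e1, e2]
  have h : ∑ i ∈ range (k + 1), u (i + 2) (s + 1) ≤ ∑ i ∈ range (k + 1), u (i + 1) (s + 2) := by
    refine Finset.sum_le_sum fun i hi => ?_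
    rw [Finset.mem_range] at hi
    have := hdiag (i + 1) (s + 2) (by omega) (by omega) (by omega) (by omega)
    simpa using this
  linarith

/-- top minus bottom `M` identity. -/
lemma Mc_top (n t : ℕ) : Mc u n t + u 1 t = Mc u 0 t + ∑ i ∈ Finset.Icc 1 (n + 1), u i t := by
  rw [Mc, Mc]
  simp only [Finset.Icc_self, Finset.sum_singleton]
  ring

lemma colsum_ge (hpos : ∀ i j, 1 ≤ i → i ≤ r + 1 → 1 ≤ j → j ≤ m → 0 < u i j)
    (hcol : ∀ i j, 1 ≤ i → i ≤ r → 1 ≤ j → j ≤ m → u (i + 1) j ≤ u i j)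
    {n t : ℕ} (hn : n + 1 ≤ r + 1) (ht : 1 ≤ t) (htm : t ≤ m) :
    ((n : ℝ) + 1) * u (n + 1) t ≤ ∑ i ∈ Finset.Icc 1 (n + 1), u i t := by
  rw [sum_Icc_one]
  have h : ∀ i ∈ range (n + 1), u (n + 1) t ≤ u (i + 1) t := fun i hi => by
    rw [Finset.mem_range] at hi
    exact ucol_le hcol (by omega) (by omega) hn ht htm
  have := Finset.sum_le_sum h
  rw [Finset.sum_const, Finset.card_range, nsmul_eq_mul] at this
  calc ((n : ℝ) + 1) * u (n + 1) t = ((n + 1 : ℕ) : ℝ) * u (n + 1) t := by push_cast; ring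
  _ ≤ _ := this

end


section
variable {r m : ℕ} {u : ℕ → ℕ → ℝ} {n t : ℕ}

variable (hpos : ∀ i j, 1 ≤ i → i ≤ r + 1 → 1 ≤ j → j ≤ m → 0 < u i j)
variable (hcol : ∀ i j, 1 ≤ i → i ≤ r → 1 ≤ j → j ≤ m → u (i + 1) j ≤ u i j)
variable (hdiag : ∀ i j, 1 ≤ i → i ≤ r → 2 ≤ j → j ≤ m → u (i + 1) (j - 1) ≤ u i j)

include hpos hdiag in
/-- key product comparison: `F_{n+1}(t) ≤ M_0(t) ⬝ F_n(t+1)`. -/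
lemma Fp_le (hn : n + 1 ≤ r + 1) (ht : 1 ≤ t) (htm : t + 1 ≤ m) :
    Fp u (n + 1) t ≤ Mc u 0 t * Fp u n (t + 1) := by
  rw [Fp, Finset.prod_range_succ' (fun k => Mc u k t), mul_comm]
  refine mul_le_mul_of_nonneg_left ?_ (Mc_pos (k := 0) (t := t) hpos (by omega) ht (by omega)).le
  refine Finset.prod_le_prod (fun k hk => ?_) (fun k hk => ?_)
  · rw [Finset.mem_range] at hk
    exact (Mc_pos (k := k + 1) (t := t) hpos (by omega) ht (by omega)).le
  · rw [Finset.mem_range] at hk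
    exact Mc_succ_le hdiag (by omega) ht htm

/-- the bracket identity: `F_{n+1}(t+1) - M_0(t) ⬝ F_n(t+1) = F_n(t+1) ⬝ Σ_{i=1}^{n+1} u i (t+1)`. -/
lemma bracket_eq (ht : 1 ≤ t) :
    Fp u (n + 1) (t + 1) - Mc u 0 t * Fp u n (t + 1)
      = Fp u n (t + 1) * ∑ i ∈ Finset.Icc 1 (n + 1), u i (t + 1) := by
  obtain ⟨s, rfl⟩ : ∃ s, t = s + 1 := ⟨t - 1, by omega⟩
  have h0 : Mc u 0 (s + 1) = Mc u 0 (s + 1 + 1) - u 1 (s + 1 + 1) := by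
    rw [Mc_zero, Mc_zero, Finset.sum_Icc_succ_top (by omega : 1 ≤ s + 2) (fun j => u 1 j)]
    ring
  have htop := Mc_top (u := u) n (s + 1 + 1)
  have hsplit : Fp u (n + 1) (s + 1 + 1) = Fp u n (s + 1 + 1) * Mc u n (s + 1 + 1) :=
    Finset.prod_range_succ _ _
  rw [hsplit, h0]
  have : Mc u n (s + 1 + 1) = Mc u 0 (s + 1 + 1) + ∑ i ∈ Finset.Icc 1 (n + 1), u i (s + 1 + 1)
      - u 1 (s + 1 + 1) := by linarith
  rw [this]; ring

include hpos hcol hdiag in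
/-- the step inequality: `(n+1) u_{n+1,t+1} F_n(t+1) ≤ F_{n+1}(t+1) - F_{n+1}(t)`. -/
lemma step_ineq (hn : n + 1 ≤ r + 1) (ht : 1 ≤ t) (htm : t + 1 ≤ m) :
    ((n : ℝ) + 1) * u (n + 1) (t + 1) * Fp u n (t + 1) ≤ Fp u (n + 1) (t + 1) - Fp u (n + 1) t := by
  have hP : 0 < Fp u n (t + 1) := Fp_pos hpos (by omega) (by omega) htm
  have h1 := Fp_le hpos hdiag (n := n) (t := t) hn ht htm
  have h2 := bracket_eq (u := u) (n := n) (t := t) ht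
  have h3 := colsum_ge hpos hcol (n := n) (t := t + 1) hn (by omega) htm
  have h4 : Fp u n (t + 1) * (((n : ℝ) + 1) * u (n + 1) (t + 1))
      ≤ Fp u n (t + 1) * ∑ i ∈ Finset.Icc 1 (n + 1), u i (t + 1) :=
    mul_le_mul_of_nonneg_left h3 hP.le
  nlinarith [h4, h1, h2]

include hpos hcol in
/-- the base inequality at `t = 1`. -/
lemma base_ineq (hn : n + 1 ≤ r + 1) (hm : 1 ≤ m) :
    ((n : ℝ) + 1) * u (n + 1) 1 * Fp u n 1 ≤ Fp u (n + 1) 1 := by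
  have hP : 0 < Fp u n 1 := Fp_pos hpos (by omega) le_rfl hm
  have htop : Mc u n 1 = ∑ i ∈ Finset.Icc 1 (n + 1), u i 1 := by
    rw [Mc]; simp
  have h3 := colsum_ge hpos hcol (n := n) (t := 1) hn le_rfl hm
  have hsplit : Fp u (n + 1) 1 = Fp u n 1 * Mc u n 1 := Finset.prod_range_succ _ _
  rw [hsplit, htop]
  calc ((n : ℝ) + 1) * u (n + 1) 1 * Fp u n 1
      ≤ (∑ i ∈ Finset.Icc 1 (n + 1), u i 1) * Fp u n 1 :=
        mul_le_mul_of_nonneg_right h3 hP.le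
  _ = Fp u n 1 * ∑ i ∈ Finset.Icc 1 (n + 1), u i 1 := by ring

/-- shifted `F` (so that telescoping starts at `0`). -/
noncomputable def FF (u : ℕ → ℕ → ℝ) (n : ℕ) : ℕ → ℝ := fun t => if t = 0 then 0 else Fp u n t

include hpos hcol hdiag in
lemma step_FF (hm : 1 ≤ m) (hn : n + 1 ≤ r + 1) {s : ℕ} (hs : s < m) :
    ((n : ℝ) + 1) * u (n + 1) (s + 1) * Fp u n (s + 1)
      ≤ FF u (n + 1) (s + 1) - FF u (n + 1) s := by
  cases s with
  | zero =>
    simpa [FF] using base_ineq hpos hcol (n := n) hn hm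
  | succ t =>
    have := step_ineq hpos hcol hdiag (n := n) (t := t + 1) hn (by omega) (by omega)
    simpa [FF] using this

include hpos hcol hdiag in
/-- telescoped inequality. -/
lemma telescope (hn : n + 1 ≤ r + 1) {t : ℕ} (ht : 1 ≤ t) (htm : t ≤ m) :
    ∑ s ∈ range t, ((n : ℝ) + 1) * u (n + 1) (s + 1) * Fp u n (s + 1) ≤ Fp u (n + 1) t := by
  have h1 : ∑ s ∈ range t, ((n : ℝ) + 1) * u (n + 1) (s + 1) * Fp u n (s + 1)
      ≤ ∑ s ∈ range t, (FF u (n + 1) (s + 1) - FF u (n + 1) s) := by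
    refine Finset.sum_le_sum fun s hs => ?_
    rw [Finset.mem_range] at hs
    exact step_FF hpos hcol hdiag (by omega) hn (by omega)
  rw [Finset.sum_range_sub (FF u (n + 1))] at h1
  have : FF u (n + 1) t - FF u (n + 1) 0 = Fp u (n + 1) t := by
    have ht' : t ≠ 0 := by omega
    simp [FF, ht']
  rwa [this] at h1

include hpos hcol hdiag in
/-- the main inequality. -/
lemma main_ineq : ∀ n, n ≤ r + 1 → ∀ t, 1 ≤ t → t ≤ m →
    ((n.factorial : ℝ)) * Ts u n t ≤ Fp u n t := by
  intro n
  induction n with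
  | zero => intro _ t _ _; simp [Ts, Fp]
  | succ n ih =>
    intro hn t ht htm
    have e : ((n + 1).factorial : ℝ) * Ts u (n + 1) t
        = ∑ s ∈ range t, ((n : ℝ) + 1) * u (n + 1) (s + 1) * ((n.factorial : ℝ) * Ts u n (s + 1)) := by
      rw [Ts, Finset.mul_sum]
      refine Finset.sum_congr rfl fun s hs => ?_
      rw [Nat.factorial_succ]; push_cast; ring
    rw [e]
    have h1 : ∑ s ∈ range t, ((n : ℝ) + 1) * u (n + 1) (s + 1) * ((n.factorial : ℝ) * Ts u n (s + 1))
        ≤ ∑ s ∈ range t, ((n : ℝ) + 1) * u (n + 1) (s + 1) * Fp u n (s + 1) := by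
      refine Finset.sum_le_sum fun s hs => ?_
      rw [Finset.mem_range] at hs
      have hu : 0 < u (n + 1) (s + 1) := hpos (n + 1) (s + 1) (by omega) hn (by omega) (by omega)
      have := ih (by omega) (s + 1) (by omega) (by omega)
      have hc : (0 : ℝ) ≤ ((n : ℝ) + 1) * u (n + 1) (s + 1) := by positivity
      exact mul_le_mul_of_nonneg_left this hc
    exact h1.trans (telescope hpos hcol hdiag hn ht htm)

end


lemma sum_forces {ι : Type*} (s : Finset ι) (f g : ι → ℝ) (hle : ∀ i ∈ s, f i ≤ g i)
    (heq : ∑ i ∈ s, f i = ∑ i ∈ s, g i) : ∀ i ∈ s, f i = g i := by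
  intro i hi
  have h0 : ∑ i ∈ s, (g i - f i) = 0 := by rw [Finset.sum_sub_distrib, heq]; ring
  have := (Finset.sum_eq_zero_iff_of_nonneg (fun j hj => by linarith [hle j hj])).mp h0 i hi
  linarith

lemma prod_forces {ι : Type*} (s : Finset ι) (f g : ι → ℝ) (hpos : ∀ i ∈ s, 0 < f i)
    (hle : ∀ i ∈ s, f i ≤ g i) (heq : ∏ i ∈ s, f i = ∏ i ∈ s, g i) : ∀ i ∈ s, f i = g i := by
  intro i hi
  by_contra hne
  exact absurd heq
    (ne_of_lt (Finset.prod_lt_prod hpos hle ⟨i, hi, lt_of_le_of_ne (hle i hi) hne⟩))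


section
variable {r m : ℕ} {u : ℕ → ℕ → ℝ}

variable (hpos : ∀ i j, 1 ≤ i → i ≤ r + 1 → 1 ≤ j → j ≤ m → 0 < u i j)
variable (hcol : ∀ i j, 1 ≤ i → i ≤ r → 1 ≤ j → j ≤ m → u (i + 1) j ≤ u i j)
variable (hdiag : ∀ i j, 1 ≤ i → i ≤ r → 2 ≤ j → j ≤ m → u (i + 1) (j - 1) ≤ u i j)

include hpos hcol in
/-- from a tight column sum, all entries of the column agree. -/
lemma column_forces {t : ℕ} (ht : 1 ≤ t) (htm : t ≤ m)
    (h : ∑ i ∈ Finset.Icc 1 (r + 1), u i t = ((r : ℝ) + 1) * u (r + 1) t) :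
    ∀ i, 1 ≤ i → i ≤ r + 1 → u i t = u (r + 1) t := by
  have h2 : ∑ i ∈ range (r + 1), u (r + 1) t = ∑ i ∈ range (r + 1), u (i + 1) t := by
    rw [← sum_Icc_one (fun i => u i t), h, Finset.sum_const, Finset.card_range, nsmul_eq_mul]
    push_cast; ring
  have h3 := sum_forces (range (r + 1)) _ _
    (fun i hi => by
      rw [Finset.mem_range] at hi
      exact ucol_le hcol (by omega) (by omega : i + 1 ≤ r + 1) le_rfl ht htm) h2
  intro i hi hir
  have := h3 (i - 1) (by rw [Finset.mem_range]; omega)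
  rw [show i - 1 + 1 = i by omega] at this
  exact this.symm

include hpos hcol hdiag in
/-- the heart of the equality analysis. -/
lemma equality_forces (hr : 1 ≤ r) (hm : 1 ≤ m)
    (heq : (((r + 1).factorial : ℝ)) * Ts u (r + 1) m = Fp u (r + 1) m) :
    ∀ i j, 1 ≤ i → i ≤ r + 1 → 1 ≤ j → j ≤ m → u i j = u 1 1 := by
  have hab : ∀ s ∈ range m, ((r : ℝ) + 1) * u (r + 1) (s + 1) * ((r.factorial : ℝ) * Ts u r (s + 1))
      ≤ ((r : ℝ) + 1) * u (r + 1) (s + 1) * Fp u r (s + 1) := by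
    intro s hs
    rw [Finset.mem_range] at hs
    have hu : 0 < u (r + 1) (s + 1) := hpos _ _ (by omega) le_rfl (by omega) (by omega)
    have := main_ineq hpos hcol hdiag r (by omega) (s + 1) (by omega) (by omega)
    have hc : (0 : ℝ) ≤ ((r : ℝ) + 1) * u (r + 1) (s + 1) := by positivity
    exact mul_le_mul_of_nonneg_left this hc
  have hbd : ∀ s ∈ range m, ((r : ℝ) + 1) * u (r + 1) (s + 1) * Fp u r (s + 1)
      ≤ FF u (r + 1) (s + 1) - FF u (r + 1) s := by
    intro s hs
    exact step_FF hpos hcol hdiag hm le_rfl (Finset.mem_range.mp hs)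
  have hsa : ∑ s ∈ range m, ((r : ℝ) + 1) * u (r + 1) (s + 1) * ((r.factorial : ℝ) * Ts u r (s + 1))
      = ((r + 1).factorial : ℝ) * Ts u (r + 1) m := by
    rw [show Ts u (r + 1) m = ∑ s ∈ range m, u (r + 1) (s + 1) * Ts u r (s + 1) from rfl,
      Finset.mul_sum]
    refine Finset.sum_congr rfl fun s hs => ?_
    rw [Nat.factorial_succ]; push_cast; ring
  have hsd : ∑ s ∈ range m, (FF u (r + 1) (s + 1) - FF u (r + 1) s) = Fp u (r + 1) m := by
    rw [Finset.sum_range_sub (FF u (r + 1))]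
    have hm' : m ≠ 0 := by omega
    simp [FF, hm']
  have had := sum_forces (range m) _ _ (fun s hs => (hab s hs).trans (hbd s hs))
    (by rw [hsa, hsd, heq])
  have hbdq : ∀ s ∈ range m, ((r : ℝ) + 1) * u (r + 1) (s + 1) * Fp u r (s + 1)
      = FF u (r + 1) (s + 1) - FF u (r + 1) s := by
    intro s hs
    refine le_antisymm (hbd s hs) ?_
    rw [← had s hs]
    exact hab s hs
  -- column equalities and links
  have hcol_eq : ∀ s, s < m → ∀ i, 1 ≤ i → i ≤ r + 1 → u i (s + 1) = u (r + 1) (s + 1) := by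
    intro s hs
    cases s with
    | zero =>
      have h0 := hbdq 0 (Finset.mem_range.mpr hm)
      have hd0 : FF u (r + 1) (0 + 1) - FF u (r + 1) 0 = Fp u (r + 1) 1 := by simp [FF]
      rw [hd0] at h0
      have hsplit : Fp u (r + 1) 1 = Fp u r 1 * Mc u r 1 := Finset.prod_range_succ _ _
      have hP : 0 < Fp u r 1 := Fp_pos hpos (by omega) le_rfl hm
      have hMc : Mc u r 1 = ((r : ℝ) + 1) * u (r + 1) 1 := by
        have := h0.symm
        rw [hsplit] at this
        field_simp at this
        nlinarith [this, hP]
      have hMc2 : Mc u r 1 = ∑ i ∈ Finset.Icc 1 (r + 1), u i 1 := by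
        rw [Mc]; simp
      exact column_forces hpos hcol le_rfl hm (by rw [← hMc2, hMc])
    | succ t =>
      have hs2 : t + 2 ≤ m := hs
      have hmem : t + 1 ∈ range m := Finset.mem_range.mpr hs
      have h0 := hbdq (t + 1) hmem
      have hd0 : FF u (r + 1) (t + 1 + 1) - FF u (r + 1) (t + 1)
          = Fp u (r + 1) (t + 2) - Fp u (r + 1) (t + 1) := by simp [FF]
      rw [hd0] at h0
      have hP : 0 < Fp u r (t + 2) := Fp_pos hpos (by omega) (by omega) (by omega)
      have h1 := Fp_le hpos hdiag (n := r) (t := t + 1) le_rfl (by omega) (by omega)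
      have h2 := bracket_eq (u := u) (n := r) (t := t + 1) (by omega)
      have h3 := colsum_ge hpos hcol (n := r) (t := t + 2) le_rfl (by omega) (by omega)
      have e1 : ((r : ℝ) + 1) * u (r + 1) (t + 2) * Fp u r (t + 2)
          ≤ Fp u r (t + 2) * ∑ i ∈ Finset.Icc 1 (r + 1), u i (t + 2) := by
        have := mul_le_mul_of_nonneg_left h3 hP.le
        calc ((r : ℝ) + 1) * u (r + 1) (t + 2) * Fp u r (t + 2)
            = Fp u r (t + 2) * (((r : ℝ) + 1) * u (r + 1) (t + 2)) := by ring
          _ ≤ _ := this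
      -- equality of the sum bound
      have eqn1 : Fp u r (t + 2) * ∑ i ∈ Finset.Icc 1 (r + 1), u i (t + 2)
          = Fp u r (t + 2) * (((r : ℝ) + 1) * u (r + 1) (t + 2)) := by
        nlinarith [e1, h1, h2, h0]
      have hsum : ∑ i ∈ Finset.Icc 1 (r + 1), u i (t + 2) = ((r : ℝ) + 1) * u (r + 1) (t + 2) :=
        mul_left_cancel₀ (ne_of_gt hP) eqn1
      exact column_forces hpos hcol (t := t + 2) (by omega) (by omega) hsum
  have hlink : ∀ t, t + 2 ≤ m → u 2 (t + 1) = u 1 (t + 2) := by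
    intro t hs2
    have hmem : t + 1 ∈ range m := Finset.mem_range.mpr (by omega)
    have h0 := hbdq (t + 1) hmem
    have hd0 : FF u (r + 1) (t + 1 + 1) - FF u (r + 1) (t + 1)
        = Fp u (r + 1) (t + 2) - Fp u (r + 1) (t + 1) := by simp [FF]
    rw [hd0] at h0
    have hP : 0 < Fp u r (t + 2) := Fp_pos hpos (by omega) (by omega) (by omega)
    have h1 := Fp_le hpos hdiag (n := r) (t := t + 1) le_rfl (by omega) (by omega)
    have h2 := bracket_eq (u := u) (n := r) (t := t + 1) (by omega)
    have h3 := colsum_ge hpos hcol (n := r) (t := t + 2) le_rfl (by omega) (by omega)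
    -- equality of the product bound
    have eqn2 : Fp u (r + 1) (t + 1) = Mc u 0 (t + 1) * Fp u r (t + 2) := by
      nlinarith [h1, h2, h3, h0, hP]
    -- peel off the common factor
    have hsplit : Fp u (r + 1) (t + 1)
        = (∏ k ∈ range r, Mc u (k + 1) (t + 1)) * Mc u 0 (t + 1) :=
      Finset.prod_range_succ' _ _
    have hM0 : 0 < Mc u 0 (t + 1) := Mc_pos hpos (by omega) (by omega) (by omega)
    have eqn3 : ∏ k ∈ range r, Mc u (k + 1) (t + 1) = ∏ k ∈ range r, Mc u k (t + 2) := by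
      have : (∏ k ∈ range r, Mc u (k + 1) (t + 1)) * Mc u 0 (t + 1)
          = (∏ k ∈ range r, Mc u k (t + 2)) * Mc u 0 (t + 1) := by
        rw [← hsplit, eqn2, Fp]; ring
      exact mul_right_cancel₀ (ne_of_gt hM0) this
    have hforce := prod_forces (range r) _ _
      (fun k hk => Mc_pos (k := k + 1) (t := t + 1) hpos
        (by rw [Finset.mem_range] at hk; omega) (by omega) (by omega))
      (fun k hk => Mc_succ_le hdiag
        (by rw [Finset.mem_range] at hk; omega) (by omega) (by omega))
      eqn3
    have hk0 := hforce 0 (Finset.mem_range.mpr hr)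
    -- expand `Mc u 1 (t+1) = Mc u 0 (t+2)`
    have hL : Mc u 1 (t + 1)
        = (∑ j ∈ Finset.Icc 1 t, u 1 j) + (u 1 (t + 1) + u 2 (t + 1)) := by
      rw [Mc, show t + 1 - 1 = t from rfl, sum_Icc_one (fun i => u i (t + 1)),
        Finset.sum_range_succ, Finset.sum_range_one]
    have hR : Mc u 0 (t + 2)
        = (∑ j ∈ Finset.Icc 1 t, u 1 j) + (u 1 (t + 1) + u 1 (t + 2)) := by
      rw [show t + 2 = t + 1 + 1 from rfl, Mc_zero,
        Finset.sum_Icc_succ_top (by omega : 1 ≤ t + 1 + 1) (fun j => u 1 j),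
        Finset.sum_Icc_succ_top (by omega : 1 ≤ t + 1) (fun j => u 1 j)]
      ring
    rw [hL, hR] at hk0
    linarith
  -- conclusion
  have row1 : ∀ j, 1 ≤ j → j ≤ m → u 1 j = u 1 1 := by
    intro j hj
    induction j, hj using Nat.le_induction with
    | base => intro _; rfl
    | succ j hj ih =>
      intro hjm
      have h2j : u 1 (j + 1) = u 2 j := by
        obtain ⟨t, rfl⟩ : ∃ t, j = t + 1 := ⟨j - 1, by omega⟩
        exact (hlink t (by omega)).symm
      rw [h2j]
      have := hcol_eq (j - 1) (by omega) 2 (by omega) (by omega)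
      rw [show j - 1 + 1 = j by omega] at this
      rw [this]
      have h1j := hcol_eq (j - 1) (by omega) 1 (by omega) (by omega)
      rw [show j - 1 + 1 = j by omega] at h1j
      rw [← h1j]
      exact ih (by omega)
  intro i j hi hir hj hjm
  have hcj := hcol_eq (j - 1) (by omega) i hi hir
  rw [show j - 1 + 1 = j by omega] at hcj
  have h1j := hcol_eq (j - 1) (by omega) 1 (by omega) (by omega)
  rw [show j - 1 + 1 = j by omega] at h1j
  rw [hcj, ← h1j]
  exact row1 j hj hjm

end


lemma monotone_snoc_iff {n M : ℕ} (g : Fin n → Fin M) (a : Fin M) :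
    Monotone (Fin.snoc g a : Fin (n + 1) → Fin M) ↔ Monotone g ∧ ∀ i, g i ≤ a := by
  constructor
  · intro h
    refine ⟨fun i j hij => ?_, fun i => ?_⟩
    · have := h (Fin.castSucc_le_castSucc_iff.mpr hij)
      simpa [Fin.snoc_castSucc] using this
    · have := h (Fin.le_last i.castSucc)
      simpa [Fin.snoc_castSucc, Fin.snoc_last] using this
  · rintro ⟨hg, ha⟩ i j hij
    rcases Fin.eq_castSucc_or_eq_last j with ⟨jj, rfl⟩ | rfl
    · rcases Fin.eq_castSucc_or_eq_last i with ⟨ii, rfl⟩ | rfl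
      · simpa [Fin.snoc_castSucc] using hg (Fin.castSucc_le_castSucc_iff.mp hij)
      · exact absurd hij (not_le.mpr (Fin.castSucc_lt_last jj))
    · rcases Fin.eq_castSucc_or_eq_last i with ⟨ii, rfl⟩ | rfl
      · simp only [Fin.snoc_castSucc, Fin.snoc_last]
        exact ha ii
      · simp

lemma bridge {m : ℕ} (u : ℕ → ℕ → ℝ) :
    ∀ n t, t ≤ m → ∀ s : Finset (Fin n → Fin m),
      (∀ f, f ∈ s ↔ (Monotone f ∧ ∀ i, (f i : ℕ) < t)) →
      ∑ f ∈ s, ∏ i : Fin n, u ((i : ℕ) + 1) ((f i : ℕ) + 1) = Ts u n t := by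
  classical
  intro n
  induction n with
  | zero =>
    intro t ht s hs
    haveI : Unique (Fin 0 → Fin m) := ⟨⟨fun i => i.elim0⟩, fun f => funext fun i => i.elim0⟩
    have hs' : s = {default} := by
      ext f
      simp only [Finset.mem_singleton]
      rw [hs f]
      constructor
      · intro _; exact Subsingleton.elim f default
      · intro _; exact ⟨fun i _ _ => i.elim0, fun i => i.elim0⟩
    rw [hs', Finset.sum_singleton]
    simp [Ts]
  | succ n ih =>
    intro t htm s hs
    have hs2 : s = Finset.univ.filter
        (fun f : Fin (n + 1) → Fin m => Monotone f ∧ ∀ i, (f i : ℕ) < t) := by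
      ext f; simp [hs f]
    subst hs2
    -- snoc equivalence
    let e : Fin m × (Fin n → Fin m) ≃ (Fin (n + 1) → Fin m) :=
    { toFun := fun p => Fin.snoc p.2 p.1
      invFun := fun f => (f (Fin.last n), Fin.init f)
      left_inv := fun p => by
        refine Prod.ext ?_ ?_ <;> simp [Fin.init_snoc, Fin.snoc_last]
      right_inv := fun f => by
        simp [Fin.snoc_init_self] }
    rw [Finset.sum_filter]
    rw [← Equiv.sum_comp e (fun f : Fin (n + 1) → Fin m =>
      if (Monotone f ∧ ∀ i, (f i : ℕ) < t) then ∏ i : Fin (n + 1), u ((i : ℕ) + 1) ((f i : ℕ) + 1)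
      else 0)]
    rw [Fintype.sum_prod_type]
    have inner : ∀ a : Fin m,
        (∑ g : Fin n → Fin m,
          if (Monotone (Fin.snoc g a : Fin (n + 1) → Fin m)
              ∧ ∀ i : Fin (n + 1), ((Fin.snoc g a : Fin (n + 1) → Fin m) i : ℕ) < t)
          then ∏ i : Fin (n + 1), u ((i : ℕ) + 1)
            (((Fin.snoc g a : Fin (n + 1) → Fin m) i : ℕ) + 1) else 0)
        = if (a : ℕ) < t then u (n + 1) ((a : ℕ) + 1) * Ts u n ((a : ℕ) + 1) else 0 := by
      intro a
      have hW : ∀ g : Fin n → Fin m,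
          ∏ i : Fin (n + 1), u ((i : ℕ) + 1) (((Fin.snoc g a : Fin (n + 1) → Fin m) i : ℕ) + 1)
          = u (n + 1) ((a : ℕ) + 1) * ∏ i : Fin n, u ((i : ℕ) + 1) ((g i : ℕ) + 1) := by
        intro g
        rw [Fin.prod_univ_castSucc]
        simp only [Fin.snoc_castSucc, Fin.snoc_last, Fin.coe_castSucc, Fin.val_last]
        exact mul_comm _ _
      by_cases hat : (a : ℕ) < t
      · rw [if_pos hat]
        have hiff : ∀ g : Fin n → Fin m,
            (Monotone (Fin.snoc g a : Fin (n + 1) → Fin m)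
              ∧ ∀ i : Fin (n + 1), ((Fin.snoc g a : Fin (n + 1) → Fin m) i : ℕ) < t)
            ↔ (Monotone g ∧ ∀ i : Fin n, (g i : ℕ) < (a : ℕ) + 1) := by
          intro g
          rw [monotone_snoc_iff]
          constructor
          · rintro ⟨⟨hg, hga⟩, _⟩
            exact ⟨hg, fun i => by have := hga i; rw [Fin.le_def] at this; omega⟩
          · rintro ⟨hg, hb⟩
            refine ⟨⟨hg, fun i => by rw [Fin.le_def]; have := hb i; omega⟩, fun i => ?_⟩
            rcases Fin.eq_castSucc_or_eq_last i with ⟨ii, rfl⟩ | rfl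
            · rw [Fin.snoc_castSucc]
              have := hb ii; omega
            · rw [Fin.snoc_last]
              exact hat
        calc (∑ g : Fin n → Fin m,
            if (Monotone (Fin.snoc g a : Fin (n + 1) → Fin m)
                ∧ ∀ i : Fin (n + 1), ((Fin.snoc g a : Fin (n + 1) → Fin m) i : ℕ) < t)
            then ∏ i : Fin (n + 1), u ((i : ℕ) + 1)
              (((Fin.snoc g a : Fin (n + 1) → Fin m) i : ℕ) + 1) else 0)
            = ∑ g : Fin n → Fin m,
              if (Monotone g ∧ ∀ i : Fin n, (g i : ℕ) < (a : ℕ) + 1)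
              then u (n + 1) ((a : ℕ) + 1) * ∏ i : Fin n, u ((i : ℕ) + 1) ((g i : ℕ) + 1) else 0 := by
              refine Finset.sum_congr rfl fun g _ => ?_
              rw [if_congr (hiff g) (hW g) rfl]
          _ = u (n + 1) ((a : ℕ) + 1) * ∑ g : Fin n → Fin m,
              if (Monotone g ∧ ∀ i : Fin n, (g i : ℕ) < (a : ℕ) + 1)
              then ∏ i : Fin n, u ((i : ℕ) + 1) ((g i : ℕ) + 1) else 0 := by
              rw [Finset.mul_sum]
              refine Finset.sum_congr rfl fun g _ => ?_
              rw [mul_ite, mul_zero]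
          _ = u (n + 1) ((a : ℕ) + 1) * Ts u n ((a : ℕ) + 1) := by
              rw [← Finset.sum_filter]
              rw [ih ((a : ℕ) + 1) a.isLt _ (fun g => by simp)]
      · rw [if_neg hat]
        refine Finset.sum_eq_zero fun g _ => ?_
        rw [if_neg]
        rintro ⟨_, hval⟩
        exact hat (by simpa [Fin.snoc_last] using hval (Fin.last n))
    have he : ∀ (x : Fin m) (y : Fin n → Fin m), e (x, y) = Fin.snoc y x := fun _ _ => rfl
    simp only [he]
    rw [Finset.sum_congr rfl fun a _ => inner a]
    rw [Fin.sum_univ_eq_sum_range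
      (fun j => if j < t then u (n + 1) (j + 1) * Ts u n (j + 1) else 0) m]
    rw [← Finset.sum_filter]
    have hfil : (range m).filter (fun j => j < t) = range t := by
      ext j
      simp only [Finset.mem_filter, Finset.mem_range]
      omega
    rw [hfil]
    rfl


noncomputable def Ap (n t : ℕ) : ℝ := ∏ k ∈ range n, ((t : ℝ) + (k : ℝ))

lemma Ap_zero (n : ℕ) : Ap (n + 1) 0 = 0 :=
  Finset.prod_eq_zero (Finset.mem_range.mpr (Nat.succ_pos n)) (by simp)

lemma Ap_succ (n t : ℕ) : Ap (n + 1) (t + 1) = Ap n (t + 1) * (((t : ℝ) + 1) + (n : ℝ)) := by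
  rw [Ap, Finset.prod_range_succ, Ap]
  push_cast
  ring_nf

lemma Ap_shift (n t : ℕ) : Ap (n + 1) t = (t : ℝ) * Ap n (t + 1) := by
  rw [Ap, Finset.prod_range_succ' (fun k => (t : ℝ) + (k : ℝ))]
  rw [Ap]
  have : ∀ k ∈ range n, (t : ℝ) + ((k : ℕ) + 1 : ℕ) = ((t + 1 : ℕ) : ℝ) + (k : ℝ) := by
    intro k _; push_cast; ring
  rw [Finset.prod_congr rfl this]
  push_cast
  ring

lemma Ap_key (n : ℕ) : ∀ t : ℕ, ((n : ℝ) + 1) * ∑ s ∈ range t, Ap n (s + 1) = Ap (n + 1) t := by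
  intro t
  induction t with
  | zero => simp [Ap_zero]
  | succ t ih =>
    rw [Finset.sum_range_succ, mul_add, ih, Ap_succ, Ap_shift]
    push_cast
    ring

section
variable {r m : ℕ} {u : ℕ → ℕ → ℝ} {c : ℝ}

lemma Mc_const (hc : ∀ i j, 1 ≤ i → i ≤ r + 1 → 1 ≤ j → j ≤ m → u i j = c)
    {k t : ℕ} (hk : k ≤ r) (ht : 1 ≤ t) (htm : t ≤ m) :
    Mc u k t = ((t : ℝ) + (k : ℝ)) * c := by
  have h1 : ∑ j ∈ Finset.Icc 1 (t - 1), u 1 j = ((t - 1 : ℕ) : ℝ) * c := by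
    have e : ∑ j ∈ Finset.Icc 1 (t - 1), u 1 j = ∑ _j ∈ Finset.Icc 1 (t - 1), c :=
      Finset.sum_congr rfl (fun j hj => by
        rw [Finset.mem_Icc] at hj
        exact hc 1 j le_rfl (by omega) hj.1 (by omega))
    rw [e, Finset.sum_const, Nat.card_Icc, nsmul_eq_mul]
    norm_num
  have h2 : ∑ i ∈ Finset.Icc 1 (k + 1), u i t = ((k + 1 : ℕ) : ℝ) * c := by
    have e : ∑ i ∈ Finset.Icc 1 (k + 1), u i t = ∑ _i ∈ Finset.Icc 1 (k + 1), c :=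
      Finset.sum_congr rfl (fun i hi => by
        rw [Finset.mem_Icc] at hi
        exact hc i t hi.1 (by omega) ht htm)
    rw [e, Finset.sum_const, Nat.card_Icc, nsmul_eq_mul]
    norm_num
  rw [Mc, h1, h2]
  have h3 : ((t - 1 : ℕ) : ℝ) = (t : ℝ) - 1 := by
    have ht' : (1 : ℕ) ≤ t := ht
    push_cast [Nat.cast_sub ht']
    ring
  rw [h3]
  push_cast
  ring

lemma Fp_const (hc : ∀ i j, 1 ≤ i → i ≤ r + 1 → 1 ≤ j → j ≤ m → u i j = c)
    {n t : ℕ} (hn : n ≤ r + 1) (ht : 1 ≤ t) (htm : t ≤ m) :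
    Fp u n t = c ^ n * Ap n t := by
  have e : ∏ k ∈ range n, Mc u k t = ∏ k ∈ range n, ((t : ℝ) + (k : ℝ)) * c :=
    Finset.prod_congr rfl (fun k hk => by
      rw [Finset.mem_range] at hk
      exact Mc_const hc (by omega) ht htm)
  rw [Fp, e, Finset.prod_mul_distrib, Finset.prod_const, Finset.card_range, Ap]
  ring

lemma Ts_const (hc : ∀ i j, 1 ≤ i → i ≤ r + 1 → 1 ≤ j → j ≤ m → u i j = c) :
    ∀ n, n ≤ r + 1 → ∀ t, t ≤ m → ((n.factorial : ℝ)) * Ts u n t = c ^ n * Ap n t := by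
  intro n
  induction n with
  | zero => intro _ t _; simp [Ts, Ap]
  | succ n ih =>
    intro hn t htm
    have e : ((n + 1).factorial : ℝ) * Ts u (n + 1) t
        = ∑ s ∈ range t, ((n : ℝ) + 1) * c * ((n.factorial : ℝ) * Ts u n (s + 1)) := by
      rw [show Ts u (n + 1) t = ∑ s ∈ range t, u (n + 1) (s + 1) * Ts u n (s + 1) from rfl,
        Finset.mul_sum]
      refine Finset.sum_congr rfl fun s hs => ?_
      rw [Finset.mem_range] at hs
      rw [hc (n + 1) (s + 1) (by omega) hn (by omega) (by omega), Nat.factorial_succ]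
      push_cast
      ring
    have e2 : ∑ s ∈ range t, ((n : ℝ) + 1) * c * ((n.factorial : ℝ) * Ts u n (s + 1))
        = ∑ s ∈ range t, ((n : ℝ) + 1) * c * (c ^ n * Ap n (s + 1)) :=
      Finset.sum_congr rfl (fun s hs => by
        rw [Finset.mem_range] at hs
        rw [ih (by omega) (s + 1) (by omega)])
    have e3 : ∑ s ∈ range t, ((n : ℝ) + 1) * c * (c ^ n * Ap n (s + 1))
        = c ^ (n + 1) * (((n : ℝ) + 1) * ∑ s ∈ range t, Ap n (s + 1)) := by
      calc ∑ s ∈ range t, ((n : ℝ) + 1) * c * (c ^ n * Ap n (s + 1))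
          = ∑ s ∈ range t, c ^ (n + 1) * (((n : ℝ) + 1) * Ap n (s + 1)) :=
            Finset.sum_congr rfl fun s _ => by ring
        _ = c ^ (n + 1) * ∑ s ∈ range t, ((n : ℝ) + 1) * Ap n (s + 1) :=
            (Finset.mul_sum _ _ _).symm
        _ = c ^ (n + 1) * (((n : ℝ) + 1) * ∑ s ∈ range t, Ap n (s + 1)) := by
            rw [← Finset.mul_sum]
    rw [e, e2, e3, Ap_key]

end

end MaxMinorsAux

open Classical in
/-- Equality analysis for the upper bound in the maximal-minors theorem:
for `r ≥ 1`, `m ≥ 1` and positive reals `u i j` (`1 ≤ i ≤ r+1`, `1 ≤ j ≤ m`)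
decreasing down each column and with `u i j ≥ u (i+1) (j-1)`, equality
`(r+1)! · Σ_{1 ≤ j₁ ≤ ⋯ ≤ j_{r+1} ≤ m} ∏ᵢ u i jᵢ
  = ∏_{k=0}^{r} (Σ_{j=1}^{m-1} u 1 j + Σ_{i=1}^{k+1} u i m)`
holds if and only if all the `u i j` are equal to one another. -/
theorem maximal_minors_upper_bound_equality (r m : ℕ) (hr : 1 ≤ r) (hm : 1 ≤ m)
    (u : ℕ → ℕ → ℝ)
    (hpos : ∀ i j, 1 ≤ i → i ≤ r + 1 → 1 ≤ j → j ≤ m → 0 < u i j)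
    (hcol : ∀ i j, 1 ≤ i → i ≤ r → 1 ≤ j → j ≤ m → u (i + 1) j ≤ u i j)
    (hdiag : ∀ i j, 1 ≤ i → i ≤ r → 2 ≤ j → j ≤ m → u (i + 1) (j - 1) ≤ u i j) :
    ((r + 1).factorial : ℝ) *
        ∑ f ∈ Finset.univ.filter (fun f : Fin (r + 1) → Fin m => Monotone f),
          ∏ i : Fin (r + 1), u ((i : ℕ) + 1) ((f i : ℕ) + 1) =
      ∏ k ∈ Finset.range (r + 1),
        ((∑ j ∈ Finset.Icc 1 (m - 1), u 1 j) + ∑ i ∈ Finset.Icc 1 (k + 1), u i m) ↔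
    ∀ i j i' j', 1 ≤ i → i ≤ r + 1 → 1 ≤ j → j ≤ m →
      1 ≤ i' → i' ≤ r + 1 → 1 ≤ j' → j' ≤ m → u i j = u i' j' := by
  have hT := MaxMinorsAux.bridge u (r + 1) m le_rfl
    (Finset.univ.filter (fun f : Fin (r + 1) → Fin m => Monotone f))
    (fun f => by
      simp only [Finset.mem_filter, Finset.mem_univ, true_and]
      exact ⟨fun h => ⟨h, fun i => (f i).isLt⟩, fun h => h.1⟩)
  have hF : (∏ k ∈ Finset.range (r + 1),
      ((∑ j ∈ Finset.Icc 1 (m - 1), u 1 j) + ∑ i ∈ Finset.Icc 1 (k + 1), u i m))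
      = MaxMinorsAux.Fp u (r + 1) m := rfl
  rw [hT, hF]
  constructor
  · intro heq i j i' j' hi hir hj hjm hi' hi'r hj' hj'm
    have h := MaxMinorsAux.equality_forces hpos hcol hdiag hr hm heq
    rw [h i j hi hir hj hjm, h i' j' hi' hi'r hj' hj'm]
  · intro hall
    have hc : ∀ i j, 1 ≤ i → i ≤ r + 1 → 1 ≤ j → j ≤ m → u i j = u 1 1 :=
      fun i j hi hir hj hjm => hall i j 1 1 hi hir hj hjm le_rfl (by omega) le_rfl hm
    rw [MaxMinorsAux.Ts_const hc (r + 1) le_rfl m le_rfl,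
      MaxMinorsAux.Fp_const hc le_rfl hm le_rfl]
end

section
/- Fix integers r ≥ 1 and m ≥ 1 and positive real numbers u_{i,j} for 1 ≤ i ≤ r+1 and 1 ≤ j ≤ m such that u_{1,j} ≥ u_{2,j} ≥ ⋯ ≥ u_{r+1,j} for every j, and u_{i,j} ≥ u_{i+1,j-1} for all 1 ≤ i ≤ r and 2 ≤ j ≤ m. Then equality (r+1)! · Σ_{1 ≤ j_1 ≤ ⋯ ≤ j_{r+1} ≤ m} ∏_{i=1}^{r+1} u_{i,j_i} = ∏_{k=0}^{r} ( Σ_{i=r+1-k}^{r+1} u_{i,1} + Σ_{j=2}^{m} u_{r+1,j} ) holds if and only if all the u_{i,j} are equal to one another. -/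
open Finset

lemma mml_card_filter_lt (k a : ℕ) (ha : a ≤ k) :
    (Finset.univ.filter fun t : Fin k => (t : ℕ) < a).card = a := by
  have : (Finset.univ.filter fun t : Fin k => (t : ℕ) < a)
      = Finset.attachFin (Finset.range a) (fun x hx => lt_of_lt_of_le (Finset.mem_range.1 hx) ha) := by
    ext t
    simp [Finset.mem_attachFin]
  rw [this, Finset.card_attachFin, Finset.card_range]

lemma mml_downward {k : ℕ} {S : Finset (Fin k)}
    (hS : ∀ a b : Fin k, a ≤ b → b ∈ S → a ∈ S) (t : Fin k) :
    (t : ℕ) < S.card ↔ t ∈ S := by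
  constructor
  · intro h
    by_contra ht
    have hsub : S ⊆ Finset.univ.filter fun x : Fin k => (x : ℕ) < (t : ℕ) := by
      intro x hx
      simp only [Finset.mem_filter, Finset.mem_univ, true_and]
      by_contra hle
      exact ht (hS t x (Fin.le_def.2 (by omega)) hx)
    have := Finset.card_le_card hsub
    rw [mml_card_filter_lt k t (by omega)] at this
    omega
  · intro h
    have hsub : (Finset.univ.filter fun x : Fin k => (x : ℕ) < (t : ℕ) + 1) ⊆ S := by
      intro x hx
      simp only [Finset.mem_filter, Finset.mem_univ, true_and] at hx
      exact hS x t (Fin.le_def.2 (by omega)) h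
    have := Finset.card_le_card hsub
    rw [mml_card_filter_lt k ((t : ℕ) + 1) (by omega)] at this
    omega

open Classical in
noncomputable def mmlT (n m : ℕ) (u : ℕ → ℕ → ℝ) : ℝ :=
  ∑ f ∈ Finset.univ.filter (fun f : Fin n → Fin m => Monotone f),
    ∏ i : Fin n, u ((i : ℕ) + 1) ((f i : ℕ) + 1)

noncomputable def mmlR (n m : ℕ) (u : ℕ → ℕ → ℝ) : ℝ :=
  ∏ k ∈ Finset.range n,
    ((∑ i ∈ Finset.Icc (n - k) n, u i 1) + ∑ j ∈ Finset.Icc 2 m, u n j)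

-- the count of chain entries below the inserted column
def mmlS {k m : ℕ} (j : ℕ) (g : Fin k → Fin m) : ℕ :=
  (Finset.univ.filter fun t : Fin k => (g t : ℕ) + 2 ≤ j).card

lemma mmlS_le {k m : ℕ} (j : ℕ) (g : Fin k → Fin m) : mmlS j g ≤ k := by
  have := Finset.card_filter_le Finset.univ (fun t : Fin k => (g t : ℕ) + 2 ≤ j)
  simpa [mmlS] using this

lemma mmlS_lt_iff {k m : ℕ} {j : ℕ} {g : Fin k → Fin m} (hg : Monotone g) (t : Fin k) :
    (t : ℕ) < mmlS j g ↔ (g t : ℕ) + 2 ≤ j := by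
  have := mml_downward (S := Finset.univ.filter fun t : Fin k => (g t : ℕ) + 2 ≤ j)
    (fun a b hab hb => by
      simp only [Finset.mem_filter, Finset.mem_univ, true_and] at hb ⊢
      have := hg hab
      rw [Fin.le_def] at this
      omega) t
  simpa [mmlS] using this

def mmlV {k m : ℕ} (j : ℕ) (g : Fin k → Fin m) (t : Fin (k + 1)) : ℕ :=
  if h1 : (t : ℕ) < mmlS j g then (g ⟨(t : ℕ), lt_of_lt_of_le h1 (mmlS_le j g)⟩ : ℕ) + 1
  else if h2 : (t : ℕ) = mmlS j g then j - 1
  else (g ⟨(t : ℕ) - 1, by have h3 := t.isLt; have h4 := mmlS_le (m := m) j g; omega⟩ : ℕ)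

lemma mmlV_of_lt {k m : ℕ} {j : ℕ} {g : Fin k → Fin m} {t : Fin (k + 1)}
    (h : (t : ℕ) < mmlS j g) :
    mmlV j g t = (g ⟨(t : ℕ), lt_of_lt_of_le h (mmlS_le j g)⟩ : ℕ) + 1 := dif_pos h

lemma mmlV_of_eq {k m : ℕ} {j : ℕ} {g : Fin k → Fin m} {t : Fin (k + 1)}
    (h : (t : ℕ) = mmlS j g) : mmlV j g t = j - 1 := by
  rw [mmlV, dif_neg (by omega), dif_pos h]

lemma mmlV_of_gt {k m : ℕ} {j : ℕ} {g : Fin k → Fin m} {t : Fin (k + 1)}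
    (h : mmlS j g < (t : ℕ)) (ht : (t : ℕ) - 1 < k) :
    mmlV j g t = (g ⟨(t : ℕ) - 1, ht⟩ : ℕ) := by
  rw [mmlV, dif_neg (by omega), dif_neg (by omega)]

def mmlPhiFun {k m : ℕ} (hm : 0 < m) (j : ℕ) (g : Fin k → Fin m) : Fin (k + 1) → Fin m :=
  fun t => ⟨min (mmlV j g t) (m - 1), by omega⟩

def mmlP {k m : ℕ} (j : ℕ) (g : Fin k → Fin m) : Fin (k + 1) :=
  ⟨mmlS j g, Nat.lt_succ_of_le (mmlS_le j g)⟩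

def mmlPsiFun {k m : ℕ} (p : Fin (k + 1)) (f : Fin (k + 1) → Fin m) : Fin k → Fin m :=
  fun t =>
    if (t : ℕ) < (p : ℕ) then
      ⟨(f ⟨(t : ℕ), by omega⟩ : ℕ) - 1, by have := (f ⟨(t : ℕ), by omega⟩).isLt; omega⟩
    else f ⟨(t : ℕ) + 1, by omega⟩

lemma mmlV_lt {k m : ℕ} {j : ℕ} {g : Fin k → Fin m} (hj2 : 2 ≤ j) (hjm : j ≤ m)
    (hg : Monotone g) (t : Fin (k + 1)) : mmlV j g t < m := by
  rcases lt_trichotomy ((t : ℕ)) (mmlS j g) with h | h | h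
  · rw [mmlV_of_lt h]
    have := (mmlS_lt_iff hg ⟨(t : ℕ), lt_of_lt_of_le h (mmlS_le j g)⟩).1 h
    omega
  · rw [mmlV_of_eq h]; omega
  · have ht : (t : ℕ) - 1 < k := by
      have := t.isLt; have := mmlS_le (m := m) j g; omega
    rw [mmlV_of_gt h ht]
    exact (g ⟨(t : ℕ) - 1, ht⟩).isLt

lemma mmlPhiFun_val {k m : ℕ} (hm : 0 < m) {j : ℕ} {g : Fin k → Fin m} (hj2 : 2 ≤ j)
    (hjm : j ≤ m) (hg : Monotone g) (t : Fin (k + 1)) :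
    (mmlPhiFun hm j g t : ℕ) = mmlV j g t := by
  have := mmlV_lt hj2 hjm hg t
  simp only [mmlPhiFun]
  omega

lemma mmlV_mono {k m : ℕ} {j : ℕ} {g : Fin k → Fin m} (hj2 : 2 ≤ j) (hjm : j ≤ m)
    (hg : Monotone g) {a b : Fin (k + 1)} (hab : (a : ℕ) ≤ (b : ℕ)) :
    mmlV j g a ≤ mmlV j g b := by
  have hSle := mmlS_le (m := m) j g
  have ha := a.isLt
  have hb := b.isLt
  rcases lt_trichotomy ((a : ℕ)) (mmlS j g) with h1 | h1 | h1 <;>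
    rcases lt_trichotomy ((b : ℕ)) (mmlS j g) with h2 | h2 | h2
  · rw [mmlV_of_lt h1, mmlV_of_lt h2]
    have := hg (a := ⟨(a : ℕ), lt_of_lt_of_le h1 hSle⟩) (b := ⟨(b : ℕ), lt_of_lt_of_le h2 hSle⟩)
      (Fin.mk_le_mk.2 hab)
    rw [Fin.le_def] at this
    exact Nat.succ_le_succ this
  · rw [mmlV_of_lt h1, mmlV_of_eq h2]
    have := (mmlS_lt_iff hg ⟨(a : ℕ), lt_of_lt_of_le h1 hSle⟩).1 h1
    omega
  · have hb1 : (b : ℕ) - 1 < k := by omega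
    rw [mmlV_of_lt h1, mmlV_of_gt h2 hb1]
    have hmem := (mmlS_lt_iff hg ⟨(a : ℕ), lt_of_lt_of_le h1 hSle⟩).1 h1
    have hnot : ¬ ((b : ℕ) - 1 < mmlS j g) := by omega
    have hnmem := (mmlS_lt_iff hg ⟨(b : ℕ) - 1, hb1⟩).not.1 hnot
    omega
  · omega
  · rw [mmlV_of_eq h1, mmlV_of_eq h2]
  · have hb1 : (b : ℕ) - 1 < k := by omega
    rw [mmlV_of_eq h1, mmlV_of_gt h2 hb1]
    have hnot : ¬ ((b : ℕ) - 1 < mmlS j g) := by omega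
    have hnmem := (mmlS_lt_iff hg ⟨(b : ℕ) - 1, hb1⟩).not.1 hnot
    omega
  · omega
  · omega
  · have ha1 : (a : ℕ) - 1 < k := by omega
    have hb1 : (b : ℕ) - 1 < k := by omega
    rw [mmlV_of_gt h1 ha1, mmlV_of_gt h2 hb1]
    exact Fin.le_def.1 (hg (a := ⟨(a : ℕ) - 1, ha1⟩) (b := ⟨(b : ℕ) - 1, hb1⟩)
      (Fin.mk_le_mk.2 (by omega)))

lemma mmlPhiFun_mono {k m : ℕ} (hm : 0 < m) {j : ℕ} {g : Fin k → Fin m} (hj2 : 2 ≤ j)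
    (hjm : j ≤ m) (hg : Monotone g) : Monotone (mmlPhiFun hm j g) := by
  intro a b hab
  rw [Fin.le_def, mmlPhiFun_val hm hj2 hjm hg, mmlPhiFun_val hm hj2 hjm hg]
  exact mmlV_mono hj2 hjm hg (Fin.le_def.1 hab)

lemma mmlPhiFun_zero {k m : ℕ} (hm : 0 < m) {j : ℕ} {g : Fin k → Fin m} (hj2 : 2 ≤ j)
    (hjm : j ≤ m) (hg : Monotone g) : 1 ≤ (mmlPhiFun hm j g 0 : ℕ) := by
  rw [mmlPhiFun_val hm hj2 hjm hg]
  rcases Nat.eq_zero_or_pos (mmlS j g) with h | h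
  · rw [mmlV_of_eq (by simp [h])]; omega
  · rw [mmlV_of_lt (by simp [h])]; omega

lemma mmlPsiFun_of_lt {k m : ℕ} (p : Fin (k + 1)) (f : Fin (k + 1) → Fin m) (t : Fin k)
    (h : (t : ℕ) < (p : ℕ)) :
    (mmlPsiFun p f t : ℕ) = (f ⟨(t : ℕ), Nat.lt_succ_of_lt t.isLt⟩ : ℕ) - 1 := by
  simp only [mmlPsiFun, if_pos h]

lemma mmlPsiFun_of_ge {k m : ℕ} (p : Fin (k + 1)) (f : Fin (k + 1) → Fin m) (t : Fin k)
    (h : (p : ℕ) ≤ (t : ℕ)) :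
    mmlPsiFun p f t = f ⟨(t : ℕ) + 1, Nat.succ_lt_succ t.isLt⟩ := by
  simp only [mmlPsiFun]
  rw [if_neg (Nat.not_lt.2 h)]

lemma mmlPsiFun_mono {k m : ℕ} {p : Fin (k + 1)} {f : Fin (k + 1) → Fin m}
    (hf : Monotone f) : Monotone (mmlPsiFun p f) := by
  intro a b hab
  rw [Fin.le_def] at hab ⊢
  rcases lt_or_ge ((a : ℕ)) ((p : ℕ)) with h1 | h1 <;>
    rcases lt_or_ge ((b : ℕ)) ((p : ℕ)) with h2 | h2
  · rw [mmlPsiFun_of_lt p f a h1, mmlPsiFun_of_lt p f b h2]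
    have := Fin.le_def.1 (hf (a := ⟨(a : ℕ), Nat.lt_succ_of_lt a.isLt⟩)
      (b := ⟨(b : ℕ), Nat.lt_succ_of_lt b.isLt⟩) (Fin.mk_le_mk.2 hab))
    omega
  · rw [mmlPsiFun_of_lt p f a h1, mmlPsiFun_of_ge p f b h2]
    have := Fin.le_def.1 (hf (a := ⟨(a : ℕ), Nat.lt_succ_of_lt a.isLt⟩)
      (b := ⟨(b : ℕ) + 1, Nat.succ_lt_succ b.isLt⟩) (Fin.mk_le_mk.2 (by omega)))
    omega
  · omega
  · rw [mmlPsiFun_of_ge p f a h1, mmlPsiFun_of_ge p f b h2]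
    exact Fin.le_def.1 (hf (a := ⟨(a : ℕ) + 1, Nat.succ_lt_succ a.isLt⟩)
      (b := ⟨(b : ℕ) + 1, Nat.succ_lt_succ b.isLt⟩) (Fin.mk_le_mk.2 (by omega)))

lemma mml_left_inv_fun {k m : ℕ} (hm : 0 < m) {j : ℕ} {g : Fin k → Fin m} (hj2 : 2 ≤ j)
    (hjm : j ≤ m) (hg : Monotone g) :
    mmlPsiFun (mmlP j g) (mmlPhiFun hm j g) = g := by
  funext t
  apply Fin.ext
  rcases lt_or_ge ((t : ℕ)) (mmlS j g) with h | h
  · rw [mmlPsiFun_of_lt _ _ _ (by simpa [mmlP] using h)]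
    rw [mmlPhiFun_val hm hj2 hjm hg]
    rw [mmlV_of_lt (t := ⟨(t : ℕ), Nat.lt_succ_of_lt t.isLt⟩) (by simpa using h)]
    have : (⟨(t : ℕ), lt_of_lt_of_le (by simpa using h) (mmlS_le j g)⟩ : Fin k) = t :=
      Fin.ext rfl
    rw [this]
    omega
  · rw [mmlPsiFun_of_ge _ _ _ (by simpa [mmlP] using h)]
    rw [mmlPhiFun_val hm hj2 hjm hg]
    have ht : ((⟨(t : ℕ) + 1, Nat.succ_lt_succ t.isLt⟩ : Fin (k + 1)) : ℕ) - 1 < k := by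
      simp
    rw [mmlV_of_gt (by simpa using Nat.lt_succ_of_le h) ht]
    congr 1

lemma mml_left_inv_j {k m : ℕ} (hm : 0 < m) {j : ℕ} {g : Fin k → Fin m} (hj2 : 2 ≤ j)
    (hjm : j ≤ m) (hg : Monotone g) :
    (mmlPhiFun hm j g (mmlP j g) : ℕ) + 1 = j := by
  rw [mmlPhiFun_val hm hj2 hjm hg, mmlV_of_eq (by simp [mmlP])]
  omega

lemma mml_right_inv_S {k m : ℕ} {p : Fin (k + 1)} {f : Fin (k + 1) → Fin m}
    (hf : Monotone f) (hf0 : 1 ≤ (f 0 : ℕ)) :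
    mmlS ((f p : ℕ) + 1) (mmlPsiFun p f) = (p : ℕ) := by
  have hft : ∀ s : Fin (k + 1), 1 ≤ (f s : ℕ) := fun s =>
    le_trans hf0 (Fin.le_def.1 (hf (Fin.zero_le s)))
  rw [mmlS]
  have : (Finset.univ.filter fun t : Fin k => ((mmlPsiFun p f t : ℕ)) + 2 ≤ (f p : ℕ) + 1)
      = Finset.univ.filter fun t : Fin k => (t : ℕ) < (p : ℕ) := by
    apply Finset.filter_congr
    intro t _
    rcases lt_or_ge ((t : ℕ)) ((p : ℕ)) with h | h
    · rw [mmlPsiFun_of_lt _ _ _ h]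
      have h1 := hft ⟨(t : ℕ), Nat.lt_succ_of_lt t.isLt⟩
      have h2 := Fin.le_def.1 (hf (a := ⟨(t : ℕ), Nat.lt_succ_of_lt t.isLt⟩) (b := p)
        (Fin.le_def.2 (show (t : ℕ) ≤ (p : ℕ) from by omega)))
      omega
    · rw [mmlPsiFun_of_ge _ _ _ h]
      have h2 := Fin.le_def.1 (hf (a := p) (b := ⟨(t : ℕ) + 1, Nat.succ_lt_succ t.isLt⟩)
        (Fin.le_def.2 (show (p : ℕ) ≤ (t : ℕ) + 1 from by omega)))
      omega
  rw [this, mml_card_filter_lt k p (by omega)]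

lemma mml_right_inv_fun {k m : ℕ} (hm : 0 < m) {p : Fin (k + 1)} {f : Fin (k + 1) → Fin m}
    (hf : Monotone f) (hf0 : 1 ≤ (f 0 : ℕ)) :
    mmlPhiFun hm ((f p : ℕ) + 1) (mmlPsiFun p f) = f := by
  have hft : ∀ s : Fin (k + 1), 1 ≤ (f s : ℕ) := fun s =>
    le_trans hf0 (Fin.le_def.1 (hf (Fin.zero_le s)))
  have hj2 : 2 ≤ (f p : ℕ) + 1 := by have := hft p; omega
  have hjm : (f p : ℕ) + 1 ≤ m := (f p).isLt
  have hg := mmlPsiFun_mono (p := p) hf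
  have hS := mml_right_inv_S (p := p) hf hf0
  funext t
  apply Fin.ext
  rw [mmlPhiFun_val hm hj2 hjm hg]
  rcases lt_trichotomy ((t : ℕ)) ((p : ℕ)) with h | h | h
  · rw [mmlV_of_lt (by omega)]
    rw [mmlPsiFun_of_lt _ _ _ (by simpa using h)]
    have h1 := hft t
    have he : ∀ (pf : ((⟨(t : ℕ), lt_of_lt_of_le (show (t : ℕ) < mmlS ((f p : ℕ) + 1)
          (mmlPsiFun p f) by omega) (mmlS_le _ _)⟩ : Fin k) : ℕ) < k + 1),
        f ⟨((⟨(t : ℕ), lt_of_lt_of_le (show (t : ℕ) < mmlS ((f p : ℕ) + 1)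
          (mmlPsiFun p f) by omega) (mmlS_le _ _)⟩ : Fin k) : ℕ), pf⟩ = f t := by
      intro pf
      exact congr_arg f (Fin.ext rfl)
    rw [he]
    omega
  · rw [mmlV_of_eq (by omega)]
    have : t = p := Fin.ext h
    rw [this]
    omega
  · have ht2 : (t : ℕ) - 1 < k := by have := t.isLt; omega
    rw [mmlV_of_gt (by omega) ht2]
    rw [mmlPsiFun_of_ge _ _ _ (show ((p : ℕ)) ≤ ((⟨(t : ℕ) - 1, ht2⟩ : Fin k) : ℕ) from by
      show (p : ℕ) ≤ (t : ℕ) - 1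
      omega)]
    exact congr_arg (fun z => ((f z : ℕ))) (Fin.ext (show (t : ℕ) - 1 + 1 = (t : ℕ) from by
      omega))

lemma mml_col_le {n m : ℕ} {u : ℕ → ℕ → ℝ}
    (hcol : ∀ i j, 1 ≤ i → i + 1 ≤ n → 1 ≤ j → j ≤ m → u (i + 1) j ≤ u i j)
    {i i' j : ℕ} (h1 : 1 ≤ i) (h2 : i ≤ i') (h3 : i' ≤ n) (hj1 : 1 ≤ j) (hjm : j ≤ m) :
    u i' j ≤ u i j := by
  induction i' with
  | zero => exact absurd h2 (by omega)
  | succ w ih =>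
    by_cases hc : i = w + 1
    · subst hc; exact le_refl _
    · exact le_trans (hcol w j (by omega) (by omega) hj1 hjm) (ih (by omega) (by omega))

open Classical in
lemma mmlT_pos {n m : ℕ} (hm : 0 < m) {u : ℕ → ℕ → ℝ}
    (hpos : ∀ i j, 1 ≤ i → i ≤ n → 1 ≤ j → j ≤ m → 0 < u i j) : 0 < mmlT n m u := by
  rw [mmlT]
  apply Finset.sum_pos
  · intro f hf
    apply Finset.prod_pos
    intro i _
    exact hpos ((i : ℕ) + 1) ((f i : ℕ) + 1) (by omega) (by have := i.isLt; omega)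
      (by omega) (by have := (f i).isLt; omega)
  · exact ⟨fun _ => ⟨0, hm⟩, by simp [monotone_const]⟩

lemma mml_cons_monotone {k m : ℕ} {g : Fin k → Fin m} (x : Fin m) (hx : ∀ t, x ≤ g t)
    (hg : Monotone g) : Monotone (Fin.cons x g) := by
  intro a b hab
  rcases Fin.eq_zero_or_eq_succ a with rfl | ⟨a', rfl⟩
  · rcases Fin.eq_zero_or_eq_succ b with rfl | ⟨b', rfl⟩
    · exact le_refl _
    · rw [Fin.cons_zero, Fin.cons_succ]; exact hx b'
  · rcases Fin.eq_zero_or_eq_succ b with rfl | ⟨b', rfl⟩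
    · rw [Fin.le_def] at hab; simp [Fin.val_succ] at hab
    · rw [Fin.cons_succ, Fin.cons_succ]
      exact hg (Fin.succ_le_succ_iff.1 hab)

open Classical in
lemma mml_partA (k m : ℕ) (hm : 0 < m) (u : ℕ → ℕ → ℝ) :
    ∑ f ∈ Finset.univ.filter (fun f : Fin (k + 1) → Fin m => Monotone f ∧ (f 0 : ℕ) = 0),
        ∏ i : Fin (k + 1), u ((i : ℕ) + 1) ((f i : ℕ) + 1)
      = u 1 1 * mmlT k m (fun i j => u (i + 1) j) := by
  rw [mmlT, Finset.mul_sum]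
  apply Finset.sum_nbij' (i := fun f => f ∘ Fin.succ) (j := fun g => Fin.cons ⟨0, hm⟩ g)
  · intro f hf
    simp only [Finset.mem_filter, Finset.mem_univ, true_and] at hf ⊢
    exact fun a b hab => hf.1 (Fin.succ_le_succ_iff.2 hab)
  · intro g hg
    simp only [Finset.mem_filter, Finset.mem_univ, true_and] at hg ⊢
    constructor
    · exact mml_cons_monotone _ (fun t => Fin.le_def.2 (Nat.zero_le _)) hg
    · simp
  · intro f hf
    simp only [Finset.mem_filter, Finset.mem_univ, true_and] at hf
    funext t
    rcases Fin.eq_zero_or_eq_succ t with rfl | ⟨t', rfl⟩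
    · rw [Fin.cons_zero]; exact Fin.ext (by simp [hf.2.symm])
    · rw [Fin.cons_succ]; rfl
  · intro g hg
    funext t
    rw [Function.comp_apply, Fin.cons_succ]
  · intro f hf
    simp only [Finset.mem_filter, Finset.mem_univ, true_and] at hf
    rw [Fin.prod_univ_succ]
    simp [hf.2, Fin.val_succ]

open Classical in
lemma mml_Tsplit (k m : ℕ) (u : ℕ → ℕ → ℝ) :
    mmlT (k + 1) m u =
      (∑ f ∈ Finset.univ.filter
          (fun f : Fin (k + 1) → Fin m => Monotone f ∧ (f 0 : ℕ) = 0),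
        ∏ i : Fin (k + 1), u ((i : ℕ) + 1) ((f i : ℕ) + 1))
      + ∑ f ∈ Finset.univ.filter
          (fun f : Fin (k + 1) → Fin m => Monotone f ∧ ¬((f 0 : ℕ) = 0)),
        ∏ i : Fin (k + 1), u ((i : ℕ) + 1) ((f i : ℕ) + 1) := by
  rw [mmlT]
  rw [show (Finset.univ.filter fun f : Fin (k + 1) → Fin m => Monotone f ∧ (f 0 : ℕ) = 0)
      = (Finset.univ.filter (fun f : Fin (k + 1) → Fin m => Monotone f)).filter
          (fun f => (f 0 : ℕ) = 0) from by rw [Finset.filter_filter]]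
  rw [show (Finset.univ.filter fun f : Fin (k + 1) → Fin m => Monotone f ∧ ¬((f 0 : ℕ) = 0))
      = (Finset.univ.filter (fun f : Fin (k + 1) → Fin m => Monotone f)).filter
          (fun f => ¬((f 0 : ℕ) = 0)) from by rw [Finset.filter_filter]]
  rw [Finset.sum_filter_add_sum_filter_not]

open Classical in
lemma mml_sourceF (k m : ℕ) (u : ℕ → ℕ → ℝ) :
    ∑ x ∈ (Finset.Icc 2 m) ×ˢ
        (Finset.univ.filter fun g : Fin k → Fin m => Monotone g),
        u (k + 1) x.1 * ∏ t : Fin k, u ((t : ℕ) + 1 + 1) ((x.2 t : ℕ) + 1)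
      = (∑ j ∈ Finset.Icc 2 m, u (k + 1) j) * mmlT k m (fun i j => u (i + 1) j) := by
  rw [Finset.sum_product, Finset.sum_mul]
  apply Finset.sum_congr rfl
  intro j hj
  rw [mmlT, Finset.mul_sum]

open Classical in
lemma mml_transport (k m : ℕ) (hm : 0 < m) (u : ℕ → ℕ → ℝ) :
    ∑ x ∈ (Finset.Icc 2 m) ×ˢ
        (Finset.univ.filter fun g : Fin k → Fin m => Monotone g),
        ∏ i : Fin (k + 1), u ((i : ℕ) + 1) ((mmlPhiFun hm x.1 x.2 i : ℕ) + 1)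
      = ((k : ℝ) + 1) *
        ∑ f ∈ Finset.univ.filter
          (fun f : Fin (k + 1) → Fin m => Monotone f ∧ ¬((f 0 : ℕ) = 0)),
          ∏ i : Fin (k + 1), u ((i : ℕ) + 1) ((f i : ℕ) + 1) := by
  have step1 : ∑ x ∈ (Finset.Icc 2 m) ×ˢ
        (Finset.univ.filter fun g : Fin k → Fin m => Monotone g),
        ∏ i : Fin (k + 1), u ((i : ℕ) + 1) ((mmlPhiFun hm x.1 x.2 i : ℕ) + 1)
      = ∑ y ∈ (Finset.univ : Finset (Fin (k + 1))) ×ˢ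
          (Finset.univ.filter
            (fun f : Fin (k + 1) → Fin m => Monotone f ∧ ¬((f 0 : ℕ) = 0))),
          ∏ i : Fin (k + 1), u ((i : ℕ) + 1) ((y.2 i : ℕ) + 1) := by
    apply Finset.sum_nbij' (i := fun x => (mmlP x.1 x.2, mmlPhiFun hm x.1 x.2))
      (j := fun y => ((y.2 y.1 : ℕ) + 1, mmlPsiFun y.1 y.2))
    · rintro ⟨j, g⟩ hx
      dsimp only at hx ⊢
      rw [Finset.mem_product, Finset.mem_Icc, Finset.mem_filter] at hx
      obtain ⟨⟨hj2, hjm⟩, _, hg⟩ := hx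
      rw [Finset.mem_product, Finset.mem_filter]
      refine ⟨Finset.mem_univ _, Finset.mem_univ _, mmlPhiFun_mono hm hj2 hjm hg, ?_⟩
      exact Nat.one_le_iff_ne_zero.1 (mmlPhiFun_zero hm hj2 hjm hg)
    · rintro ⟨p, f⟩ hy
      dsimp only at hy ⊢
      rw [Finset.mem_product, Finset.mem_filter] at hy
      obtain ⟨_, _, hf, hf0⟩ := hy
      have hf0' : 1 ≤ (f 0 : ℕ) := Nat.one_le_iff_ne_zero.2 hf0
      have hft : 1 ≤ (f p : ℕ) := le_trans hf0' (Fin.le_def.1 (hf (Fin.zero_le p)))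
      rw [Finset.mem_product, Finset.mem_Icc, Finset.mem_filter]
      exact ⟨⟨by omega, (f p).isLt⟩, Finset.mem_univ _, mmlPsiFun_mono hf⟩
    · rintro ⟨j, g⟩ hx
      dsimp only at hx ⊢
      rw [Finset.mem_product, Finset.mem_Icc, Finset.mem_filter] at hx
      obtain ⟨⟨hj2, hjm⟩, _, hg⟩ := hx
      have h1 := mml_left_inv_j hm hj2 hjm hg
      have h2 := mml_left_inv_fun hm hj2 hjm hg
      simp only [Prod.mk.injEq]
      exact ⟨h1, h2⟩
    · rintro ⟨p, f⟩ hy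
      dsimp only at hy ⊢
      rw [Finset.mem_product, Finset.mem_filter] at hy
      obtain ⟨_, _, hf, hf0⟩ := hy
      have hf0' : 1 ≤ (f 0 : ℕ) := Nat.one_le_iff_ne_zero.2 hf0
      simp only [Prod.mk.injEq]
      exact ⟨Fin.ext (mml_right_inv_S hf hf0'), mml_right_inv_fun hm hf hf0'⟩
    · rintro ⟨j, g⟩ _
      rfl
  rw [step1, Finset.sum_product]
  dsimp only
  rw [Finset.sum_const, Finset.card_univ, Fintype.card_fin, nsmul_eq_mul]
  push_cast
  ring

open Classical in
lemma mml_term_le (k m : ℕ) (hm : 0 < m) (u : ℕ → ℕ → ℝ)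
    (hpos : ∀ i j, 1 ≤ i → i ≤ k + 1 → 1 ≤ j → j ≤ m → 0 < u i j)
    (hcol : ∀ i j, 1 ≤ i → i + 1 ≤ k + 1 → 1 ≤ j → j ≤ m → u (i + 1) j ≤ u i j)
    (hdiag : ∀ i j, 1 ≤ i → i + 1 ≤ k + 1 → 2 ≤ j → j ≤ m → u (i + 1) (j - 1) ≤ u i j)
    {j : ℕ} {g : Fin k → Fin m} (hj2 : 2 ≤ j) (hjm : j ≤ m) (hg : Monotone g) :
    u (k + 1) j * ∏ t : Fin k, u ((t : ℕ) + 1 + 1) ((g t : ℕ) + 1)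
      ≤ ∏ i : Fin (k + 1), u ((i : ℕ) + 1) ((mmlPhiFun hm j g i : ℕ) + 1) := by
  rw [Fin.prod_univ_succAbove _ (mmlP j g), mml_left_inv_j hm hj2 hjm hg]
  have hS := mmlS_le (m := m) j g
  apply mul_le_mul
  · exact mml_col_le hcol (i := (mmlP j g : ℕ) + 1) (by omega)
      (by show (mmlS j g) + 1 ≤ k + 1; omega) (le_refl _) (by omega) hjm
  · apply Finset.prod_le_prod
    · intro t _
      exact le_of_lt (hpos _ _ (by omega) (by have := t.isLt; omega) (by omega)
        (by have := (g t).isLt; omega))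
    · intro t _
      rcases lt_or_ge ((t : ℕ)) (mmlS j g) with h | h
      · have hcast : (mmlP j g).succAbove t = t.castSucc :=
          Fin.succAbove_of_castSucc_lt _ _ (by rw [Fin.lt_def]; exact h)
        rw [hcast]
        have hv : (mmlPhiFun hm j g t.castSucc : ℕ) = (g t : ℕ) + 1 := by
          rw [mmlPhiFun_val hm hj2 hjm hg, mmlV_of_lt (by simpa using h)]
          congr 1
        rw [hv]
        have hgt : (g t : ℕ) + 2 ≤ j := (mmlS_lt_iff hg t).1 h
        have := hdiag ((t : ℕ) + 1) ((g t : ℕ) + 2) (by omega) (by have := t.isLt; omega)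
          (by omega) (by omega)
        simpa [Fin.coe_castSucc] using this
      · have hcast : (mmlP j g).succAbove t = t.succ :=
          Fin.succAbove_of_le_castSucc _ _ (by rw [Fin.le_def]; simpa [mmlP] using h)
        rw [hcast]
        have hv : (mmlPhiFun hm j g t.succ : ℕ) = (g t : ℕ) := by
          rw [mmlPhiFun_val hm hj2 hjm hg,
            mmlV_of_gt (by simpa [Fin.val_succ] using Nat.lt_succ_of_le h)
              (by simp [Fin.val_succ])]
          exact congr_arg (fun z => ((g z : ℕ))) (Fin.ext (by simp [Fin.val_succ]))
        rw [hv]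
        simp [Fin.val_succ]
  · apply Finset.prod_nonneg
    intro t _
    exact le_of_lt (hpos _ _ (by omega) (by have := t.isLt; omega) (by omega)
      (by have := (g t).isLt; omega))
  · exact le_of_lt (hpos _ _ (by omega) (by omega) (by omega) hjm)

open Classical in
lemma mmlT_zero (m : ℕ) (u : ℕ → ℕ → ℝ) : mmlT 0 m u = 1 := by
  rw [mmlT]
  have h1 : ∀ f : Fin 0 → Fin m, Monotone f := fun f a b _ => a.elim0
  rw [Finset.filter_true_of_mem (fun f _ => h1 f)]
  simp

lemma mml_hook_pos {k m : ℕ} (hm : 0 < m) {u : ℕ → ℕ → ℝ}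
    (hpos : ∀ i j, 1 ≤ i → i ≤ k + 1 → 1 ≤ j → j ≤ m → 0 < u i j) :
    0 < (∑ i ∈ Finset.Icc 1 (k + 1), u i 1) + ∑ j ∈ Finset.Icc 2 m, u (k + 1) j := by
  have h1 : 0 < ∑ i ∈ Finset.Icc 1 (k + 1), u i 1 := by
    apply Finset.sum_pos
    · intro i hi
      rw [Finset.mem_Icc] at hi
      exact hpos i 1 hi.1 hi.2 (le_refl _) hm
    · exact ⟨1, by rw [Finset.mem_Icc]; omega⟩
  have h2 : 0 ≤ ∑ j ∈ Finset.Icc 2 m, u (k + 1) j := by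
    apply Finset.sum_nonneg
    intro j hj
    rw [Finset.mem_Icc] at hj
    exact le_of_lt (hpos (k + 1) j (by omega) (le_refl _) (by omega) hj.2)
  linarith

open Classical in
lemma mml_step_le (k m : ℕ) (hm : 0 < m) (u : ℕ → ℕ → ℝ)
    (hpos : ∀ i j, 1 ≤ i → i ≤ k + 1 → 1 ≤ j → j ≤ m → 0 < u i j)
    (hcol : ∀ i j, 1 ≤ i → i + 1 ≤ k + 1 → 1 ≤ j → j ≤ m → u (i + 1) j ≤ u i j)
    (hdiag : ∀ i j, 1 ≤ i → i + 1 ≤ k + 1 → 2 ≤ j → j ≤ m → u (i + 1) (j - 1) ≤ u i j) :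
    ((∑ i ∈ Finset.Icc 1 (k + 1), u i 1) + ∑ j ∈ Finset.Icc 2 m, u (k + 1) j) *
        mmlT k m (fun i j => u (i + 1) j)
      ≤ ((k : ℝ) + 1) * mmlT (k + 1) m u := by
  have hT' : 0 ≤ mmlT k m (fun i j => u (i + 1) j) :=
    le_of_lt (mmlT_pos hm (fun i j h1 h2 h3 h4 => hpos (i + 1) j (by omega) (by omega) h3 h4))
  have hA : ∑ i ∈ Finset.Icc 1 (k + 1), u i 1 ≤ ((k : ℝ) + 1) * u 1 1 := by
    calc ∑ i ∈ Finset.Icc 1 (k + 1), u i 1 ≤ ∑ _i ∈ Finset.Icc 1 (k + 1), u 1 1 := by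
          apply Finset.sum_le_sum
          intro i hi
          rw [Finset.mem_Icc] at hi
          exact mml_col_le hcol (le_refl _) hi.1 hi.2 (le_refl _) hm
      _ = ((k : ℝ) + 1) * u 1 1 := by
          rw [Finset.sum_const, Nat.card_Icc]
          simp [nsmul_eq_mul]
  have hB : (∑ j ∈ Finset.Icc 2 m, u (k + 1) j) * mmlT k m (fun i j => u (i + 1) j)
      ≤ ((k : ℝ) + 1) * ∑ f ∈ Finset.univ.filter
          (fun f : Fin (k + 1) → Fin m => Monotone f ∧ ¬((f 0 : ℕ) = 0)),
          ∏ i : Fin (k + 1), u ((i : ℕ) + 1) ((f i : ℕ) + 1) := by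
    rw [← mml_sourceF, ← mml_transport k m hm u]
    apply Finset.sum_le_sum
    rintro ⟨j, g⟩ hx
    dsimp only
    rw [Finset.mem_product, Finset.mem_Icc, Finset.mem_filter] at hx
    obtain ⟨⟨hj2, hjm⟩, _, hg⟩ := hx
    exact mml_term_le k m hm u hpos hcol hdiag hj2 hjm hg
  have hsplit := mml_Tsplit k m u
  have hpa := mml_partA k m hm u
  have h1 : (∑ i ∈ Finset.Icc 1 (k + 1), u i 1) * mmlT k m (fun i j => u (i + 1) j)
      ≤ ((k : ℝ) + 1) * (u 1 1 * mmlT k m (fun i j => u (i + 1) j)) := by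
    have := mul_le_mul_of_nonneg_right hA hT'
    linarith [this]
  rw [add_mul, hsplit]
  rw [← hpa] at h1
  linarith [hB, h1]

open Classical in
lemma mml_step_eq (k m : ℕ) (hm : 0 < m) (u : ℕ → ℕ → ℝ)
    (hc : ∀ i j, 1 ≤ i → i ≤ k + 1 → 1 ≤ j → j ≤ m → u i j = u 1 1) :
    ((∑ i ∈ Finset.Icc 1 (k + 1), u i 1) + ∑ j ∈ Finset.Icc 2 m, u (k + 1) j) *
        mmlT k m (fun i j => u (i + 1) j)
      = ((k : ℝ) + 1) * mmlT (k + 1) m u := by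
  have hA : ∑ i ∈ Finset.Icc 1 (k + 1), u i 1 = ((k : ℝ) + 1) * u 1 1 := by
    calc ∑ i ∈ Finset.Icc 1 (k + 1), u i 1 = ∑ _i ∈ Finset.Icc 1 (k + 1), u 1 1 := by
          apply Finset.sum_congr rfl
          intro i hi
          rw [Finset.mem_Icc] at hi
          exact hc i 1 hi.1 hi.2 (le_refl _) hm
      _ = ((k : ℝ) + 1) * u 1 1 := by
          rw [Finset.sum_const, Nat.card_Icc]
          simp [nsmul_eq_mul]
  have hB : (∑ j ∈ Finset.Icc 2 m, u (k + 1) j) * mmlT k m (fun i j => u (i + 1) j)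
      = ((k : ℝ) + 1) * ∑ f ∈ Finset.univ.filter
          (fun f : Fin (k + 1) → Fin m => Monotone f ∧ ¬((f 0 : ℕ) = 0)),
          ∏ i : Fin (k + 1), u ((i : ℕ) + 1) ((f i : ℕ) + 1) := by
    rw [← mml_sourceF, ← mml_transport k m hm u]
    apply Finset.sum_congr rfl
    rintro ⟨j, g⟩ hx
    dsimp only
    rw [Finset.mem_product, Finset.mem_Icc, Finset.mem_filter] at hx
    obtain ⟨⟨hj2, hjm⟩, _, hg⟩ := hx
    have e1 : ∏ t : Fin k, u ((t : ℕ) + 1 + 1) ((g t : ℕ) + 1) = u 1 1 ^ k := by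
      calc ∏ t : Fin k, u ((t : ℕ) + 1 + 1) ((g t : ℕ) + 1) = ∏ _t : Fin k, u 1 1 :=
            Finset.prod_congr rfl (fun t _ => hc _ _ (by omega) (by have := t.isLt; omega)
              (by omega) (by have := (g t).isLt; omega))
        _ = u 1 1 ^ k := by rw [Finset.prod_const, Finset.card_univ, Fintype.card_fin]
    have e2 : ∏ i : Fin (k + 1), u ((i : ℕ) + 1) ((mmlPhiFun hm j g i : ℕ) + 1)
        = u 1 1 ^ (k + 1) := by
      calc ∏ i : Fin (k + 1), u ((i : ℕ) + 1) ((mmlPhiFun hm j g i : ℕ) + 1)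
            = ∏ _i : Fin (k + 1), u 1 1 :=
            Finset.prod_congr rfl (fun i _ => hc _ _ (by omega) (by have := i.isLt; omega)
              (by omega) (by have := (mmlPhiFun hm j g i).isLt; omega))
        _ = u 1 1 ^ (k + 1) := by rw [Finset.prod_const, Finset.card_univ, Fintype.card_fin]
    rw [e1, e2, hc (k + 1) j (by omega) (le_refl _) (by omega) hjm]
    ring
  have hsplit := mml_Tsplit k m u
  have hpa := mml_partA k m hm u
  rw [add_mul, hsplit, hA, hB, hpa]
  ring

lemma mml_Rsplit (k m : ℕ) (u : ℕ → ℕ → ℝ) :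
    mmlR (k + 1) m u =
      ((∑ i ∈ Finset.Icc 1 (k + 1), u i 1) + ∑ j ∈ Finset.Icc 2 m, u (k + 1) j) *
        mmlR k m (fun i j => u (i + 1) j) := by
  rw [mmlR, Finset.prod_range_succ]
  have h1 : k + 1 - k = 1 := by omega
  rw [h1, mul_comm]
  congr 1
  rw [mmlR]
  apply Finset.prod_congr rfl
  intro k' hk'
  rw [Finset.mem_range] at hk'
  congr 1
  have h2 : Finset.Icc (k + 1 - k') (k + 1) =
      Finset.map (addRightEmbedding 1) (Finset.Icc (k - k') k) := by
    rw [Finset.map_add_right_Icc]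
    congr 1
    omega
  rw [h2, Finset.sum_map]
  rfl

lemma mml_main_le (n : ℕ) : ∀ (m : ℕ) (u : ℕ → ℕ → ℝ), 0 < m →
    (∀ i j, 1 ≤ i → i ≤ n → 1 ≤ j → j ≤ m → 0 < u i j) →
    (∀ i j, 1 ≤ i → i + 1 ≤ n → 1 ≤ j → j ≤ m → u (i + 1) j ≤ u i j) →
    (∀ i j, 1 ≤ i → i + 1 ≤ n → 2 ≤ j → j ≤ m → u (i + 1) (j - 1) ≤ u i j) →
    mmlR n m u ≤ (n.factorial : ℝ) * mmlT n m u := by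
  induction n with
  | zero =>
    intro m u hm _ _ _
    rw [mmlT_zero, mmlR]
    simp
  | succ k ih =>
    intro m u hm hpos hcol hdiag
    have hpos' : ∀ i j, 1 ≤ i → i ≤ k → 1 ≤ j → j ≤ m → 0 < (fun i j => u (i + 1) j) i j :=
      fun i j h1 h2 h3 h4 => hpos (i + 1) j (by omega) (by omega) h3 h4
    have hcol' : ∀ i j, 1 ≤ i → i + 1 ≤ k → 1 ≤ j → j ≤ m →
        (fun i j => u (i + 1) j) (i + 1) j ≤ (fun i j => u (i + 1) j) i j :=
      fun i j h1 h2 h3 h4 => hcol (i + 1) j (by omega) (by omega) h3 h4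
    have hdiag' : ∀ i j, 1 ≤ i → i + 1 ≤ k → 2 ≤ j → j ≤ m →
        (fun i j => u (i + 1) j) (i + 1) (j - 1) ≤ (fun i j => u (i + 1) j) i j :=
      fun i j h1 h2 h3 h4 => hdiag (i + 1) j (by omega) (by omega) h3 h4
    have IH := ih m (fun i j => u (i + 1) j) hm hpos' hcol' hdiag'
    have hhook := mml_hook_pos hm hpos
    have hstep := mml_step_le k m hm u hpos hcol hdiag
    have hkfac : (0 : ℝ) ≤ (k.factorial : ℝ) := by positivity
    calc mmlR (k + 1) m u
        = ((∑ i ∈ Finset.Icc 1 (k + 1), u i 1) + ∑ j ∈ Finset.Icc 2 m, u (k + 1) j) *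
          mmlR k m (fun i j => u (i + 1) j) := mml_Rsplit k m u
      _ ≤ ((∑ i ∈ Finset.Icc 1 (k + 1), u i 1) + ∑ j ∈ Finset.Icc 2 m, u (k + 1) j) *
          ((k.factorial : ℝ) * mmlT k m (fun i j => u (i + 1) j)) :=
          mul_le_mul_of_nonneg_left IH (le_of_lt hhook)
      _ = (k.factorial : ℝ) *
          (((∑ i ∈ Finset.Icc 1 (k + 1), u i 1) + ∑ j ∈ Finset.Icc 2 m, u (k + 1) j) *
            mmlT k m (fun i j => u (i + 1) j)) := by ring
      _ ≤ (k.factorial : ℝ) * (((k : ℝ) + 1) * mmlT (k + 1) m u) :=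
          mul_le_mul_of_nonneg_left hstep hkfac
      _ = ((k + 1).factorial : ℝ) * mmlT (k + 1) m u := by
          rw [Nat.factorial_succ]
          push_cast
          ring

lemma mml_main_eq (n : ℕ) : ∀ (m : ℕ) (u : ℕ → ℕ → ℝ), 0 < m →
    (∀ i j, 1 ≤ i → i ≤ n → 1 ≤ j → j ≤ m → u i j = u 1 1) →
    mmlR n m u = (n.factorial : ℝ) * mmlT n m u := by
  induction n with
  | zero =>
    intro m u hm _
    rw [mmlT_zero, mmlR]
    simp
  | succ k ih =>
    intro m u hm hc
    have hc' : ∀ i j, 1 ≤ i → i ≤ k → 1 ≤ j → j ≤ m →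
        (fun i j => u (i + 1) j) i j = (fun i j => u (i + 1) j) 1 1 := by
      intro i j h1 h2 h3 h4
      dsimp only
      rw [hc (i + 1) j (by omega) (by omega) h3 h4, hc 2 1 (by omega) (by omega) (by omega) hm]
    have IH := ih m (fun i j => u (i + 1) j) hm hc'
    have hstep := mml_step_eq k m hm u hc
    calc mmlR (k + 1) m u
        = ((∑ i ∈ Finset.Icc 1 (k + 1), u i 1) + ∑ j ∈ Finset.Icc 2 m, u (k + 1) j) *
          mmlR k m (fun i j => u (i + 1) j) := mml_Rsplit k m u
      _ = ((∑ i ∈ Finset.Icc 1 (k + 1), u i 1) + ∑ j ∈ Finset.Icc 2 m, u (k + 1) j) *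
          ((k.factorial : ℝ) * mmlT k m (fun i j => u (i + 1) j)) := by rw [IH]
      _ = (k.factorial : ℝ) *
          (((∑ i ∈ Finset.Icc 1 (k + 1), u i 1) + ∑ j ∈ Finset.Icc 2 m, u (k + 1) j) *
            mmlT k m (fun i j => u (i + 1) j)) := by ring
      _ = (k.factorial : ℝ) * (((k : ℝ) + 1) * mmlT (k + 1) m u) := by rw [hstep]
      _ = ((k + 1).factorial : ℝ) * mmlT (k + 1) m u := by
          rw [Nat.factorial_succ]
          push_cast
          ring

open Classical in
lemma mml_forward (k m : ℕ) (hk : 1 ≤ k) (hm : 0 < m) (u : ℕ → ℕ → ℝ)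
    (hpos : ∀ i j, 1 ≤ i → i ≤ k + 1 → 1 ≤ j → j ≤ m → 0 < u i j)
    (hcol : ∀ i j, 1 ≤ i → i + 1 ≤ k + 1 → 1 ≤ j → j ≤ m → u (i + 1) j ≤ u i j)
    (hdiag : ∀ i j, 1 ≤ i → i + 1 ≤ k + 1 → 2 ≤ j → j ≤ m → u (i + 1) (j - 1) ≤ u i j)
    (E : ((k + 1).factorial : ℝ) * mmlT (k + 1) m u = mmlR (k + 1) m u) :
    ∀ i j, 1 ≤ i → i ≤ k + 1 → 1 ≤ j → j ≤ m → u i j = u 1 1 := by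
  have hpos' : ∀ i j, 1 ≤ i → i ≤ k → 1 ≤ j → j ≤ m → 0 < (fun i j => u (i + 1) j) i j :=
    fun i j h1 h2 h3 h4 => hpos (i + 1) j (by omega) (by omega) h3 h4
  have hcol' : ∀ i j, 1 ≤ i → i + 1 ≤ k → 1 ≤ j → j ≤ m →
      (fun i j => u (i + 1) j) (i + 1) j ≤ (fun i j => u (i + 1) j) i j :=
    fun i j h1 h2 h3 h4 => hcol (i + 1) j (by omega) (by omega) h3 h4
  have hdiag' : ∀ i j, 1 ≤ i → i + 1 ≤ k → 2 ≤ j → j ≤ m →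
      (fun i j => u (i + 1) j) (i + 1) (j - 1) ≤ (fun i j => u (i + 1) j) i j :=
    fun i j h1 h2 h3 h4 => hdiag (i + 1) j (by omega) (by omega) h3 h4
  have hT' : 0 < mmlT k m (fun i j => u (i + 1) j) := mmlT_pos hm hpos'
  have hIH := mml_main_le k m (fun i j => u (i + 1) j) hm hpos' hcol' hdiag'
  have hstep := mml_step_le k m hm u hpos hcol hdiag
  have hhook := mml_hook_pos hm hpos
  have hRsplit := mml_Rsplit k m u
  have hfk : (0 : ℝ) < (k.factorial : ℝ) := by positivity
  -- equality at the top step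
  have heq : ((∑ i ∈ Finset.Icc 1 (k + 1), u i 1) + ∑ j ∈ Finset.Icc 2 m, u (k + 1) j) *
      mmlT k m (fun i j => u (i + 1) j) = ((k : ℝ) + 1) * mmlT (k + 1) m u := by
    have hE' : ((k : ℝ) + 1) * (k.factorial : ℝ) * mmlT (k + 1) m u =
        ((∑ i ∈ Finset.Icc 1 (k + 1), u i 1) + ∑ j ∈ Finset.Icc 2 m, u (k + 1) j) *
          mmlR k m (fun i j => u (i + 1) j) := by
      rw [← hRsplit, ← E, Nat.factorial_succ]
      push_cast
      ring
    have e1 : ((∑ i ∈ Finset.Icc 1 (k + 1), u i 1) + ∑ j ∈ Finset.Icc 2 m, u (k + 1) j) *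
        mmlR k m (fun i j => u (i + 1) j)
        ≤ ((∑ i ∈ Finset.Icc 1 (k + 1), u i 1) + ∑ j ∈ Finset.Icc 2 m, u (k + 1) j) *
          ((k.factorial : ℝ) * mmlT k m (fun i j => u (i + 1) j)) :=
      mul_le_mul_of_nonneg_left hIH (le_of_lt hhook)
    have e2 : (k.factorial : ℝ) *
        (((∑ i ∈ Finset.Icc 1 (k + 1), u i 1) + ∑ j ∈ Finset.Icc 2 m, u (k + 1) j) *
          mmlT k m (fun i j => u (i + 1) j))
        ≤ (k.factorial : ℝ) * (((k : ℝ) + 1) * mmlT (k + 1) m u) :=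
      mul_le_mul_of_nonneg_left hstep (le_of_lt hfk)
    have e3 : (k.factorial : ℝ) *
        (((∑ i ∈ Finset.Icc 1 (k + 1), u i 1) + ∑ j ∈ Finset.Icc 2 m, u (k + 1) j) *
          mmlT k m (fun i j => u (i + 1) j))
        = (k.factorial : ℝ) * (((k : ℝ) + 1) * mmlT (k + 1) m u) := by
      nlinarith [e1, e2, hE']
    exact mul_left_cancel₀ (ne_of_gt hfk) e3
  -- split the equality into the two pieces
  have hsplit := mml_Tsplit k m u
  have hpa := mml_partA k m hm u
  have hA_le : (∑ i ∈ Finset.Icc 1 (k + 1), u i 1) * mmlT k m (fun i j => u (i + 1) j)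
      ≤ ((k : ℝ) + 1) * (u 1 1 * mmlT k m (fun i j => u (i + 1) j)) := by
    have hA : ∑ i ∈ Finset.Icc 1 (k + 1), u i 1 ≤ ((k : ℝ) + 1) * u 1 1 := by
      calc ∑ i ∈ Finset.Icc 1 (k + 1), u i 1 ≤ ∑ _i ∈ Finset.Icc 1 (k + 1), u 1 1 := by
            apply Finset.sum_le_sum
            intro i hi
            rw [Finset.mem_Icc] at hi
            exact mml_col_le hcol (le_refl _) hi.1 hi.2 (le_refl _) hm
        _ = ((k : ℝ) + 1) * u 1 1 := by
            rw [Finset.sum_const, Nat.card_Icc]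
            simp [nsmul_eq_mul]
    nlinarith [mul_le_mul_of_nonneg_right hA (le_of_lt hT')]
  have hB_le : (∑ j ∈ Finset.Icc 2 m, u (k + 1) j) * mmlT k m (fun i j => u (i + 1) j)
      ≤ ((k : ℝ) + 1) * ∑ f ∈ Finset.univ.filter
        (fun f : Fin (k + 1) → Fin m => Monotone f ∧ ¬((f 0 : ℕ) = 0)),
        ∏ i : Fin (k + 1), u ((i : ℕ) + 1) ((f i : ℕ) + 1) := by
    rw [← mml_sourceF, ← mml_transport k m hm u]
    apply Finset.sum_le_sum
    rintro ⟨j, g⟩ hx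
    dsimp only
    rw [Finset.mem_product, Finset.mem_Icc, Finset.mem_filter] at hx
    obtain ⟨⟨hj2, hjm⟩, _, hg⟩ := hx
    exact mml_term_le k m hm u hpos hcol hdiag hj2 hjm hg
  have heq2 : ((∑ i ∈ Finset.Icc 1 (k + 1), u i 1) * mmlT k m (fun i j => u (i + 1) j)
        = ((k : ℝ) + 1) * (u 1 1 * mmlT k m (fun i j => u (i + 1) j)))
      ∧ ((∑ j ∈ Finset.Icc 2 m, u (k + 1) j) * mmlT k m (fun i j => u (i + 1) j)
        = ((k : ℝ) + 1) * ∑ f ∈ Finset.univ.filter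
          (fun f : Fin (k + 1) → Fin m => Monotone f ∧ ¬((f 0 : ℕ) = 0)),
          ∏ i : Fin (k + 1), u ((i : ℕ) + 1) ((f i : ℕ) + 1)) := by
    have hTk : mmlT (k + 1) m u =
        u 1 1 * mmlT k m (fun i j => u (i + 1) j)
        + ∑ f ∈ Finset.univ.filter
          (fun f : Fin (k + 1) → Fin m => Monotone f ∧ ¬((f 0 : ℕ) = 0)),
          ∏ i : Fin (k + 1), u ((i : ℕ) + 1) ((f i : ℕ) + 1) := by
      rw [hsplit, hpa]
    rw [hTk] at heq
    constructor <;> nlinarith [hA_le, hB_le, heq]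
  -- extraction (a): column 1 is constant
  have hcol1 : ∀ i ∈ Finset.Icc 1 (k + 1), u i 1 = u 1 1 := by
    have hS1 : ∑ i ∈ Finset.Icc 1 (k + 1), u i 1 = ∑ _i ∈ Finset.Icc 1 (k + 1), u 1 1 := by
      have := heq2.1
      have hcard : (∑ _i ∈ Finset.Icc 1 (k + 1), u 1 1) = ((k : ℝ) + 1) * u 1 1 := by
        rw [Finset.sum_const, Nat.card_Icc]
        simp [nsmul_eq_mul]
      have hcancel : ∑ i ∈ Finset.Icc 1 (k + 1), u i 1 = ((k : ℝ) + 1) * u 1 1 := by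
        have h' : (∑ i ∈ Finset.Icc 1 (k + 1), u i 1) * mmlT k m (fun i j => u (i + 1) j)
            = (((k : ℝ) + 1) * u 1 1) * mmlT k m (fun i j => u (i + 1) j) := by
          rw [this]; ring
        exact mul_right_cancel₀ (ne_of_gt hT') h'
      rw [hcancel, hcard]
    have hle : ∀ i ∈ Finset.Icc 1 (k + 1), u i 1 ≤ u 1 1 := by
      intro i hi
      rw [Finset.mem_Icc] at hi
      exact mml_col_le hcol (le_refl _) hi.1 hi.2 (le_refl _) hm
    exact (Finset.sum_eq_sum_iff_of_le hle).1 hS1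
  -- extraction (b): per-term equality in part B
  have hterm : ∀ x ∈ (Finset.Icc 2 m) ×ˢ
      (Finset.univ.filter fun g : Fin k → Fin m => Monotone g),
      u (k + 1) x.1 * ∏ t : Fin k, u ((t : ℕ) + 1 + 1) ((x.2 t : ℕ) + 1)
        = ∏ i : Fin (k + 1), u ((i : ℕ) + 1) ((mmlPhiFun hm x.1 x.2 i : ℕ) + 1) := by
    have hsum : ∑ x ∈ (Finset.Icc 2 m) ×ˢ
        (Finset.univ.filter fun g : Fin k → Fin m => Monotone g),
        u (k + 1) x.1 * ∏ t : Fin k, u ((t : ℕ) + 1 + 1) ((x.2 t : ℕ) + 1)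
        = ∑ x ∈ (Finset.Icc 2 m) ×ˢ
          (Finset.univ.filter fun g : Fin k → Fin m => Monotone g),
          ∏ i : Fin (k + 1), u ((i : ℕ) + 1) ((mmlPhiFun hm x.1 x.2 i : ℕ) + 1) := by
      rw [mml_sourceF, mml_transport k m hm u, heq2.2]
    refine (Finset.sum_eq_sum_iff_of_le ?_).1 hsum
    rintro ⟨j, g⟩ hx
    dsimp only
    rw [Finset.mem_product, Finset.mem_Icc, Finset.mem_filter] at hx
    obtain ⟨⟨hj2, hjm⟩, _, hg⟩ := hx
    exact mml_term_le k m hm u hpos hcol hdiag hj2 hjm hg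
  -- extraction (i): top and bottom of each column ≥ 2 agree
  have colj : ∀ j, 2 ≤ j → j ≤ m → u 1 j = u (k + 1) j := by
    intro j hj2 hjm
    have hjm' : j - 1 < m := by omega
    set g : Fin k → Fin m := fun _ => ⟨j - 1, hjm'⟩ with hgdef
    have hg : Monotone g := monotone_const
    have hx : (j, g) ∈ (Finset.Icc 2 m) ×ˢ
        (Finset.univ.filter fun g : Fin k → Fin m => Monotone g) := by
      rw [Finset.mem_product, Finset.mem_Icc, Finset.mem_filter]
      exact ⟨⟨hj2, hjm⟩, Finset.mem_univ _, hg⟩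
    have h := hterm (j, g) hx
    dsimp only at h
    have hs : mmlS (m := m) j g = 0 := by
      rw [mmlS, Finset.filter_false_of_mem (fun t _ => show ¬(j - 1 + 2 ≤ j) by omega),
        Finset.card_empty]
    have hfval : ∀ i : Fin (k + 1), (mmlPhiFun hm j g i : ℕ) + 1 = j := by
      intro i
      rw [mmlPhiFun_val hm hj2 hjm hg]
      rcases Nat.eq_zero_or_pos ((i : ℕ)) with h0 | h0
      · rw [mmlV_of_eq (by rw [hs]; exact h0)]
        omega
      · have ht : (i : ℕ) - 1 < k := by have := i.isLt; omega
        rw [mmlV_of_gt (by rw [hs]; omega) ht]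
        show j - 1 + 1 = j
        omega
    have hgP : ∏ t : Fin k, u ((t : ℕ) + 1 + 1) ((g t : ℕ) + 1)
        = ∏ t : Fin k, u ((t : ℕ) + 1 + 1) j :=
      Finset.prod_congr rfl (fun t _ => by
        rw [show ((g t : ℕ)) + 1 = j from by show j - 1 + 1 = j; omega])
    have hfP : ∏ i : Fin (k + 1), u ((i : ℕ) + 1) ((mmlPhiFun hm j g i : ℕ) + 1)
        = ∏ i : Fin (k + 1), u ((i : ℕ) + 1) j :=
      Finset.prod_congr rfl (fun i _ => by rw [hfval i])
    rw [hgP, hfP, Fin.prod_univ_succ] at h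
    simp only [Fin.val_succ, Fin.val_zero, zero_add] at h
    have hP : 0 < ∏ t : Fin k, u ((t : ℕ) + 1 + 1) j := by
      apply Finset.prod_pos
      intro t _
      exact hpos _ _ (by omega) (by have := t.isLt; omega) (by omega) hjm
    exact (mul_right_cancel₀ (ne_of_gt hP) h).symm
  -- all columns are constant
  have colfull : ∀ i j, 1 ≤ i → i ≤ k + 1 → 1 ≤ j → j ≤ m → u i j = u 1 j := by
    intro i j h1 h2 h3 h4
    by_cases hj : j = 1
    · subst hj
      rw [hcol1 i (by rw [Finset.mem_Icc]; omega)]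
    · have hj2 : 2 ≤ j := by omega
      have hup : u i j ≤ u 1 j := mml_col_le hcol (le_refl _) h1 h2 h3 h4
      have hdn : u (k + 1) j ≤ u i j := mml_col_le hcol h1 h2 (le_refl _) h3 h4
      have := colj j hj2 h4
      linarith
  -- extraction (ii): consecutive columns agree
  have stepj : ∀ c, 1 ≤ c → c + 1 ≤ m → u 1 (c + 1) = u 1 c := by
    intro c hc1 hcm
    have hcm' : c - 1 < m := by omega
    set g : Fin k → Fin m := fun _ => ⟨c - 1, hcm'⟩ with hgdef
    have hg : Monotone g := monotone_const
    have hj2 : 2 ≤ c + 1 := by omega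
    have hx : (c + 1, g) ∈ (Finset.Icc 2 m) ×ˢ
        (Finset.univ.filter fun g : Fin k → Fin m => Monotone g) := by
      rw [Finset.mem_product, Finset.mem_Icc, Finset.mem_filter]
      exact ⟨⟨hj2, hcm⟩, Finset.mem_univ _, hg⟩
    have h := hterm (c + 1, g) hx
    dsimp only at h
    have hs : mmlS (m := m) (c + 1) g = k := by
      rw [mmlS, Finset.filter_true_of_mem (fun t _ => show c - 1 + 2 ≤ c + 1 by omega),
        Finset.card_univ, Fintype.card_fin]
    have hfval : ∀ i : Fin (k + 1), (mmlPhiFun hm (c + 1) g i : ℕ) + 1 = c + 1 := by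
      intro i
      rw [mmlPhiFun_val hm hj2 hcm hg]
      rcases lt_or_ge ((i : ℕ)) k with h0 | h0
      · rw [mmlV_of_lt (by rw [hs]; exact h0)]
        show c - 1 + 1 + 1 = c + 1
        omega
      · rw [mmlV_of_eq (by rw [hs]; have := i.isLt; omega)]
        show c + 1 - 1 + 1 = c + 1
        omega
    have hgP : ∏ t : Fin k, u ((t : ℕ) + 1 + 1) ((g t : ℕ) + 1) = u 1 c ^ k := by
      calc ∏ t : Fin k, u ((t : ℕ) + 1 + 1) ((g t : ℕ) + 1) = ∏ _t : Fin k, u 1 c := by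
            apply Finset.prod_congr rfl
            intro t _
            rw [show ((g t : ℕ)) + 1 = c from by show c - 1 + 1 = c; omega]
            exact colfull ((t : ℕ) + 1 + 1) c (by omega) (by have := t.isLt; omega)
              (by omega) (by omega)
        _ = u 1 c ^ k := by rw [Finset.prod_const, Finset.card_univ, Fintype.card_fin]
    have hfP : ∏ i : Fin (k + 1), u ((i : ℕ) + 1) ((mmlPhiFun hm (c + 1) g i : ℕ) + 1)
        = u 1 (c + 1) ^ (k + 1) := by
      calc ∏ i : Fin (k + 1), u ((i : ℕ) + 1) ((mmlPhiFun hm (c + 1) g i : ℕ) + 1)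
            = ∏ _i : Fin (k + 1), u 1 (c + 1) := by
            apply Finset.prod_congr rfl
            intro i _
            rw [hfval i]
            exact colfull ((i : ℕ) + 1) (c + 1) (by omega) (by have := i.isLt; omega)
              (by omega) hcm
        _ = u 1 (c + 1) ^ (k + 1) := by
            rw [Finset.prod_const, Finset.card_univ, Fintype.card_fin]
    rw [hgP, hfP, colfull (k + 1) (c + 1) (by omega) (le_refl _) (by omega) hcm] at h
    have hpos1c : 0 < u 1 c := hpos 1 c (le_refl _) (by omega) hc1 (by omega)
    have hpos1c1 : 0 < u 1 (c + 1) := hpos 1 (c + 1) (le_refl _) (by omega) (by omega) hcm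
    have h2 : u 1 c ^ k = u 1 (c + 1) ^ k := by
      have hrw : u 1 (c + 1) ^ (k + 1) = u 1 (c + 1) * u 1 (c + 1) ^ k := by ring
      rw [hrw] at h
      exact mul_left_cancel₀ (ne_of_gt hpos1c1) h
    have hle : u 1 c ≤ u 1 (c + 1) := by
      have e : u 2 c = u 1 c := colfull 2 c (by omega) (by omega) hc1 (by omega)
      have d : u (1 + 1) ((c + 1) - 1) ≤ u 1 (c + 1) :=
        hdiag 1 (c + 1) (le_refl _) (by omega) (by omega) hcm
      have d' : u 2 c ≤ u 1 (c + 1) := d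
      linarith
    rcases eq_or_lt_of_le hle with he | hlt
    · exact he.symm
    · have := pow_lt_pow_left₀ hlt (le_of_lt hpos1c) (show k ≠ 0 by omega)
      exact absurd h2 (ne_of_lt this)
  -- assemble: the first row is constant
  have row1 : ∀ j, 1 ≤ j → j ≤ m → u 1 j = u 1 1 := by
    intro j
    induction j with
    | zero => intro h1 _; exact absurd h1 (by omega)
    | succ w ihw =>
      intro h1 h2
      by_cases hw : w = 0
      · subst hw; rfl
      · rw [stepj w (by omega) (by omega)]
        exact ihw (by omega) (by omega)
  intro i j h1 h2 h3 h4
  rw [colfull i j h1 h2 h3 h4]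
  exact row1 j h3 h4



open Classical in
/-- Equality analysis for the lower bound in the maximal-minors theorem:
for `r ≥ 1`, `m ≥ 1` and positive reals `u i j` (`1 ≤ i ≤ r+1`, `1 ≤ j ≤ m`)
decreasing down each column and with `u i j ≥ u (i+1) (j-1)`, equality
`(r+1)! · Σ_{1 ≤ j₁ ≤ ⋯ ≤ j_{r+1} ≤ m} ∏ᵢ u i jᵢ
  = ∏_{k=0}^{r} (Σ_{i=r+1-k}^{r+1} u i 1 + Σ_{j=2}^{m} u (r+1) j)`
holds if and only if all the `u i j` are equal to one another. -/
theorem maximal_minors_lower_bound_equality (r m : ℕ) (hr : 1 ≤ r) (hm : 1 ≤ m)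
    (u : ℕ → ℕ → ℝ)
    (hpos : ∀ i j, 1 ≤ i → i ≤ r + 1 → 1 ≤ j → j ≤ m → 0 < u i j)
    (hcol : ∀ i j, 1 ≤ i → i ≤ r → 1 ≤ j → j ≤ m → u (i + 1) j ≤ u i j)
    (hdiag : ∀ i j, 1 ≤ i → i ≤ r → 2 ≤ j → j ≤ m → u (i + 1) (j - 1) ≤ u i j) :
    ((r + 1).factorial : ℝ) *
        ∑ f ∈ Finset.univ.filter (fun f : Fin (r + 1) → Fin m => Monotone f),
          ∏ i : Fin (r + 1), u ((i : ℕ) + 1) ((f i : ℕ) + 1) =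
      ∏ k ∈ Finset.range (r + 1),
        ((∑ i ∈ Finset.Icc (r + 1 - k) (r + 1), u i 1) +
          ∑ j ∈ Finset.Icc 2 m, u (r + 1) j) ↔
    ∀ i j i' j', 1 ≤ i → i ≤ r + 1 → 1 ≤ j → j ≤ m →
      1 ≤ i' → i' ≤ r + 1 → 1 ≤ j' → j' ≤ m → u i j = u i' j' := by
  have hm0 : 0 < m := hm
  have hcol' : ∀ i j, 1 ≤ i → i + 1 ≤ r + 1 → 1 ≤ j → j ≤ m → u (i + 1) j ≤ u i j :=
    fun i j a b c d => hcol i j a (by omega) c d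
  have hdiag' : ∀ i j, 1 ≤ i → i + 1 ≤ r + 1 → 2 ≤ j → j ≤ m → u (i + 1) (j - 1) ≤ u i j :=
    fun i j a b c d => hdiag i j a (by omega) c d
  constructor
  · intro E
    have E' : ((r + 1).factorial : ℝ) * mmlT (r + 1) m u = mmlR (r + 1) m u := E
    have hforward := mml_forward r m hr hm0 u hpos hcol' hdiag' E'
    intro i j i' j' h1 h2 h3 h4 h5 h6 h7 h8
    rw [hforward i j h1 h2 h3 h4, hforward i' j' h5 h6 h7 h8]
  · intro hall
    have hc : ∀ i j, 1 ≤ i → i ≤ r + 1 → 1 ≤ j → j ≤ m → u i j = u 1 1 :=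
      fun i j a b c d => hall i j 1 1 a b c d (le_refl 1) (by omega) (le_refl 1) hm
    have hmain := mml_main_eq (r + 1) m u hm0 hc
    exact (show ((r + 1).factorial : ℝ) * mmlT (r + 1) m u = mmlR (r + 1) m u
      from hmain.symm)
end
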